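/- arXiv:1206.1526 — 13 statements merged into one kernel-verified Lean document; each statement's English description precedes it below -/
import Mathlib

section
/- Let G be an n×n complex matrix and let r, r¹ be nonnegative integers with r + r¹ < n. Suppose that (G^k)_{i,j} = 0 for all i = 1,…,r, all j = n−r¹+1,…,n, and all k = 1,…,n−1. Then there exist integers n₁ ≥ r and n₂ ≥ r¹ with n₁ + n₂ = n, and a unitary n×n matrix Ẽ of the block-diagonal form Ẽ = diag(I_r, E, I_{r¹}) (where E is a unitary (n−r−r¹)×(n−r−r¹) matrix and all off-diagonal blocks are zero), such that the matrix Ẽ†GẼ satisfies (Ẽ†GẼ)_{i,j} = 0 for all i = 1,…,n₁ and all j = n₁+1,…,n (i.e., Ẽ†GẼ is block lower triangular with a zero n₁×n₂ upper-right block). -/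
open Matrix Module Submodule

set_option maxHeartbeats 1000000

local notation "⟪" x ", " y "⟫" => @inner ℂ _ _ x y


lemma fr48_pow_zero (n r r1 : ℕ) (hr : r + r1 < n)
    (G : Matrix (Fin n) (Fin n) ℂ)
    (hG : ∀ k : ℕ, 1 ≤ k → k ≤ n - 1 → ∀ i j : Fin n,
      (i : ℕ) < r → n - r1 ≤ (j : ℕ) → (G ^ k) i j = 0) :
    ∀ k : ℕ, ∀ i j : Fin n, (i : ℕ) < r → n - r1 ≤ (j : ℕ) → (G ^ k) i j = 0 := by
  have hd : G.charpoly.natDegree = n := by simpa using G.charpoly_natDegree_eq_dim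
  have hn : G ^ n = -∑ t ∈ Finset.range n, (G.charpoly.coeff t) • G ^ t := by
    have h0 := G.aeval_self_charpoly
    conv_lhs at h0 => rw [G.charpoly_monic.as_sum]
    rw [hd] at h0
    simp only [map_add, map_sum, _root_.map_mul, map_pow, Polynomial.aeval_X,
      Polynomial.aeval_C] at h0
    have h1 : ∀ t : ℕ, (algebraMap ℂ (Matrix (Fin n) (Fin n) ℂ)) (G.charpoly.coeff t) * G ^ t
        = (G.charpoly.coeff t) • G ^ t := by
      intro t; rw [Algebra.smul_def]
    simp only [h1] at h0
    linear_combination (norm := abel) h0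
  intro k
  induction k using Nat.strong_induction_on with
  | _ k ih =>
    intro i j hi hj
    rcases Nat.lt_or_ge k n with hk | hk
    · rcases Nat.eq_zero_or_pos k with rfl | hk1
      · have : i ≠ j := by
          intro h; subst h; omega
        simp [Matrix.one_apply, this]
      · exact hG k hk1 (by omega) i j hi hj
    · have hksplit : G ^ k = -∑ t ∈ Finset.range n, (G.charpoly.coeff t) • G ^ (k - n + t) := by
        have h1 : G ^ k = G ^ (k - n) * G ^ n := by
          rw [← pow_add]; congr 1; omega
        rw [h1, hn, Matrix.mul_neg, Finset.mul_sum]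
        congr 1
        refine Finset.sum_congr rfl fun t ht => ?_
        rw [Matrix.mul_smul, ← pow_add]
      rw [hksplit]
      simp only [Matrix.neg_apply, Matrix.sum_apply, Matrix.smul_apply, smul_eq_mul,
        neg_eq_zero]
      refine Finset.sum_eq_zero fun t ht => ?_
      rw [ih (k - n + t) (by simp at ht; omega) i j hi hj, mul_zero]


lemma fr48_basis (n r r1 : ℕ) (hr : r + r1 < n)
    (M : Submodule ℂ (EuclideanSpace ℂ (Fin n)))
    (hL : ∀ i : Fin n, (i : ℕ) < r → EuclideanSpace.single i (1:ℂ) ∈ Mᗮ)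
    (hR : ∀ j : Fin n, n - r1 ≤ (j : ℕ) → EuclideanSpace.single j (1:ℂ) ∈ M) :
    ∃ n1 n2 : ℕ, r ≤ n1 ∧ r1 ≤ n2 ∧ n1 + n2 = n ∧
      ∃ col : Fin n → EuclideanSpace ℂ (Fin n),
      (∀ j : Fin n, (j : ℕ) < n1 → col j ∈ Mᗮ) ∧
      (∀ j : Fin n, n1 ≤ (j : ℕ) → col j ∈ M) ∧
      (∀ j : Fin n, ((j : ℕ) < r ∨ n - r1 ≤ (j : ℕ)) → col j = EuclideanSpace.single j 1) ∧
      (∀ j i : Fin n, r ≤ (j : ℕ) → (j : ℕ) < n - r1 →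
        ((i : ℕ) < r ∨ n - r1 ≤ (i : ℕ)) → col j i = 0) ∧
      (∀ j j' : Fin n, ⟪col j, col j'⟫ = if j = j' then (1:ℂ) else 0) := by
  classical
  have honb : Orthonormal ℂ (fun i : Fin n => EuclideanSpace.single i (1:ℂ)) := by
    exact EuclideanSpace.orthonormal_single
  set L : Submodule ℂ (EuclideanSpace ℂ (Fin n)) :=
    Submodule.span ℂ (Set.range ((fun i : Fin n => EuclideanSpace.single i (1:ℂ)) ∘
      (Subtype.val : {i : Fin n // (i : ℕ) < r} → Fin n))) with hLdef
  set R : Submodule ℂ (EuclideanSpace ℂ (Fin n)) :=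
    Submodule.span ℂ (Set.range ((fun j : Fin n => EuclideanSpace.single j (1:ℂ)) ∘
      (Subtype.val : {j : Fin n // n - r1 ≤ (j : ℕ)} → Fin n))) with hRdef
  have hLcard : Fintype.card {i : Fin n // (i : ℕ) < r} = r := by
    have : Fintype.card {i : Fin n // (i : ℕ) < r} = Fintype.card (Fin r) := by
      refine Fintype.card_congr ⟨fun x => ⟨(x : Fin n), x.2⟩,
        fun a => ⟨⟨(a : ℕ), by omega⟩, a.2⟩, ?_, ?_⟩ <;> intro x <;> ext <;> rfl
    simpa using this
  have hRcard : Fintype.card {j : Fin n // n - r1 ≤ (j : ℕ)} = r1 := by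
    have : Fintype.card {j : Fin n // n - r1 ≤ (j : ℕ)} = Fintype.card (Fin r1) := by
      refine Fintype.card_congr ⟨fun x => ⟨(x : ℕ) - (n - r1), by have := x.1.2; omega⟩,
        fun a => ⟨⟨n - r1 + (a : ℕ), by have := a.2; omega⟩, by simp⟩, ?_, ?_⟩
      · intro x; ext; simp; have := x.2; omega
      · intro a; ext; simp
    simpa using this
  have hLfin : finrank ℂ L = r := by
    rw [hLdef, finrank_span_eq_card
      ((honb.comp _ Subtype.val_injective).linearIndependent), hLcard]
  have hRfin : finrank ℂ R = r1 := by
    rw [hRdef, finrank_span_eq_card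
      ((honb.comp _ Subtype.val_injective).linearIndependent), hRcard]
  have hLM : L ≤ Mᗮ := by
    rw [hLdef, Submodule.span_le]
    rintro x ⟨i, rfl⟩; exact hL i i.2
  have hRM : R ≤ M := by
    rw [hRdef, Submodule.span_le]
    rintro x ⟨j, rfl⟩; exact hR j j.2
  have hLsingle : ∀ i : Fin n, (i : ℕ) < r → EuclideanSpace.single i (1:ℂ) ∈ L := by
    intro i hi
    exact Submodule.subset_span ⟨⟨i, hi⟩, rfl⟩
  have hRsingle : ∀ j : Fin n, n - r1 ≤ (j : ℕ) → EuclideanSpace.single j (1:ℂ) ∈ R := by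
    intro j hj
    exact Submodule.subset_span ⟨⟨j, hj⟩, rfl⟩
  obtain ⟨n2, hn2⟩ : ∃ n2, finrank ℂ M = n2 := ⟨_, rfl⟩
  have hVfin : finrank ℂ (EuclideanSpace ℂ (Fin n)) = n := finrank_euclideanSpace_fin
  have hn2n : n2 ≤ n := by
    have := M.finrank_le
    rw [hVfin, hn2] at this
    exact this
  obtain ⟨n1, hn1⟩ : ∃ n1, n1 = n - n2 := ⟨_, rfl⟩
  have hMorth : finrank ℂ Mᗮ = n1 := by
    have := Submodule.finrank_add_finrank_orthogonal M
    rw [hVfin, hn2] at this; omega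
  have hr1n2 : r1 ≤ n2 := by
    have := Submodule.finrank_mono hRM
    rw [hRfin, hn2] at this
    exact this
  have hrn1 : r ≤ n1 := by
    have := Submodule.finrank_mono hLM
    rw [hLfin, hMorth] at this
    exact this
  have hsum : n1 + n2 = n := by omega
  have hPfin : finrank ℂ (Lᗮ ⊓ Mᗮ : Submodule ℂ (EuclideanSpace ℂ (Fin n))) = n1 - r := by
    have hsup : L ⊔ (Lᗮ ⊓ Mᗮ) = Mᗮ := Submodule.sup_orthogonal_inf_of_hasOrthogonalProjection hLM
    have hinf : L ⊓ (Lᗮ ⊓ Mᗮ) = ⊥ := by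
      refine le_bot_iff.1 ?_
      refine le_trans (le_inf inf_le_left (le_trans inf_le_right inf_le_left)) ?_
      rw [L.orthogonal_disjoint.eq_bot]
    have h := Submodule.finrank_sup_add_finrank_inf_eq L (Lᗮ ⊓ Mᗮ)
    rw [hsup, hinf, hLfin, hMorth] at h
    simp only [finrank_bot] at h
    omega
  have hQfin : finrank ℂ (Rᗮ ⊓ M : Submodule ℂ (EuclideanSpace ℂ (Fin n))) = n2 - r1 := by
    have hsup : R ⊔ (Rᗮ ⊓ M) = M := Submodule.sup_orthogonal_inf_of_hasOrthogonalProjection hRM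
    have hinf : R ⊓ (Rᗮ ⊓ M) = ⊥ := by
      refine le_bot_iff.1 ?_
      refine le_trans (le_inf inf_le_left (le_trans inf_le_right inf_le_left)) ?_
      rw [R.orthogonal_disjoint.eq_bot]
    have h := Submodule.finrank_sup_add_finrank_inf_eq R (Rᗮ ⊓ M)
    rw [hsup, hinf, hRfin, hn2] at h
    simp only [finrank_bot] at h
    omega
  set p := stdOrthonormalBasis ℂ (Lᗮ ⊓ Mᗮ : Submodule ℂ (EuclideanSpace ℂ (Fin n))) with hp
  set q := stdOrthonormalBasis ℂ (Rᗮ ⊓ M : Submodule ℂ (EuclideanSpace ℂ (Fin n))) with hq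
  have hcoord : ∀ (x : EuclideanSpace ℂ (Fin n)) (i : Fin n),
      ⟪EuclideanSpace.single i (1:ℂ), x⟫ = x i := by
    intro x i; simp [EuclideanSpace.inner_single_left]
  have hPmemL : ∀ a, ((p a : EuclideanSpace ℂ (Fin n)) ∈ Lᗮ) := fun a => (p a).2.1
  have hPmemM : ∀ a, ((p a : EuclideanSpace ℂ (Fin n)) ∈ Mᗮ) := fun a => (p a).2.2
  have hQmemR : ∀ a, ((q a : EuclideanSpace ℂ (Fin n)) ∈ Rᗮ) := fun a => (q a).2.1
  have hQmemM : ∀ a, ((q a : EuclideanSpace ℂ (Fin n)) ∈ M) := fun a => (q a).2.2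
  have hEP : ∀ (i : Fin n), ((i : ℕ) < r ∨ n - r1 ≤ (i : ℕ)) →
      ∀ a, (p a : EuclideanSpace ℂ (Fin n)) i = 0 := by
    intro i hi a
    rw [← hcoord (p a : EuclideanSpace ℂ (Fin n)) i]
    rcases hi with hi | hi
    · exact Submodule.inner_right_of_mem_orthogonal (hLsingle i hi) (hPmemL a)
    · exact Submodule.inner_right_of_mem_orthogonal (hR i hi) (hPmemM a)
  have hEQ : ∀ (i : Fin n), ((i : ℕ) < r ∨ n - r1 ≤ (i : ℕ)) →
      ∀ a, (q a : EuclideanSpace ℂ (Fin n)) i = 0 := by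
    intro i hi a
    rw [← hcoord (q a : EuclideanSpace ℂ (Fin n)) i]
    rcases hi with hi | hi
    · exact (inner_eq_zero_symm).2
        (Submodule.inner_right_of_mem_orthogonal (hQmemM a) (hL i hi))
    · exact Submodule.inner_right_of_mem_orthogonal (hRsingle i hi) (hQmemR a)
  have hn1r1 : n1 ≤ n - r1 := by omega
  have hbP : ∀ j : Fin n, ¬((j : ℕ) < r ∨ n - r1 ≤ (j : ℕ)) → (j : ℕ) < n1 →
      (j : ℕ) - r < finrank ℂ (Lᗮ ⊓ Mᗮ : Submodule ℂ (EuclideanSpace ℂ (Fin n))) := by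
    intro j h0 h1; rw [hPfin]; omega
  have hbQ : ∀ j : Fin n, ¬((j : ℕ) < r ∨ n - r1 ≤ (j : ℕ)) → ¬((j : ℕ) < n1) →
      (j : ℕ) - n1 < finrank ℂ (Rᗮ ⊓ M : Submodule ℂ (EuclideanSpace ℂ (Fin n))) := by
    intro j h0 h1; rw [hQfin]; omega
  refine ⟨n1, n2, hrn1, hr1n2, hsum,
    fun j => if h0 : (j : ℕ) < r ∨ n - r1 ≤ (j : ℕ) then EuclideanSpace.single j 1
      else if h1 : (j : ℕ) < n1 then
        (p ⟨(j : ℕ) - r, hbP j h0 h1⟩ : EuclideanSpace ℂ (Fin n))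
      else (q ⟨(j : ℕ) - n1, hbQ j h0 h1⟩ : EuclideanSpace ℂ (Fin n)),
    ?_, ?_, ?_, ?_, ?_⟩
  · intro j hj
    by_cases h0 : (j : ℕ) < r ∨ n - r1 ≤ (j : ℕ)
    · simp only [dif_pos h0]
      rcases h0 with h0 | h0
      · exact hL j h0
      · omega
    · simp only [dif_neg h0, dif_pos hj]
      exact hPmemM _
  · intro j hj
    by_cases h0 : (j : ℕ) < r ∨ n - r1 ≤ (j : ℕ)
    · simp only [dif_pos h0]
      rcases h0 with h0 | h0
      · omega
      · exact hR j h0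
    · simp only [dif_neg h0, dif_neg (show ¬((j : ℕ) < n1) by omega)]
      exact hQmemM _
  · intro j hj
    simp only [dif_pos hj]
  · intro j i hj1 hj2 hi
    have h0 : ¬((j : ℕ) < r ∨ n - r1 ≤ (j : ℕ)) := by omega
    by_cases h1 : (j : ℕ) < n1
    · simp only [dif_neg h0, dif_pos h1]
      exact hEP i hi _
    · simp only [dif_neg h0, dif_neg h1]
      exact hEQ i hi _
  · intro j j'
    have hsingle : ∀ a b : Fin n,
        ⟪EuclideanSpace.single a (1:ℂ), EuclideanSpace.single b (1:ℂ)⟫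
          = if a = b then (1:ℂ) else 0 := by
      intro a b
      rw [hcoord]
      simp [EuclideanSpace.single_apply, eq_comm]
    have hPQ : ∀ a b, ⟪(p a : EuclideanSpace ℂ (Fin n)), (q b : EuclideanSpace ℂ (Fin n))⟫ = 0 :=
      fun a b => (inner_eq_zero_symm).2
        (Submodule.inner_right_of_mem_orthogonal (hQmemM b) (hPmemM a))
    have hPinner : ∀ a b, ⟪(p a : EuclideanSpace ℂ (Fin n)), (p b : EuclideanSpace ℂ (Fin n))⟫
        = if a = b then (1:ℂ) else 0 := by
      intro a b
      have := (orthonormal_iff_ite.1 p.orthonormal) a b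
      rwa [Submodule.coe_inner] at this
    have hQinner : ∀ a b, ⟪(q a : EuclideanSpace ℂ (Fin n)), (q b : EuclideanSpace ℂ (Fin n))⟫
        = if a = b then (1:ℂ) else 0 := by
      intro a b
      have := (orthonormal_iff_ite.1 q.orthonormal) a b
      rwa [Submodule.coe_inner] at this
    have hPedge : ∀ (a) (i : Fin n), ((i : ℕ) < r ∨ n - r1 ≤ (i : ℕ)) →
        ⟪EuclideanSpace.single i (1:ℂ), (p a : EuclideanSpace ℂ (Fin n))⟫ = 0 := by
      intro a i hi; rw [hcoord]; exact hEP i hi a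
    have hQedge : ∀ (a) (i : Fin n), ((i : ℕ) < r ∨ n - r1 ≤ (i : ℕ)) →
        ⟪EuclideanSpace.single i (1:ℂ), (q a : EuclideanSpace ℂ (Fin n))⟫ = 0 := by
      intro a i hi; rw [hcoord]; exact hEQ i hi a
    by_cases h0 : (j : ℕ) < r ∨ n - r1 ≤ (j : ℕ) <;>
      by_cases h0' : (j' : ℕ) < r ∨ n - r1 ≤ (j' : ℕ)
    · -- single, single
      simp only [dif_pos h0, dif_pos h0']
      exact hsingle j j'
    · -- single, middle
      have hne : j ≠ j' := by intro h; subst h; exact h0' h0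
      by_cases h1' : (j' : ℕ) < n1
      · simp only [dif_pos h0, dif_neg h0', dif_pos h1', if_neg hne]
        exact hPedge _ _ h0
      · simp only [dif_pos h0, dif_neg h0', dif_neg h1', if_neg hne]
        exact hQedge _ _ h0
    · -- middle, single
      have hne : j ≠ j' := by intro h; subst h; exact h0 h0'
      by_cases h1 : (j : ℕ) < n1
      · simp only [dif_neg h0, dif_pos h0', dif_pos h1, if_neg hne]
        exact (inner_eq_zero_symm).2 (hPedge _ _ h0')
      · simp only [dif_neg h0, dif_pos h0', dif_neg h1, if_neg hne]
        exact (inner_eq_zero_symm).2 (hQedge _ _ h0')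
    · -- middle, middle
      by_cases h1 : (j : ℕ) < n1 <;> by_cases h1' : (j' : ℕ) < n1
      · simp only [dif_neg h0, dif_neg h0', dif_pos h1, dif_pos h1']
        rw [hPinner]
        by_cases h : j = j'
        · simp [h]
        · rw [if_neg h, if_neg]
          simp only [ne_eq, Fin.mk.injEq]
          intro hc
          exact h (Fin.ext (by omega))
      · have hne : j ≠ j' := by intro h; subst h; exact h1' h1
        simp only [dif_neg h0, dif_neg h0', dif_pos h1, dif_neg h1', if_neg hne]
        exact hPQ _ _
      · have hne : j ≠ j' := by intro h; subst h; exact h1 h1'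
        simp only [dif_neg h0, dif_neg h0', dif_neg h1, dif_pos h1', if_neg hne]
        exact (inner_eq_zero_symm).2 (hPQ _ _)
      · simp only [dif_neg h0, dif_neg h0', dif_neg h1, dif_neg h1']
        rw [hQinner]
        by_cases h : j = j'
        · simp [h]
        · rw [if_neg h, if_neg]
          simp only [ne_eq, Fin.mk.injEq]
          intro hc
          exact h (Fin.ext (by omega))

/-- **Fejér–Riesz paper, Lemma 4.8.** -/
theorem fejer_riesz_lemma_4_8 (n r r1 : ℕ) (hr : r + r1 < n)
    (G : Matrix (Fin n) (Fin n) ℂ)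
    (hG : ∀ k : ℕ, 1 ≤ k → k ≤ n - 1 → ∀ i j : Fin n,
      (i : ℕ) < r → n - r1 ≤ (j : ℕ) → (G ^ k) i j = 0) :
    ∃ n1 n2 : ℕ, r ≤ n1 ∧ r1 ≤ n2 ∧ n1 + n2 = n ∧
      ∃ E : Matrix (Fin n) (Fin n) ℂ,
        Eᴴ * E = 1 ∧
        (∀ i j : Fin n,
          ((i : ℕ) < r ∨ (j : ℕ) < r ∨ n - r1 ≤ (i : ℕ) ∨ n - r1 ≤ (j : ℕ)) →
          E i j = if i = j then 1 else 0) ∧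
        (∀ i j : Fin n, (i : ℕ) < n1 → n1 ≤ (j : ℕ) → (Eᴴ * G * E) i j = 0) := by
  classical
  have hpow := fr48_pow_zero n r r1 hr G hG
  set M : Submodule ℂ (EuclideanSpace ℂ (Fin n)) :=
    Submodule.span ℂ {x : EuclideanSpace ℂ (Fin n) |
      ∃ (k : ℕ) (j : Fin n), n - r1 ≤ (j : ℕ) ∧ x = (G ^ k) *ᵥ Pi.single j 1} with hMdef
  have hsingle_eq : ∀ j : Fin n,
      (EuclideanSpace.single j (1:ℂ)) = (Pi.single j (1:ℂ) : Fin n → ℂ) := by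
    intro j; rfl
  have hR : ∀ j : Fin n, n - r1 ≤ (j : ℕ) → EuclideanSpace.single j (1:ℂ) ∈ M := by
    intro j hj
    refine Submodule.subset_span ⟨0, j, hj, ?_⟩
    rw [hsingle_eq, pow_zero, Matrix.one_mulVec]
  have hL : ∀ i : Fin n, (i : ℕ) < r → EuclideanSpace.single i (1:ℂ) ∈ Mᗮ := by
    intro i hi
    rw [Submodule.mem_orthogonal]
    intro u hu
    induction hu using Submodule.span_induction with
    | mem x hx =>
      obtain ⟨k, j, hj, hx⟩ := hx
      have : ((G ^ k) *ᵥ Pi.single j 1 : Fin n → ℂ) i = 0 := by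
        simp [Matrix.mulVec_single, hpow k i j hi hj]
      rw [EuclideanSpace.inner_single_right]
      simp [hx, this]
    | zero => simp
    | add x y _ _ hx hy => rw [inner_add_left, hx, hy, add_zero]
    | smul a x _ hx => rw [inner_smul_left, hx, mul_zero]
  have hInv : ∀ x : EuclideanSpace ℂ (Fin n), x ∈ M →
      (WithLp.toLp 2 (G *ᵥ x) : EuclideanSpace ℂ (Fin n)) ∈ M := by
    intro x hx
    induction hx using Submodule.span_induction with
    | mem y hy =>
      obtain ⟨k, j, hj, hy⟩ := hy
      refine Submodule.subset_span ⟨k + 1, j, hj, ?_⟩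
      rw [WithLp.ofLp_toLp, hy, Matrix.mulVec_mulVec, ← pow_succ']
    | zero => simpa using M.zero_mem
    | add y z _ _ hy hz =>
      have : (G *ᵥ (y + z) : Fin n → ℂ) = (G *ᵥ y) + (G *ᵥ z) := Matrix.mulVec_add G y z
      rw [WithLp.ofLp_add, Matrix.mulVec_add, WithLp.toLp_add]
      exact M.add_mem hy hz
    | smul a y _ hy =>
      have : (G *ᵥ (a • y) : Fin n → ℂ) = a • (G *ᵥ y) := Matrix.mulVec_smul G a y
      rw [WithLp.ofLp_smul, Matrix.mulVec_smul, WithLp.toLp_smul]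
      exact M.smul_mem a hy
  obtain ⟨n1, n2, hrn1, hr1n2, hsum, col, hcolMo, hcolM, hcolE, hcolZ, hcolO⟩ :=
    fr48_basis n r r1 hr M hL hR
  refine ⟨n1, n2, hrn1, hr1n2, hsum, Matrix.of (fun i j => col j i), ?_, ?_, ?_⟩
  · ext a b
    have h := hcolO a b
    rw [PiLp.inner_apply] at h
    simp only [RCLike.inner_apply] at h
    simp only [Matrix.mul_apply, Matrix.conjTranspose_apply, Matrix.of_apply,
      Matrix.one_apply]
    rw [← h]
    exact Finset.sum_congr rfl fun x _ => mul_comm _ _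
  · intro i j hij
    by_cases hj : (j : ℕ) < r ∨ n - r1 ≤ (j : ℕ)
    · have := hcolE j hj
      simp only [Matrix.of_apply, this, hsingle_eq]
      rw [Pi.single_apply]
    · have hi : (i : ℕ) < r ∨ n - r1 ≤ (i : ℕ) := by tauto
      have hz := hcolZ j i (by omega) (by omega) hi
      have hne : i ≠ j := by
        intro h; subst h; exact hj hi
      simp only [Matrix.of_apply, hz, if_neg hne]
  · intro i j hi hj
    have key : ((Matrix.of (fun i j => col j i))ᴴ * G * (Matrix.of (fun i j => col j i))) i j
        = ⟪col i, (WithLp.toLp 2 (G *ᵥ col j) : EuclideanSpace ℂ (Fin n))⟫ := by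
      rw [Matrix.mul_assoc]
      rw [PiLp.inner_apply]
      simp only [RCLike.inner_apply, Matrix.mul_apply, Matrix.conjTranspose_apply,
        Matrix.of_apply, Matrix.mulVec, dotProduct, starRingEnd_apply, WithLp.ofLp_toLp]
      exact Finset.sum_congr rfl fun x _ => mul_comm _ _
    rw [key]
    exact Submodule.inner_left_of_mem_orthogonal (hInv _ (hcolM j hj)) (hcolMo i hi)
end

section
/- Fix positive integers m and n. Suppose that for every integer k ≥ n we are given complex matrices K_k and K¹_k of size m×k and matrices Γ_k and Γ¹_k of size k×(k+1) satisfying, for all k ≥ n: (a) K_k·(K¹_k)ᵀ = 0; (b) Γ¹_{k+1}·Γ†_{k+1} = Γ†_k·Γ¹_k; (c) K_{k+1} = K_k·Γ¹_k; (d) (K¹_{k+1})ᵀ = Γ†_k·(K¹_k)ᵀ. Then K_k·[Γ¹_k·Γ†_k]^j·(K¹_k)ᵀ = 0 for every integer j ≥ 0 and every k ≥ n. -/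
open Matrix

private lemma pow_shuffle {p q : ℕ} (A : Matrix (Fin p) (Fin q) ℂ) (B : Matrix (Fin q) (Fin p) ℂ) :
    ∀ j : ℕ, (A * B) ^ (j + 1) = A * (B * A) ^ j * B := by
  intro j
  induction j with
  | zero => simp
  | succ j ih =>
    rw [pow_succ, ih, pow_succ]
    simp only [Matrix.mul_assoc]

/-- **Fejér–Riesz paper, Lemma 4.3.**
Suppose that for every `k ≥ n` we are given complex matrices `K k`, `K1 k` of size m×k and
`Γ k`, `Γ1 k` of size k×(k+1) satisfying, for all `k ≥ n`:
(a) `K k · (K1 k)ᵀ = 0`;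
(b) `Γ1 (k+1) · (Γ (k+1))ᴴ = (Γ k)ᴴ · Γ1 k`;
(c) `K (k+1) = K k · Γ1 k`;
(d) `(K1 (k+1))ᵀ = (Γ k)ᴴ · (K1 k)ᵀ`.
Then `K k · [Γ1 k · (Γ k)ᴴ]^j · (K1 k)ᵀ = 0` for every `j ≥ 0` and every `k ≥ n`. -/
theorem fejer_riesz_lemma_4_3 (m n : ℕ) (hm : 0 < m) (hn : 0 < n)
    (K K1 : (k : ℕ) → Matrix (Fin m) (Fin k) ℂ)
    (Γ Γ1 : (k : ℕ) → Matrix (Fin k) (Fin (k + 1)) ℂ)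
    (ha : ∀ k, n ≤ k → K k * (K1 k)ᵀ = 0)
    (hb : ∀ k, n ≤ k → Γ1 (k + 1) * (Γ (k + 1))ᴴ = (Γ k)ᴴ * Γ1 k)
    (hc : ∀ k, n ≤ k → K (k + 1) = K k * Γ1 k)
    (hd : ∀ k, n ≤ k → (K1 (k + 1))ᵀ = (Γ k)ᴴ * (K1 k)ᵀ) :
    ∀ (j : ℕ) (k : ℕ), n ≤ k → K k * (Γ1 k * (Γ k)ᴴ) ^ j * (K1 k)ᵀ = 0 := by
  intro j
  induction j with
  | zero => intro k hk; simpa using ha k hk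
  | succ j ih =>
    intro k hk
    have hkey := ih (k + 1) (le_trans hk (Nat.le_succ k))
    rw [hc k hk, hd k hk, hb k hk] at hkey
    rw [pow_shuffle]
    calc K k * (Γ1 k * ((Γ k)ᴴ * Γ1 k) ^ j * (Γ k)ᴴ) * (K1 k)ᵀ
        = K k * Γ1 k * ((Γ k)ᴴ * Γ1 k) ^ j * ((Γ k)ᴴ * (K1 k)ᵀ) := by
          simp only [Matrix.mul_assoc]
      _ = 0 := hkey
end

section
/- Fix positive integers m and n. Suppose that for every integer k ≥ n we are given complex matrices K_k and K¹_k of size m×k and matrices Γ_k and Γ¹_k of size k×(k+1) satisfying, for all k ≥ n: (b) Γ¹_{k+1}·Γ†_{k+1} = Γ†_k·Γ¹_k; (c) K_{k+1} = K_k·Γ¹_k; (d) (K¹_{k+1})ᵀ = Γ†_k·(K¹_k)ᵀ. Then for every k ≥ n and every integer j ≥ 0, K_{k+j}·(K¹_{k+j})ᵀ = K_k·[Γ¹_k·Γ†_k]^j·(K¹_k)ᵀ. -/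
open Matrix

lemma aux_mul_pow {α β : Type*} [Fintype α] [Fintype β] [DecidableEq α] [DecidableEq β]
    (A : Matrix α β ℂ) (B : Matrix β α ℂ) :
    ∀ i : ℕ, A * (B * A) ^ i * B = (A * B) ^ (i + 1) := by
  intro i
  induction i with
  | zero => simp [pow_succ]
  | succ i ih =>
    rw [pow_succ, pow_succ, ← ih]
    simp only [Matrix.mul_assoc]

/-- **Fejér–Riesz paper, equation (4.9).**
Suppose that for every `k ≥ n` we are given complex matrices `K k`, `K1 k` of size m×k and
`Γ k`, `Γ1 k` of size k×(k+1) satisfying, for all `k ≥ n`: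
(b) `Γ1 (k+1) · (Γ (k+1))ᴴ = (Γ k)ᴴ · Γ1 k`;
(c) `K (k+1) = K k · Γ1 k`;
(d) `(K1 (k+1))ᵀ = (Γ k)ᴴ · (K1 k)ᵀ`.
Then for every `k ≥ n` and every `j ≥ 0`,
`K (k+j) · (K1 (k+j))ᵀ = K k · [Γ1 k · (Γ k)ᴴ]^j · (K1 k)ᵀ`. -/
theorem fejer_riesz_eq_4_9 (m n : ℕ) (hm : 0 < m) (hn : 0 < n)
    (K K1 : (k : ℕ) → Matrix (Fin m) (Fin k) ℂ)
    (Γ Γ1 : (k : ℕ) → Matrix (Fin k) (Fin (k + 1)) ℂ)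
    (hb : ∀ k, n ≤ k → Γ1 (k + 1) * (Γ (k + 1))ᴴ = (Γ k)ᴴ * Γ1 k)
    (hc : ∀ k, n ≤ k → K (k + 1) = K k * Γ1 k)
    (hd : ∀ k, n ≤ k → (K1 (k + 1))ᵀ = (Γ k)ᴴ * (K1 k)ᵀ) :
    ∀ (k : ℕ), n ≤ k → ∀ (j : ℕ),
      K (k + j) * (K1 (k + j))ᵀ = K k * (Γ1 k * (Γ k)ᴴ) ^ j * (K1 k)ᵀ := by
  intro k hk j
  have key : ∀ j : ℕ, ∀ i : ℕ,
      K (k + j) * (Γ1 (k + j) * (Γ (k + j))ᴴ) ^ i * (K1 (k + j))ᵀ =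
        K k * (Γ1 k * (Γ k)ᴴ) ^ (i + j) * (K1 k)ᵀ := by
    intro j
    induction j with
    | zero => intro i; simp
    | succ j ih =>
      intro i
      have hk' : n ≤ k + j := le_add_right hk
      have e1 : K (k + (j + 1)) = K (k + j) * Γ1 (k + j) := hc (k + j) hk'
      have e2 : (K1 (k + (j + 1)))ᵀ = (Γ (k + j))ᴴ * (K1 (k + j))ᵀ := hd (k + j) hk'
      have e3 : Γ1 (k + (j + 1)) * (Γ (k + (j + 1)))ᴴ = (Γ (k + j))ᴴ * Γ1 (k + j) :=
        hb (k + j) hk'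
      rw [e1, e2, e3]
      calc K (k + j) * Γ1 (k + j) * ((Γ (k + j))ᴴ * Γ1 (k + j)) ^ i *
            ((Γ (k + j))ᴴ * (K1 (k + j))ᵀ)
          = K (k + j) * (Γ1 (k + j) * ((Γ (k + j))ᴴ * Γ1 (k + j)) ^ i * (Γ (k + j))ᴴ) *
            (K1 (k + j))ᵀ := by simp only [Matrix.mul_assoc]
        _ = K (k + j) * (Γ1 (k + j) * (Γ (k + j))ᴴ) ^ (i + 1) * (K1 (k + j))ᵀ := by
            rw [aux_mul_pow]
        _ = K k * (Γ1 k * (Γ k)ᴴ) ^ (i + 1 + j) * (K1 k)ᵀ := ih (i + 1)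
        _ = K k * (Γ1 k * (Γ k)ᴴ) ^ (i + (j + 1)) * (K1 k)ᵀ := by ring_nf
  have := key j 0
  simpa using this
end

section
/- Let n, m be nonnegative integers, let p ∈ ℂ[z,w] be a polynomial of degree at most (n,m), and let ←p(z,w) = zⁿwᵐ·conj(p(1/conj(z), 1/conj(w))) be its reverse polynomial. Suppose there exist polynomials φ₀,…,φ_m ∈ ℂ[z,w] such that: (1) for all z ∈ ℂ with |z| = 1 and all w, w₁ ∈ ℂ, p(z,w)·conj(p(z,w₁)) − w·conj(w₁)·←p(z,w)·conj(←p(z,w₁)) = (1 − w·conj(w₁))·Σ_{j=0}^{m} φ_j(z,w)·conj(φ_j(z,w₁)); and (2) for every z with |z| = 1 and every w ∈ ℂ, the vector (φ₀(z,w),…,φ_m(z,w)) is not the zero vector. Then p(z,w) ≠ 0 for all z, w with |z| = 1 and |w| ≤ 1. -/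
open MvPolynomial

/-- **Fejér–Riesz paper, Lemma 4.4 (stability part).**
Let `p ∈ ℂ[z,w]` have degree at most `(n,m)` and let `revp` be its reverse polynomial,
characterized by `revp(z,w) = zⁿwᵐ·conj(p(1/conj z, 1/conj w))` for `z, w ≠ 0`.
If there are polynomials `φ₀, …, φ_m` such that for `|z| = 1` the Christoffel–Darboux-type
identity
`p(z,w)·conj(p(z,w₁)) − w·conj(w₁)·revp(z,w)·conj(revp(z,w₁))
  = (1 − w·conj(w₁))·∑_j φ_j(z,w)·conj(φ_j(z,w₁))`
holds, and the vector `(φ₀(z,w), …, φ_m(z,w))` never vanishes for `|z| = 1`, then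
`p(z,w) ≠ 0` whenever `|z| = 1` and `|w| ≤ 1`. -/
theorem fejer_riesz_lemma_4_4_stability (n m : ℕ) (p revp : MvPolynomial (Fin 2) ℂ)
    (hdeg : ∀ d ∈ p.support, d 0 ≤ n ∧ d 1 ≤ m)
    (hrev : ∀ z w : ℂ, z ≠ 0 → w ≠ 0 →
      eval ![z, w] revp =
        z ^ n * w ^ m *
          (starRingEnd ℂ) (eval ![1 / (starRingEnd ℂ) z, 1 / (starRingEnd ℂ) w] p))
    (φ : Fin (m + 1) → MvPolynomial (Fin 2) ℂ)
    (h1 : ∀ z w w1 : ℂ, ‖z‖ = 1 →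
      eval ![z, w] p * (starRingEnd ℂ) (eval ![z, w1] p) -
          w * (starRingEnd ℂ) w1 * eval ![z, w] revp *
            (starRingEnd ℂ) (eval ![z, w1] revp) =
        (1 - w * (starRingEnd ℂ) w1) *
          ∑ j : Fin (m + 1), eval ![z, w] (φ j) * (starRingEnd ℂ) (eval ![z, w1] (φ j)))
    (h2 : ∀ z w : ℂ, ‖z‖ = 1 → ∃ j : Fin (m + 1), eval ![z, w] (φ j) ≠ 0) :
    ∀ z w : ℂ, ‖z‖ = 1 → ‖w‖ ≤ 1 → eval ![z, w] p ≠ 0 := by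
  intro z w hz hw hp
  have hz0 : z ≠ 0 := by intro h; simp [h] at hz
  have hS : 0 < ∑ j : Fin (m + 1), Complex.normSq (eval ![z, w] (φ j)) := by
    obtain ⟨j, hj⟩ := h2 z w hz
    exact Finset.sum_pos' (fun i _ => Complex.normSq_nonneg _)
      ⟨j, Finset.mem_univ j, Complex.normSq_pos.mpr hj⟩
  have hSum : ((∑ j : Fin (m + 1), Complex.normSq (eval ![z, w] (φ j)) : ℝ) : ℂ) =
      ∑ j : Fin (m + 1), eval ![z, w] (φ j) * (starRingEnd ℂ) (eval ![z, w] (φ j)) := by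
    push_cast [Complex.mul_conj]
    rfl
  rcases eq_or_lt_of_le hw with hw1 | hw1
  · -- |w| = 1
    have hw0 : w ≠ 0 := by intro h; rw [h] at hw1; simp at hw1
    have hnz : Complex.normSq z = 1 := by rw [← Complex.sq_norm, hz]; norm_num
    have hnw : Complex.normSq w = 1 := by rw [← Complex.sq_norm, hw1]; norm_num
    have hinvz : 1 / (starRingEnd ℂ) z = z := by
      rw [div_eq_iff (by simpa using hz0 : (starRingEnd ℂ) z ≠ 0),
        Complex.mul_conj, hnz, Complex.ofReal_one]
    have hinvw : 1 / (starRingEnd ℂ) w = w := by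
      rw [div_eq_iff (by simpa using hw0 : (starRingEnd ℂ) w ≠ 0),
        Complex.mul_conj, hnw, Complex.ofReal_one]
    have hR : eval ![z, w] revp = 0 := by
      rw [hrev z w hz0 hw0, hinvz, hinvw, hp]; simp
    set G : ℂ → ℂ := fun u =>
      ∑ j : Fin (m + 1), eval ![z, w] (φ j) * (starRingEnd ℂ) (eval ![z, u] (φ j)) with hG
    have hGcont : Continuous G := by
      apply continuous_finset_sum
      intro j _
      have hvec : Continuous fun u : ℂ => (![z, u] : Fin 2 → ℂ) := by
        apply continuous_pi
        intro i
        fin_cases i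
        · exact continuous_const
        · exact continuous_id
      have hc : Continuous fun u : ℂ => eval ![z, u] (φ j) :=
        (MvPolynomial.continuous_eval (φ j)).comp hvec
      exact continuous_const.mul (Complex.continuous_conj.comp hc)
    have hGzero : ∀ u : ℂ, u ≠ w → G u = 0 := by
      intro u hu
      have key := h1 z w u hz
      rw [hp, hR] at key
      simp only [zero_mul, mul_zero, sub_self] at key
      have h1u : 1 - w * (starRingEnd ℂ) u ≠ 0 := by
        intro h
        apply hu
        have hcw : w * (starRingEnd ℂ) u = 1 := by linear_combination -h
        have hww : w * (starRingEnd ℂ) w = 1 := by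
          rw [Complex.mul_conj, hnw]; norm_num
        have : (starRingEnd ℂ) u = (starRingEnd ℂ) w := by
          rw [← hcw] at hww
          exact (mul_left_cancel₀ hw0 hww).symm
        exact (starRingEnd ℂ).injective this
      rcases mul_eq_zero.mp key.symm with h | h
      · exact absurd h h1u
      · exact h
    have hGw : G w = 0 := by
      have := Continuous.ext_on (dense_compl_singleton w) hGcont
        (continuous_const : Continuous fun _ : ℂ => (0 : ℂ))
        (fun u hu => hGzero u hu)
      exact congrFun this w
    rw [hG] at hGw
    simp only at hGw
    rw [← hSum] at hGw
    exact absurd (Complex.ofReal_eq_zero.mp hGw) (ne_of_gt hS)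
  · -- |w| < 1
    have hnw : Complex.normSq w < 1 := by
      rw [← Complex.sq_norm]
      nlinarith [norm_nonneg w]
    have key := h1 z w w hz
    rw [hp] at key
    simp only [zero_mul, zero_sub] at key
    set R : ℂ := eval ![z, w] revp with hRdef
    have key2 : -((w * (starRingEnd ℂ) w) * (R * (starRingEnd ℂ) R)) =
        (1 - w * (starRingEnd ℂ) w) *
          ((∑ j : Fin (m + 1), Complex.normSq (eval ![z, w] (φ j)) : ℝ) : ℂ) := by
      rw [hSum]; linear_combination key
    rw [Complex.mul_conj, Complex.mul_conj] at key2
    have hreal : -(Complex.normSq w * Complex.normSq R) =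
        (1 - Complex.normSq w) * ∑ j : Fin (m + 1), Complex.normSq (eval ![z, w] (φ j)) := by
      exact_mod_cast key2
    nlinarith [Complex.normSq_nonneg R, Complex.normSq_nonneg w]
end

section
/- Let m ≥ 0 and let p₀, p₁, …, p_m ∈ ℂ. Define the polynomials p(w) = Σ_{l=0}^{m} p_l w^l and ←p(w) = Σ_{l=0}^{m} conj(p_{m−l}) w^l. Define (m+1)×(m+1) complex matrices A and B (rows and columns indexed 0,…,m) by A_{ij} = p_{i−j} if i ≥ j and A_{ij} = 0 otherwise, and B_{ij} = p_{m+1+i−j} if j ≥ i+1 and B_{ij} = 0 otherwise. Then for all w, η ∈ ℂ: p(w)·conj(p(η)) − w·conj(η)·←p(w)·conj(←p(η)) = (1 − w·conj(η)) · u(w)ᵀ · (A·A† − B†·B) · v(η), where u(w) = (1, w, …, w^m)ᵀ and v(η) = (1, conj(η), …, conj(η)^m)ᵀ. -/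
open Matrix

open Finset

section helpers

lemma ite_range_sum (M n : ℕ) (hn : n ≤ M) (f : ℕ → ℂ) :
    ∑ s ∈ range M, (if s < n then f s else 0) = ∑ s ∈ range n, f s := by
  rw [← Finset.sum_filter]
  congr 1
  ext x
  simp only [Finset.mem_filter, Finset.mem_range]
  omega

lemma collapse_sum (n k : ℕ) (f : ℕ → ℂ) :
    ∑ i ∈ range n, (if k ≤ i then f i else 0) = ∑ s ∈ range (n - k), f (k + s) := by
  rw [← Finset.sum_filter, ← Finset.sum_Ico_eq_sum_range]
  congr 1
  ext x
  simp only [Finset.mem_filter, Finset.mem_range, Finset.mem_Ico]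
  omega

lemma swap3_gen (m : ℕ) (c : ℕ) (hc : c ≤ m + 1) (g : ℕ → ℕ → ℕ → ℂ) :
    ∑ k ∈ range (m+1), ∑ s ∈ range (m+1-c-k), ∑ t ∈ range (m+1-c-k), g k s t
  = ∑ s ∈ range (m+1), ∑ t ∈ range (m+1), ∑ k ∈ range (m+1-c - max s t), g k s t := by
  have key : ∀ k, ∑ s ∈ range (m+1-c-k), ∑ t ∈ range (m+1-c-k), g k s t
      = ∑ s ∈ range (m+1), ∑ t ∈ range (m+1),
          (if s < m+1-c-k ∧ t < m+1-c-k then g k s t else 0) := by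
    intro k
    rw [← ite_range_sum (m+1) (m+1-c-k) (by omega)
        (fun s => ∑ t ∈ range (m+1-c-k), g k s t)]
    refine Finset.sum_congr rfl fun s _ => ?_
    by_cases hs : s < m+1-c-k
    · rw [if_pos hs, ← ite_range_sum (m+1) (m+1-c-k) (by omega) (fun t => g k s t)]
      exact Finset.sum_congr rfl fun t _ => by simp [hs]
    · rw [if_neg hs]
      exact (Finset.sum_eq_zero fun t _ => by simp [hs]).symm
  rw [Finset.sum_congr rfl (fun k _ => key k), Finset.sum_comm]
  refine Finset.sum_congr rfl fun s _ => ?_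
  rw [Finset.sum_comm]
  refine Finset.sum_congr rfl fun t _ => ?_
  rw [← ite_range_sum (m+1) (m+1-c - max s t) (by omega) (fun k => g k s t)]
  refine Finset.sum_congr rfl fun k _ => ?_
  split_ifs <;> first | rfl | omega

lemma refl2 (m : ℕ) (F : ℕ → ℕ → ℂ) :
    ∑ s ∈ range (m+1), ∑ t ∈ range (m+1), F (m-s) (m-t)
  = ∑ s ∈ range (m+1), ∑ t ∈ range (m+1), F s t := by
  have h1 := Finset.sum_range_reflect (fun s => ∑ t ∈ range (m+1), F s (m-t)) (m+1)
  simp only [Nat.add_sub_cancel] at h1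
  rw [h1]
  refine Finset.sum_congr rfl fun s _ => ?_
  have h2 := Finset.sum_range_reflect (fun t => F s t) (m+1)
  simp only [Nat.add_sub_cancel] at h2
  rw [h2]

lemma expand_prod (N : ℕ) (f g : ℕ → ℂ) (w e : ℂ) (j : ℕ) :
    (1 - w*e) * ((w^j * ∑ s ∈ range N, f s * w^s) * (e^j * ∑ t ∈ range N, g t * e^t))
  = ∑ s ∈ range N, ∑ t ∈ range N,
      f s * g t * (w^(j+s)*e^(j+t) - w^(j+s+1)*e^(j+t+1)) := by
  rw [Finset.mul_sum, Finset.mul_sum, Finset.sum_mul_sum, Finset.mul_sum]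
  refine Finset.sum_congr rfl fun s _ => ?_
  rw [Finset.mul_sum]
  refine Finset.sum_congr rfl fun t _ => ?_
  ring

lemma key_lemma (m : ℕ) (a b : ℕ → ℂ) (w e : ℂ) :
    ∑ k ∈ range (m+1), (1 - w*e) *
      ( (w^k * ∑ s ∈ range (m+1-k), a s * w^s) * (e^k * ∑ t ∈ range (m+1-k), b t * e^t)
      - (w^(k+1) * ∑ s ∈ range (m-k), b (m-s) * w^s) *
          (e^(k+1) * ∑ t ∈ range (m-k), a (m-t) * e^t) )
  = (∑ s ∈ range (m+1), a s * w^s) * (∑ t ∈ range (m+1), b t * e^t)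
    - (w*e) * ((∑ s ∈ range (m+1), b (m-s) * w^s) * (∑ t ∈ range (m+1), a (m-t) * e^t)) := by
  -- Step 1: per-k expansion
  have step1 : ∀ k, (1 - w*e) *
      ( (w^k * ∑ s ∈ range (m+1-k), a s * w^s) * (e^k * ∑ t ∈ range (m+1-k), b t * e^t)
      - (w^(k+1) * ∑ s ∈ range (m-k), b (m-s) * w^s) *
          (e^(k+1) * ∑ t ∈ range (m-k), a (m-t) * e^t) )
    = (∑ s ∈ range (m+1-k), ∑ t ∈ range (m+1-k),
        a s * b t * (w^(k+s)*e^(k+t) - w^(k+s+1)*e^(k+t+1)))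
      - (∑ s ∈ range (m-k), ∑ t ∈ range (m-k),
        b (m-s) * a (m-t) * (w^((k+1)+s)*e^((k+1)+t) - w^((k+1)+s+1)*e^((k+1)+t+1))) := by
    intro k
    rw [mul_sub, expand_prod, expand_prod]
  rw [Finset.sum_congr rfl (fun k _ => step1 k), Finset.sum_sub_distrib]
  -- Step 2: swap sums
  have h0 : ∀ k, m + 1 - k = m + 1 - 0 - k := fun k => rfl
  have sw1 := swap3_gen m 0 (by omega)
      (fun k s t => a s * b t * (w^(k+s)*e^(k+t) - w^(k+s+1)*e^(k+t+1)))
  have sw2 := swap3_gen m 1 (by omega)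
      (fun k s t => b (m-s) * a (m-t) * (w^((k+1)+s)*e^((k+1)+t) - w^((k+1)+s+1)*e^((k+1)+t+1)))
  simp only [Nat.sub_zero] at sw1
  have e1 : ∀ k : ℕ, m + 1 - 1 - k = m - k := fun k => by omega
  simp only [e1] at sw2
  rw [sw1, sw2]
  -- Step 3: telescope inner sums
  have tel1 : ∀ s ∈ range (m+1), ∀ t ∈ range (m+1),
      ∑ k ∈ range (m+1 - max s t), a s * b t * (w^(k+s)*e^(k+t) - w^(k+s+1)*e^(k+t+1))
    = a s * b t * (w^s*e^t - w^(m+1-max s t+s)*e^(m+1-max s t+t)) := by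
    intro s _ t _
    rw [← Finset.mul_sum]
    congr 1
    have : ∀ k : ℕ, w^(k+s)*e^(k+t) - w^(k+s+1)*e^(k+t+1)
        = (fun k => w^(k+s)*e^(k+t)) k - (fun k => w^(k+s)*e^(k+t)) (k+1) := by
      intro k
      simp only
      rw [show k+s+1 = k+1+s by omega, show k+t+1 = k+1+t by omega]
    rw [Finset.sum_congr rfl (fun k _ => this k), Finset.sum_range_sub']
    simp only [Nat.zero_add]
  have tel2 : ∀ s ∈ range (m+1), ∀ t ∈ range (m+1),
      ∑ k ∈ range (m - max s t),
        b (m-s) * a (m-t) * (w^((k+1)+s)*e^((k+1)+t) - w^((k+1)+s+1)*e^((k+1)+t+1))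
    = b (m-s) * a (m-t) * (w^(1+s)*e^(1+t) - w^(m+1-max s t+s)*e^(m+1-max s t+t)) := by
    intro s hs t ht
    rw [← Finset.mul_sum]
    congr 1
    have : ∀ k : ℕ, w^((k+1)+s)*e^((k+1)+t) - w^((k+1)+s+1)*e^((k+1)+t+1)
        = (fun k => w^(k+1+s)*e^(k+1+t)) k - (fun k => w^(k+1+s)*e^(k+1+t)) (k+1) := by
      intro k
      simp only
      rw [show k+1+s+1 = k+1+1+s by omega, show k+1+t+1 = k+1+1+t by omega]
    rw [Finset.sum_congr rfl (fun k _ => this k), Finset.sum_range_sub']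
    simp only [Nat.zero_add]
    rw [show m - max s t + 1 + s = m+1-max s t+s by
          simp only [Finset.mem_range] at hs ht; omega,
        show m - max s t + 1 + t = m+1-max s t+t by
          simp only [Finset.mem_range] at hs ht; omega]
  rw [Finset.sum_congr rfl (fun s hs => Finset.sum_congr rfl (fun t ht => tel1 s hs t ht)),
      Finset.sum_congr rfl (fun s hs => Finset.sum_congr rfl (fun t ht => tel2 s hs t ht))]
  -- Step 4: split and regroup
  have split : ∀ (F G : ℕ → ℕ → ℂ),
      ∑ s ∈ range (m+1), ∑ t ∈ range (m+1), (F s t - G s t)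
    = (∑ s ∈ range (m+1), ∑ t ∈ range (m+1), F s t)
      - ∑ s ∈ range (m+1), ∑ t ∈ range (m+1), G s t := by
    intro F G
    rw [← Finset.sum_sub_distrib]
    exact Finset.sum_congr rfl fun s _ => by rw [← Finset.sum_sub_distrib]
  have mulA : ∀ s t : ℕ, a s * b t * (w^s*e^t - w^(m+1-max s t+s)*e^(m+1-max s t+t))
      = a s * b t * (w^s*e^t) - a s * b t * (w^(m+1-max s t+s)*e^(m+1-max s t+t)) := by
    intros; ring
  have mulB : ∀ s t : ℕ,
      b (m-s) * a (m-t) * (w^(1+s)*e^(1+t) - w^(m+1-max s t+s)*e^(m+1-max s t+t))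
    = b (m-s) * a (m-t) * (w^(1+s)*e^(1+t))
      - b (m-s) * a (m-t) * (w^(m+1-max s t+s)*e^(m+1-max s t+t)) := by
    intros; ring
  simp only [mulA, mulB, split]
  -- Step 5: the two tail sums agree
  have tails : ∑ s ∈ range (m+1), ∑ t ∈ range (m+1),
        a s * b t * (w^(m+1-max s t+s)*e^(m+1-max s t+t))
      = ∑ s ∈ range (m+1), ∑ t ∈ range (m+1),
        b (m-s) * a (m-t) * (w^(m+1-max s t+s)*e^(m+1-max s t+t)) := by
    rw [← refl2 m (fun s t => b (m-s) * a (m-t) * (w^(m+1-max s t+s)*e^(m+1-max s t+t)))]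
    rw [Finset.sum_comm]
    refine Finset.sum_congr rfl fun t ht => Finset.sum_congr rfl fun s hs => ?_
    simp only [Finset.mem_range] at hs ht
    rw [show m - (m - t) = t by omega, show m - (m - s) = s by omega,
        show m+1-max (m-t) (m-s) + (m-t) = m+1-max s t + s by omega,
        show m+1-max (m-t) (m-s) + (m-s) = m+1-max s t + t by omega]
    ring
  -- Step 6: identify main sums with products
  have prodA : (∑ s ∈ range (m+1), a s * w^s) * (∑ t ∈ range (m+1), b t * e^t)
      = ∑ s ∈ range (m+1), ∑ t ∈ range (m+1), a s * b t * (w^s*e^t) := by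
    rw [Finset.sum_mul_sum]
    exact Finset.sum_congr rfl fun s _ => Finset.sum_congr rfl fun t _ => by ring
  have prodB : (w*e) * ((∑ s ∈ range (m+1), b (m-s) * w^s) * (∑ t ∈ range (m+1), a (m-t) * e^t))
      = ∑ s ∈ range (m+1), ∑ t ∈ range (m+1), b (m-s) * a (m-t) * (w^(1+s)*e^(1+t)) := by
    rw [Finset.sum_mul_sum, Finset.mul_sum]
    refine Finset.sum_congr rfl fun s _ => ?_
    rw [Finset.mul_sum]
    refine Finset.sum_congr rfl fun t _ => ?_
    ring
  rw [prodA, prodB, tails]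
  ring

-- factor collapse lemmas
lemma fac1 (m k : ℕ) (p : ℕ → ℂ) (w : ℂ) :
    ∑ i ∈ range (m+1), w^i * (if k ≤ i then p (i-k) else 0)
  = w^k * ∑ s ∈ range (m+1-k), p s * w^s := by
  simp only [mul_ite, mul_zero]
  rw [collapse_sum, Finset.mul_sum]
  refine Finset.sum_congr rfl fun s _ => ?_
  rw [Nat.add_sub_cancel_left]
  ring

lemma fac2 (m k : ℕ) (q : ℕ → ℂ) (e : ℂ) :
    ∑ j ∈ range (m+1), (if k ≤ j then q (j-k) else 0) * e^j
  = e^k * ∑ t ∈ range (m+1-k), q t * e^t := by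
  simp only [ite_mul, zero_mul]
  rw [collapse_sum, Finset.mul_sum]
  refine Finset.sum_congr rfl fun t _ => ?_
  rw [Nat.add_sub_cancel_left]
  ring

lemma fac3 (m k : ℕ) (q : ℕ → ℂ) (w : ℂ) :
    ∑ i ∈ range (m+1), w^i * (if k+1 ≤ i then q (m+1+k-i) else 0)
  = w^(k+1) * ∑ s ∈ range (m-k), q (m-s) * w^s := by
  simp only [mul_ite, mul_zero]
  rw [collapse_sum, show m+1-(k+1) = m-k by omega, Finset.mul_sum]
  refine Finset.sum_congr rfl fun s _ => ?_
  rw [show m+1+k-(k+1+s) = m-s by omega]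
  ring

lemma fac4 (m k : ℕ) (q : ℕ → ℂ) (e : ℂ) :
    ∑ j ∈ range (m+1), (if k+1 ≤ j then q (m+1+k-j) else 0) * e^j
  = e^(k+1) * ∑ t ∈ range (m-k), q (m-t) * e^t := by
  simp only [ite_mul, zero_mul]
  rw [collapse_sum, show m+1-(k+1) = m-k by omega, Finset.mul_sum]
  refine Finset.sum_congr rfl fun t _ => ?_
  rw [show m+1+k-(k+1+t) = m-t by omega]
  ring

end helpers

/-- **Fejér–Riesz paper, equation (4.17) (Gohberg–Semencul-type identity).**
Let `p₀, …, p_m ∈ ℂ`, `p(w) = ∑ p_l w^l` and `←p(w) = ∑ conj(p_{m-l}) w^l`.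
With `A` the lower-triangular Toeplitz matrix `A_{ij} = p_{i-j}` (for `i ≥ j`) and `B` the
strictly upper-triangular Toeplitz matrix `B_{ij} = p_{m+1+i-j}` (for `j ≥ i+1`), we have
for all `w, η ∈ ℂ`:
`p(w)·conj(p(η)) − w·conj(η)·←p(w)·conj(←p(η))
  = (1 − w·conj(η)) · u(w)ᵀ (A Aᴴ − Bᴴ B) v(η)`,
where `u(w) = (1, w, …, w^m)ᵀ` and `v(η) = (1, conj η, …, (conj η)^m)ᵀ`. -/
theorem fejer_riesz_eq_4_17 (m : ℕ) (p : ℕ → ℂ) (w η : ℂ) :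
    (∑ l ∈ Finset.range (m + 1), p l * w ^ l) *
        (starRingEnd ℂ) (∑ l ∈ Finset.range (m + 1), p l * η ^ l) -
      w * (starRingEnd ℂ) η *
        (∑ l ∈ Finset.range (m + 1), (starRingEnd ℂ) (p (m - l)) * w ^ l) *
        (starRingEnd ℂ) (∑ l ∈ Finset.range (m + 1), (starRingEnd ℂ) (p (m - l)) * η ^ l) =
    (1 - w * (starRingEnd ℂ) η) *
      dotProduct (fun i : Fin (m + 1) => w ^ (i : ℕ))
        (Matrix.mulVec
          ((Matrix.of fun i j : Fin (m + 1) =>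
              if (j : ℕ) ≤ (i : ℕ) then p ((i : ℕ) - (j : ℕ)) else 0) *
            (Matrix.of fun i j : Fin (m + 1) =>
              if (j : ℕ) ≤ (i : ℕ) then p ((i : ℕ) - (j : ℕ)) else 0)ᴴ -
           (Matrix.of fun i j : Fin (m + 1) =>
              if (i : ℕ) + 1 ≤ (j : ℕ) then p (m + 1 + (i : ℕ) - (j : ℕ)) else 0)ᴴ *
            (Matrix.of fun i j : Fin (m + 1) =>
              if (i : ℕ) + 1 ≤ (j : ℕ) then p (m + 1 + (i : ℕ) - (j : ℕ)) else 0))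
          (fun j : Fin (m + 1) => ((starRingEnd ℂ) η) ^ (j : ℕ))) := by
  set e : ℂ := (starRingEnd ℂ) η with he
  -- Step I: dot product as explicit triple range sum
  have conv1 : dotProduct (fun i : Fin (m + 1) => w ^ (i : ℕ))
        (Matrix.mulVec
          ((Matrix.of fun i j : Fin (m + 1) =>
              if (j : ℕ) ≤ (i : ℕ) then p ((i : ℕ) - (j : ℕ)) else 0) *
            (Matrix.of fun i j : Fin (m + 1) =>
              if (j : ℕ) ≤ (i : ℕ) then p ((i : ℕ) - (j : ℕ)) else 0)ᴴ -
           (Matrix.of fun i j : Fin (m + 1) =>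
              if (i : ℕ) + 1 ≤ (j : ℕ) then p (m + 1 + (i : ℕ) - (j : ℕ)) else 0)ᴴ *
            (Matrix.of fun i j : Fin (m + 1) =>
              if (i : ℕ) + 1 ≤ (j : ℕ) then p (m + 1 + (i : ℕ) - (j : ℕ)) else 0))
          (fun j : Fin (m + 1) => e ^ (j : ℕ)))
      = ∑ i ∈ range (m+1), w ^ i *
          ∑ j ∈ range (m+1),
            ((∑ k ∈ range (m+1),
                (if k ≤ i then p (i - k) else 0) * star (if k ≤ j then p (j - k) else 0)) -
             ∑ k ∈ range (m+1),
                star (if k + 1 ≤ i then p (m + 1 + k - i) else 0) *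
                  (if k + 1 ≤ j then p (m + 1 + k - j) else 0)) * e ^ j := by
    simp only [dotProduct, Matrix.mulVec, Matrix.sub_apply, Matrix.mul_apply,
      Matrix.conjTranspose_apply, Matrix.of_apply]
    rw [Fin.sum_univ_eq_sum_range (fun i => w ^ i *
      ∑ x_1 : Fin (m+1),
        ((∑ x_2 : Fin (m+1),
            (if (x_2:ℕ) ≤ i then p (i - (x_2:ℕ)) else 0) *
              star (if (x_2:ℕ) ≤ (x_1:ℕ) then p ((x_1:ℕ) - (x_2:ℕ)) else 0)) -
         ∑ x_2 : Fin (m+1),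
            star (if (x_2:ℕ) + 1 ≤ i then p (m + 1 + (x_2:ℕ) - i) else 0) *
              (if (x_2:ℕ) + 1 ≤ (x_1:ℕ) then p (m + 1 + (x_2:ℕ) - (x_1:ℕ)) else 0)) * e ^ (x_1:ℕ))]
    refine Finset.sum_congr rfl fun i _ => ?_
    congr 1
    rw [Fin.sum_univ_eq_sum_range (fun j =>
        ((∑ x_2 : Fin (m+1),
            (if (x_2:ℕ) ≤ i then p (i - (x_2:ℕ)) else 0) *
              star (if (x_2:ℕ) ≤ j then p (j - (x_2:ℕ)) else 0)) -
         ∑ x_2 : Fin (m+1),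
            star (if (x_2:ℕ) + 1 ≤ i then p (m + 1 + (x_2:ℕ) - i) else 0) *
              (if (x_2:ℕ) + 1 ≤ j then p (m + 1 + (x_2:ℕ) - j) else 0)) * e ^ j)]
    refine Finset.sum_congr rfl fun j _ => ?_
    congr 2
    · exact Fin.sum_univ_eq_sum_range (fun k =>
        (if k ≤ i then p (i - k) else 0) * star (if k ≤ j then p (j - k) else 0)) (m+1)
    · exact Fin.sum_univ_eq_sum_range (fun k =>
        star (if k + 1 ≤ i then p (m + 1 + k - i) else 0) *
          (if k + 1 ≤ j then p (m + 1 + k - j) else 0)) (m+1)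
  rw [conv1]
  -- Step II: regroup triple sum with k outermost, factored
  have conv2 : ∑ i ∈ range (m+1), w ^ i *
          ∑ j ∈ range (m+1),
            ((∑ k ∈ range (m+1),
                (if k ≤ i then p (i - k) else 0) * star (if k ≤ j then p (j - k) else 0)) -
             ∑ k ∈ range (m+1),
                star (if k + 1 ≤ i then p (m + 1 + k - i) else 0) *
                  (if k + 1 ≤ j then p (m + 1 + k - j) else 0)) * e ^ j
      = ∑ k ∈ range (m+1),
          ((∑ i ∈ range (m+1), w ^ i * (if k ≤ i then p (i - k) else 0)) *
             (∑ j ∈ range (m+1), star (if k ≤ j then p (j - k) else 0) * e ^ j) -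
           (∑ i ∈ range (m+1), w ^ i * star (if k + 1 ≤ i then p (m + 1 + k - i) else 0)) *
             (∑ j ∈ range (m+1), (if k + 1 ≤ j then p (m + 1 + k - j) else 0) * e ^ j)) := by
    have L : ∀ i ∈ range (m+1), w ^ i *
          ∑ j ∈ range (m+1),
            ((∑ k ∈ range (m+1),
                (if k ≤ i then p (i - k) else 0) * star (if k ≤ j then p (j - k) else 0)) -
             ∑ k ∈ range (m+1),
                star (if k + 1 ≤ i then p (m + 1 + k - i) else 0) *
                  (if k + 1 ≤ j then p (m + 1 + k - j) else 0)) * e ^ j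
        = ∑ k ∈ range (m+1),
            ((∑ j ∈ range (m+1),
               (w ^ i * (if k ≤ i then p (i - k) else 0)) *
                 (star (if k ≤ j then p (j - k) else 0) * e ^ j)) -
             ∑ j ∈ range (m+1),
               (w ^ i * star (if k + 1 ≤ i then p (m + 1 + k - i) else 0)) *
                 ((if k + 1 ≤ j then p (m + 1 + k - j) else 0) * e ^ j)) := by
      intro i _
      rw [Finset.mul_sum]
      have inner : ∀ j ∈ range (m+1), w ^ i *
            (((∑ k ∈ range (m+1),
                (if k ≤ i then p (i - k) else 0) * star (if k ≤ j then p (j - k) else 0)) -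
             ∑ k ∈ range (m+1),
                star (if k + 1 ≤ i then p (m + 1 + k - i) else 0) *
                  (if k + 1 ≤ j then p (m + 1 + k - j) else 0)) * e ^ j)
          = ∑ k ∈ range (m+1),
              ((w ^ i * (if k ≤ i then p (i - k) else 0)) *
                 (star (if k ≤ j then p (j - k) else 0) * e ^ j) -
               (w ^ i * star (if k + 1 ≤ i then p (m + 1 + k - i) else 0)) *
                 ((if k + 1 ≤ j then p (m + 1 + k - j) else 0) * e ^ j)) := by
        intro j _
        rw [sub_mul, mul_sub, Finset.sum_mul, Finset.sum_mul, Finset.mul_sum, Finset.mul_sum,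
          ← Finset.sum_sub_distrib]
        refine Finset.sum_congr rfl fun k _ => ?_
        ring
      rw [Finset.sum_congr rfl inner, Finset.sum_comm]
      exact Finset.sum_congr rfl fun k _ => Finset.sum_sub_distrib _ _
    rw [Finset.sum_congr rfl L, Finset.sum_comm]
    refine Finset.sum_congr rfl fun k _ => ?_
    rw [Finset.sum_sub_distrib]
    congr 1
    · rw [← Finset.sum_mul_sum]
    · rw [← Finset.sum_mul_sum]
  rw [conv2]
  -- Step III: collapse the four factors
  have conv3 : ∀ k ∈ range (m+1),
      ((∑ i ∈ range (m+1), w ^ i * (if k ≤ i then p (i - k) else 0)) *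
         (∑ j ∈ range (m+1), star (if k ≤ j then p (j - k) else 0) * e ^ j) -
       (∑ i ∈ range (m+1), w ^ i * star (if k + 1 ≤ i then p (m + 1 + k - i) else 0)) *
         (∑ j ∈ range (m+1), (if k + 1 ≤ j then p (m + 1 + k - j) else 0) * e ^ j))
    = ((w^k * ∑ s ∈ range (m+1-k), p s * w^s) *
         (e^k * ∑ t ∈ range (m+1-k), (fun l => star (p l)) t * e^t)
     - (w^(k+1) * ∑ s ∈ range (m-k), (fun l => star (p l)) (m-s) * w^s) *
         (e^(k+1) * ∑ t ∈ range (m-k), p (m-t) * e^t)) := by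
    intro k _
    have h2 : ∀ j, star (if k ≤ j then p (j - k) else 0)
        = (if k ≤ j then star (p (j - k)) else 0) := by
      intro j; split_ifs <;> simp
    have h3 : ∀ i, star (if k + 1 ≤ i then p (m + 1 + k - i) else 0)
        = (if k + 1 ≤ i then star (p (m + 1 + k - i)) else 0) := by
      intro i; split_ifs <;> simp
    simp only [h2, h3]
    rw [fac1, fac2 m k (fun l => star (p l)), fac3 m k (fun l => star (p l)), fac4]
  rw [Finset.sum_congr rfl conv3]
  conv_rhs => rw [Finset.mul_sum]
  rw [key_lemma m p (fun l => star (p l)) w e]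
  -- Step IV: identify with the original LHS
  simp only [map_sum, _root_.map_mul, map_pow, Complex.conj_conj, RCLike.star_def, ← he]
  ring
end

section
/- Let p ∈ ℂ[z,w] be a polynomial of degree at most m in w with p(z,w) ≠ 0 whenever |z| = 1 and |w| ≤ 1. Then for every θ ∈ [−π,π]: (a) for every integer l ≥ 1, (1/2π)·∫_{−π}^{π} e^{ilφ}·conj(p(e^{iθ}, e^{iφ})) / |p(e^{iθ}, e^{iφ})|² dφ = 0; and (b) for every integer l with 0 ≤ l ≤ m−1, (1/2π)·∫_{−π}^{π} e^{ilφ}·conj(r_θ(e^{iφ})) / |p(e^{iθ}, e^{iφ})|² dφ = 0, where r_θ(w) = wᵐ·conj(p(e^{iθ}, 1/conj(w))) is the reverse in w of the one-variable polynomial w ↦ p(e^{iθ}, w). -/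
open MvPolynomial

open Complex MeasureTheory Metric in
private lemma conj_intervalIntegral (f : ℝ → ℂ) (a b : ℝ) :
    ∫ x in a..b, (starRingEnd ℂ) (f x) = (starRingEnd ℂ) (∫ x in a..b, f x) := by
  rw [intervalIntegral, intervalIntegral, integral_conj, integral_conj, map_sub]

open Complex MeasureTheory Metric in
private lemma key_integral (F : ℂ → ℂ) (hF : Differentiable ℂ F)
    (hQ : ∀ w : ℂ, Norm.norm w ≤ 1 → F w ≠ 0) (k : ℕ) (hk : 1 ≤ k) :
    ∫ φ : ℝ in (-Real.pi)..Real.pi,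
      Complex.exp ((φ : ℂ) * Complex.I) ^ k / F (Complex.exp ((φ : ℂ) * Complex.I)) = 0 := by
  set g : ℝ → ℂ := fun φ =>
    Complex.exp ((φ : ℂ) * Complex.I) ^ k / F (Complex.exp ((φ : ℂ) * Complex.I)) with hg
  have hexpper : ∀ x : ℝ,
      Complex.exp ((↑(x + 2 * Real.pi) : ℂ) * Complex.I) = Complex.exp ((x : ℂ) * Complex.I) := by
    intro x
    push_cast
    rw [add_mul, Complex.exp_add, Complex.exp_two_pi_mul_I, mul_one]
  have hper : Function.Periodic g (2 * Real.pi) := by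
    intro x
    simp only [g, hexpper]
  have h1 : ∫ φ in (-Real.pi)..Real.pi, g φ = ∫ φ in (0 : ℝ)..(2 * Real.pi), g φ := by
    have h2 := hper.intervalIntegral_add_eq (-Real.pi) 0
    rw [show -Real.pi + 2 * Real.pi = Real.pi by ring, zero_add] at h2
    exact h2
  have hcont : ContinuousOn (fun z : ℂ => z ^ (k - 1) / F z) (closedBall 0 1) := by
    apply ContinuousOn.div
    · exact (continuous_pow _).continuousOn
    · exact hF.continuous.continuousOn
    · intro z hz
      exact hQ z (by simpa using mem_closedBall_zero_iff.mp hz)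
  have hdiff : ∀ z ∈ ball (0 : ℂ) 1 \ (∅ : Set ℂ),
      DifferentiableAt ℂ (fun z : ℂ => z ^ (k - 1) / F z) z := by
    intro z hz
    have hz1 : Norm.norm z ≤ 1 :=
      le_of_lt (by simpa using mem_ball_zero_iff.mp hz.1)
    exact (differentiableAt_pow _).div (hF z) (hQ z hz1)
  have hcirc : (∮ z in C((0 : ℂ), 1), z ^ (k - 1) / F z) = 0 :=
    circleIntegral_eq_zero_of_differentiable_on_off_countable zero_le_one
      Set.countable_empty hcont hdiff
  have hcirc' : (∮ z in C((0 : ℂ), 1), z ^ (k - 1) / F z)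
      = ∫ θ in (0 : ℝ)..(2 * Real.pi), Complex.I * g θ := by
    rw [circleIntegral]
    apply intervalIntegral.integral_congr
    intro θ _
    simp only [deriv_circleMap, circleMap, zero_add, one_mul, Complex.ofReal_one, smul_eq_mul, g]
    have hpow : Complex.exp ((θ : ℂ) * Complex.I) * Complex.exp ((θ : ℂ) * Complex.I) ^ (k - 1)
        = Complex.exp ((θ : ℂ) * Complex.I) ^ k := by
      rw [← pow_succ']
      congr 1
      omega
    rw [div_eq_mul_inv, div_eq_mul_inv, ← hpow]
    ring
  have hzero : Complex.I * ∫ θ in (0 : ℝ)..(2 * Real.pi), g θ = 0 := by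
    rw [← intervalIntegral.integral_const_mul, ← hcirc', hcirc]
  rw [h1]
  rcases mul_eq_zero.mp hzero with h | h
  · exact absurd h Complex.I_ne_zero
  · exact h

/-- **Fejér–Riesz paper, Lemma 4.1.**
Let `p ∈ ℂ[z,w]` have degree at most `m` in `w` and satisfy `p(z,w) ≠ 0` whenever `|z| = 1`
and `|w| ≤ 1`. Then for every `θ ∈ [-π, π]`:
(a) for every integer `l ≥ 1`,
`(1/2π)·∫_{-π}^{π} e^{ilφ}·conj(p(e^{iθ}, e^{iφ})) / |p(e^{iθ}, e^{iφ})|² dφ = 0`;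
(b) for every `0 ≤ l ≤ m - 1`,
`(1/2π)·∫_{-π}^{π} e^{ilφ}·conj(r_θ(e^{iφ})) / |p(e^{iθ}, e^{iφ})|² dφ = 0`,
where `r_θ(w) = wᵐ·conj(p(e^{iθ}, 1/conj w))` is the reverse in `w` of `w ↦ p(e^{iθ}, w)`. -/
theorem fejer_riesz_lemma_4_1 (m : ℕ) (p : MvPolynomial (Fin 2) ℂ)
    (hdeg : ∀ d ∈ p.support, d 1 ≤ m)
    (hp : ∀ z w : ℂ, Norm.norm z = 1 → Norm.norm w ≤ 1 → eval ![z, w] p ≠ 0)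
    (θ : ℝ) (hθ : θ ∈ Set.Icc (-Real.pi) Real.pi) :
    (∀ l : ℤ, 1 ≤ l →
      (1 / (2 * (Real.pi : ℂ))) *
        ∫ φ : ℝ in (-Real.pi)..Real.pi,
          Complex.exp ((l : ℂ) * (φ : ℂ) * Complex.I) *
            (starRingEnd ℂ)
              (eval ![Complex.exp ((θ : ℂ) * Complex.I),
                      Complex.exp ((φ : ℂ) * Complex.I)] p) /
            ((Norm.norm
              (eval ![Complex.exp ((θ : ℂ) * Complex.I),
                      Complex.exp ((φ : ℂ) * Complex.I)] p) : ℂ)) ^ 2 = 0) ∧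
    (∀ l : ℕ, l < m →
      (1 / (2 * (Real.pi : ℂ))) *
        ∫ φ : ℝ in (-Real.pi)..Real.pi,
          Complex.exp ((l : ℂ) * (φ : ℂ) * Complex.I) *
            (starRingEnd ℂ)
              ((Complex.exp ((φ : ℂ) * Complex.I)) ^ m *
                (starRingEnd ℂ)
                  (eval ![Complex.exp ((θ : ℂ) * Complex.I),
                          1 / (starRingEnd ℂ) (Complex.exp ((φ : ℂ) * Complex.I))] p)) /
            ((Norm.norm
              (eval ![Complex.exp ((θ : ℂ) * Complex.I),
                      Complex.exp ((φ : ℂ) * Complex.I)] p) : ℂ)) ^ 2 = 0) := by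
  set z₀ : ℂ := Complex.exp ((θ : ℂ) * Complex.I) with hz₀def
  have hz₀ : Norm.norm z₀ = 1 := Complex.norm_exp_ofReal_mul_I θ
  have hFdiff : Differentiable ℂ (fun w => eval ![z₀, w] p) := by
    have hFeq : (fun w => eval ![z₀, w] p)
        = fun w => ∑ d ∈ p.support, MvPolynomial.coeff d p * (z₀ ^ (d 0) * w ^ (d 1)) := by
      funext w
      rw [MvPolynomial.eval_eq']
      apply Finset.sum_congr rfl
      intro d _
      rw [Fin.prod_univ_two]
      simp
    rw [hFeq]
    apply Differentiable.fun_sum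
    intro d _
    exact ((differentiable_pow _).const_mul _).const_mul _
  have hF0 : ∀ w : ℂ, Norm.norm w ≤ 1 → eval ![z₀, w] p ≠ 0 := fun w hw => hp z₀ w hz₀ hw
  have hkey : ∀ k : ℕ, 1 ≤ k →
      ∫ φ : ℝ in (-Real.pi)..Real.pi,
        Complex.exp ((φ : ℂ) * Complex.I) ^ k /
          eval ![z₀, Complex.exp ((φ : ℂ) * Complex.I)] p = 0 :=
    fun k hk => key_integral (fun w => eval ![z₀, w] p) hFdiff hF0 k hk
  constructor
  · -- part (a)
    intro l hl
    have hl0 : 1 ≤ l.toNat := by omega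
    have heq : ∀ φ : ℝ,
        Complex.exp ((l : ℂ) * (φ : ℂ) * Complex.I) *
            (starRingEnd ℂ) (eval ![z₀, Complex.exp ((φ : ℂ) * Complex.I)] p) /
            ((Norm.norm (eval ![z₀, Complex.exp ((φ : ℂ) * Complex.I)] p) : ℂ)) ^ 2
          = Complex.exp ((φ : ℂ) * Complex.I) ^ l.toNat /
              eval ![z₀, Complex.exp ((φ : ℂ) * Complex.I)] p := by
      intro φ
      have hPne : eval ![z₀, Complex.exp ((φ : ℂ) * Complex.I)] p ≠ 0 :=
        hF0 _ (le_of_eq (Complex.norm_exp_ofReal_mul_I φ))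
      set P := eval ![z₀, Complex.exp ((φ : ℂ) * Complex.I)] p with hP
      have hconjne : (starRingEnd ℂ) P ≠ 0 := by simpa using hPne
      have habs : ((Norm.norm P : ℂ)) ^ 2 = P * (starRingEnd ℂ) P := by
        rw [Complex.mul_conj, ← Complex.sq_norm]; push_cast; ring
      have hexp : Complex.exp ((l : ℂ) * (φ : ℂ) * Complex.I)
          = Complex.exp ((φ : ℂ) * Complex.I) ^ l.toNat := by
        lift l to ℕ using (by omega : 0 ≤ l) with k
        rw [mul_assoc, Complex.exp_int_mul, zpow_natCast, Int.toNat_natCast]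
      rw [habs, hexp]
      field_simp
    have hint : (∫ φ : ℝ in (-Real.pi)..Real.pi,
          Complex.exp ((l : ℂ) * (φ : ℂ) * Complex.I) *
            (starRingEnd ℂ) (eval ![z₀, Complex.exp ((φ : ℂ) * Complex.I)] p) /
            ((Norm.norm (eval ![z₀, Complex.exp ((φ : ℂ) * Complex.I)] p) : ℂ)) ^ 2)
        = ∫ φ : ℝ in (-Real.pi)..Real.pi,
            Complex.exp ((φ : ℂ) * Complex.I) ^ l.toNat /
              eval ![z₀, Complex.exp ((φ : ℂ) * Complex.I)] p :=
      intervalIntegral.integral_congr (fun φ _ => heq φ)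
    rw [hint, hkey l.toNat hl0, mul_zero]
  · -- part (b)
    intro l hl
    have hl0 : 1 ≤ m - l := by omega
    have heq : ∀ φ : ℝ,
        Complex.exp ((l : ℂ) * (φ : ℂ) * Complex.I) *
            (starRingEnd ℂ) ((Complex.exp ((φ : ℂ) * Complex.I)) ^ m *
              (starRingEnd ℂ)
                (eval ![z₀, 1 / (starRingEnd ℂ) (Complex.exp ((φ : ℂ) * Complex.I))] p)) /
            ((Norm.norm (eval ![z₀, Complex.exp ((φ : ℂ) * Complex.I)] p) : ℂ)) ^ 2
          = (starRingEnd ℂ) (Complex.exp ((φ : ℂ) * Complex.I) ^ (m - l) /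
              eval ![z₀, Complex.exp ((φ : ℂ) * Complex.I)] p) := by
      intro φ
      have h1u : 1 / (starRingEnd ℂ) (Complex.exp ((φ : ℂ) * Complex.I))
          = Complex.exp ((φ : ℂ) * Complex.I) := by
        rw [← Complex.exp_conj,
          show (starRingEnd ℂ) ((φ : ℂ) * Complex.I) = -((φ : ℂ) * Complex.I) by simp,
          Complex.exp_neg, one_div, inv_inv]
      rw [h1u]
      have hPne : eval ![z₀, Complex.exp ((φ : ℂ) * Complex.I)] p ≠ 0 :=
        hF0 _ (le_of_eq (Complex.norm_exp_ofReal_mul_I φ))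
      set u := Complex.exp ((φ : ℂ) * Complex.I) with hu
      set P := eval ![z₀, u] p with hP
      have hu1 : Norm.norm u = 1 := Complex.norm_exp_ofReal_mul_I φ
      have hune : u ≠ 0 := by
        intro h; rw [h] at hu1; simp at hu1
      have hconju : (starRingEnd ℂ) u = u⁻¹ := by
        refine eq_inv_of_mul_eq_one_left ?_
        rw [mul_comm, Complex.mul_conj, Complex.normSq_eq_norm_sq, hu1]; norm_num
      have hconjne : (starRingEnd ℂ) P ≠ 0 := by simpa using hPne
      have habs : ((Norm.norm P : ℂ)) ^ 2 = P * (starRingEnd ℂ) P := by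
        rw [Complex.mul_conj, ← Complex.sq_norm]; push_cast; ring
      have hexp : Complex.exp ((l : ℂ) * (φ : ℂ) * Complex.I) = u ^ l := by
        rw [mul_assoc, Complex.exp_nat_mul, ← hu]
      rw [habs, hexp]
      simp only [map_mul, map_pow, Complex.conj_conj, map_div₀]
      rw [hconju]
      set a := m - l with ha
      have hma : m = a + l := by omega
      rw [hma, pow_add]
      field_simp
      ring_nf
      rw [inv_pow, mul_inv_cancel₀ (pow_ne_zero _ hune)]
    have hint : (∫ φ : ℝ in (-Real.pi)..Real.pi,
          Complex.exp ((l : ℂ) * (φ : ℂ) * Complex.I) *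
            (starRingEnd ℂ) ((Complex.exp ((φ : ℂ) * Complex.I)) ^ m *
              (starRingEnd ℂ)
                (eval ![z₀, 1 / (starRingEnd ℂ) (Complex.exp ((φ : ℂ) * Complex.I))] p)) /
            ((Norm.norm (eval ![z₀, Complex.exp ((φ : ℂ) * Complex.I)] p) : ℂ)) ^ 2)
        = ∫ φ : ℝ in (-Real.pi)..Real.pi,
            (starRingEnd ℂ) (Complex.exp ((φ : ℂ) * Complex.I) ^ (m - l) /
              eval ![z₀, Complex.exp ((φ : ℂ) * Complex.I)] p) :=
      intervalIntegral.integral_congr (fun φ _ => heq φ)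
    rw [hint, conj_intervalIntegral, hkey (m - l) hl0, map_zero, mul_zero]
end

section
/- Let p ∈ ℂ[z,w] be a polynomial of degree at most (n,m) with p(z,w) ≠ 0 whenever |z| ≤ 1 and |w| ≤ 1. Then for every integer k ∈ ℤ and every integer l ≥ 1: (1/4π²)·∫∫_{[−π,π]²} p(e^{iθ}, e^{iφ})·e^{−ikθ}·e^{−ilφ} / |p(e^{iθ}, e^{iφ})|² dθ dφ = 0. -/
open MvPolynomial

private lemma eval_pair_differentiable (q : MvPolynomial (Fin 2) ℂ) (z : ℂ) :
    Differentiable ℂ fun w : ℂ => eval ![z, w] q := by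
  induction q using MvPolynomial.induction_on with
  | C a => simpa using differentiable_const (a : ℂ)
  | add p₁ p₂ h1 h2 => simp only [map_add]; exact h1.add h2
  | mul_X r i h =>
    simp only [map_mul, eval_X]
    refine h.mul ?_
    fin_cases i
    · simpa using differentiable_const z
    · simpa using differentiable_id

private lemma conj_exp_real_mul_I (x : ℝ) :
    (starRingEnd ℂ) (Complex.exp ((x : ℂ) * Complex.I)) =
      Complex.exp ((((-x : ℝ)) : ℂ) * Complex.I) := by
  rw [← Complex.exp_conj]
  congr 1
  rw [map_mul, Complex.conj_ofReal, Complex.conj_I]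
  push_cast
  ring

/-- **Fejér–Riesz paper, Lemma 5.1, equation (5.6a).**
Let `p ∈ ℂ[z,w]` be a polynomial of degree at most `(n,m)` which is stable (nonzero for
`|z| ≤ 1` and `|w| ≤ 1`). Then for every `k ∈ ℤ` and every integer `l ≥ 1`:
`(1/4π²)·∫∫_{[-π,π]²} p(e^{iθ},e^{iφ})·e^{-ikθ}·e^{-ilφ} / |p(e^{iθ},e^{iφ})|² dθ dφ = 0`. -/
theorem fejer_riesz_eq_5_6a (n m : ℕ) (p : MvPolynomial (Fin 2) ℂ)
    (hdeg : ∀ d ∈ p.support, d 0 ≤ n ∧ d 1 ≤ m)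
    (hp : ∀ z w : ℂ, ‖z‖ ≤ 1 → ‖w‖ ≤ 1 → eval ![z, w] p ≠ 0)
    (k l : ℤ) (hl : 1 ≤ l) :
    (1 / (4 * (Real.pi : ℂ) ^ 2)) *
      ∫ θ : ℝ in (-Real.pi)..Real.pi, ∫ φ : ℝ in (-Real.pi)..Real.pi,
        eval ![Complex.exp ((θ : ℂ) * Complex.I),
               Complex.exp ((φ : ℂ) * Complex.I)] p *
            Complex.exp (-(k : ℂ) * (θ : ℂ) * Complex.I) *
            Complex.exp (-(l : ℂ) * (φ : ℂ) * Complex.I) /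
          (((‖eval ![Complex.exp ((θ : ℂ) * Complex.I),
                  Complex.exp ((φ : ℂ) * Complex.I)] p‖ : ℝ) : ℂ)) ^ 2 = 0 := by
  classical
  set q : MvPolynomial (Fin 2) ℂ := MvPolynomial.map (starRingEnd ℂ) p with hqdef
  -- conjugation commutes with evaluation
  have hconj : ∀ x : Fin 2 → ℂ,
      (starRingEnd ℂ) (eval x p) = eval (fun i => (starRingEnd ℂ) (x i)) q := by
    intro x
    rw [hqdef, eval_map]
    have h1 : eval x p = eval₂ (RingHom.id ℂ) x p := rfl
    rw [h1, eval₂_comp_left (starRingEnd ℂ) (RingHom.id ℂ) x p]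
    rfl
  -- q is stable as well
  have hq : ∀ z w : ℂ, ‖z‖ ≤ 1 → ‖w‖ ≤ 1 → eval ![z, w] q ≠ 0 := by
    intro z w hz hw
    have hx := hconj ![(starRingEnd ℂ) z, (starRingEnd ℂ) w]
    have h3 : (fun i => (starRingEnd ℂ) (![(starRingEnd ℂ) z, (starRingEnd ℂ) w] i)) = ![z, w] := by
      funext i; fin_cases i <;> simp
    rw [h3] at hx
    rw [← hx]
    simp only [ne_eq, map_eq_zero]
    exact hp _ _ (by simpa using hz) (by simpa using hw)
  -- the inner integral vanishes for every θ
  have hinner : ∀ θ : ℝ, (∫ φ : ℝ in (-Real.pi)..Real.pi,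
        eval ![Complex.exp ((θ : ℂ) * Complex.I),
               Complex.exp ((φ : ℂ) * Complex.I)] p *
            Complex.exp (-(k : ℂ) * (θ : ℂ) * Complex.I) *
            Complex.exp (-(l : ℂ) * (φ : ℂ) * Complex.I) /
          (((‖eval ![Complex.exp ((θ : ℂ) * Complex.I),
                  Complex.exp ((φ : ℂ) * Complex.I)] p‖ : ℝ) : ℂ)) ^ 2) = 0 := by
    intro θ
    set z₀ : ℂ := (starRingEnd ℂ) (Complex.exp ((θ : ℂ) * Complex.I)) with hz₀
    have hz₀abs : ‖z₀‖ = 1 := by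
      rw [hz₀, Complex.norm_conj, Complex.norm_exp_ofReal_mul_I]
    set l' : ℕ := (l - 1).toNat with hl'def
    have hl'c : ((l' : ℕ) : ℂ) = (l : ℂ) - 1 := by
      have h : ((l' : ℤ)) = l - 1 := Int.toNat_of_nonneg (by omega)
      exact_mod_cast congrArg (fun t : ℤ => (t : ℂ)) h
    set h : ℝ → ℂ := fun φ =>
      Complex.exp ((l : ℂ) * (φ : ℂ) * Complex.I) /
        eval ![z₀, Complex.exp ((φ : ℂ) * Complex.I)] q with hh
    -- step 1 : pointwise identity for the integrand
    have hstep : ∀ φ : ℝ,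
        eval ![Complex.exp ((θ : ℂ) * Complex.I),
               Complex.exp ((φ : ℂ) * Complex.I)] p *
            Complex.exp (-(k : ℂ) * (θ : ℂ) * Complex.I) *
            Complex.exp (-(l : ℂ) * (φ : ℂ) * Complex.I) /
          (((‖eval ![Complex.exp ((θ : ℂ) * Complex.I),
                  Complex.exp ((φ : ℂ) * Complex.I)] p‖ : ℝ) : ℂ)) ^ 2
          = Complex.exp (-(k : ℂ) * (θ : ℂ) * Complex.I) * h (-φ) := by
      intro φ
      set P : ℂ := eval ![Complex.exp ((θ : ℂ) * Complex.I),
        Complex.exp ((φ : ℂ) * Complex.I)] p with hPdef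
      have hP : P ≠ 0 := hp _ _ (le_of_eq (Complex.norm_exp_ofReal_mul_I θ))
        (le_of_eq (Complex.norm_exp_ofReal_mul_I φ))
      have hPc : (starRingEnd ℂ) P ≠ 0 := by
        simpa using hP
      have habs : (((‖P‖ : ℝ) : ℂ)) ^ 2 = P * (starRingEnd ℂ) P := by
        rw [← Complex.ofReal_pow, Complex.sq_norm, Complex.mul_conj]
      have hcP : (starRingEnd ℂ) P = eval ![z₀, Complex.exp ((((-φ : ℝ)) : ℂ) * Complex.I)] q := by
        rw [hPdef, hconj]
        have hfun : (fun i => (starRingEnd ℂ)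
              (![Complex.exp ((θ : ℂ) * Complex.I), Complex.exp ((φ : ℂ) * Complex.I)] i))
            = ![z₀, Complex.exp ((((-φ : ℝ)) : ℂ) * Complex.I)] := by
          funext i
          fin_cases i
          · simp [hz₀]
          · simpa using conj_exp_real_mul_I φ
        rw [hfun]
      have hexp2 : Complex.exp ((l : ℂ) * (((-φ : ℝ)) : ℂ) * Complex.I)
          = Complex.exp (-(l : ℂ) * (φ : ℂ) * Complex.I) := by
        congr 1; push_cast; ring
      have hval : h (-φ)
          = Complex.exp (-(l : ℂ) * (φ : ℂ) * Complex.I) / (starRingEnd ℂ) P := by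
        rw [hh]
        simp only []
        rw [hcP, hexp2]
      rw [hval, habs]
      field_simp
    -- step 2 : reduce to ∫₀^{2π} h = 0
    have hper : Function.Periodic h (2 * Real.pi) := by
      intro x
      rw [hh]
      simp only []
      have e1 : ((l : ℂ) * ((x + 2 * Real.pi : ℝ) : ℂ) * Complex.I)
          = (l : ℂ) * (x : ℂ) * Complex.I + (l : ℂ) * (2 * Real.pi * Complex.I) := by
        push_cast; ring
      have e2 : (((x + 2 * Real.pi : ℝ)) : ℂ) * Complex.I
          = (x : ℂ) * Complex.I + 2 * Real.pi * Complex.I := by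
        push_cast; ring
      rw [e1, e2, Complex.exp_add, Complex.exp_add, Complex.exp_int_mul_two_pi_mul_I,
        Complex.exp_two_pi_mul_I, mul_one, mul_one]
    -- denominator of f is nonvanishing on the closed unit disc
    have hD : ∀ w : ℂ, w ∈ Metric.closedBall (0 : ℂ) 1 → eval ![z₀, w] q ≠ 0 := by
      intro w hw
      refine hq z₀ w (le_of_eq hz₀abs) ?_
      rw [Metric.mem_closedBall, dist_zero_right] at hw
      simpa using hw
    have hd : Differentiable ℂ fun w => eval ![z₀, w] q := eval_pair_differentiable q z₀
    -- Cauchy's theorem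
    have hf0 : (∮ z in C(0, 1), z ^ l' / eval ![z₀, z] q) = 0 := by
      refine Complex.circleIntegral_eq_zero_of_differentiable_on_off_countable zero_le_one
        Set.countable_empty ?_ ?_
      · exact ((differentiable_pow (𝕜 := ℂ) l').continuous.continuousOn).div
          hd.continuous.continuousOn (fun w hw => hD w hw)
      · intro w hw
        exact ((differentiable_pow (𝕜 := ℂ) l') w).div (hd w)
          (hD w (Metric.ball_subset_closedBall hw.1))
    have hcirc : (∮ z in C(0, 1), z ^ l' / eval ![z₀, z] q)
        = Complex.I * ∫ φ in (0 : ℝ)..2 * Real.pi, h φ := by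
      rw [← intervalIntegral.integral_const_mul]
      simp only [circleIntegral, deriv_circleMap, circleMap_zero, one_mul, smul_eq_mul,
        Complex.ofReal_one, one_pow]
      apply intervalIntegral.integral_congr
      intro φ _
      rw [hh]
      simp only []
      have hc : ((l' + 1 : ℕ) : ℂ) = (l : ℂ) := by push_cast [hl'c]; ring
      have hexp : Complex.exp ((φ : ℂ) * Complex.I) ^ (l' + 1)
          = Complex.exp ((l : ℂ) * (φ : ℂ) * Complex.I) := by
        rw [← Complex.exp_nat_mul]
        congr 1
        rw [hc]; ring
      rw [← hexp]
      ring
    have hI2 : (∫ φ in (0 : ℝ)..2 * Real.pi, h φ) = 0 := by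
      have := hcirc.symm.trans hf0
      exact (mul_eq_zero.mp this).resolve_left Complex.I_ne_zero
    have hshift : (∫ φ in (-Real.pi)..Real.pi, h φ) = ∫ φ in (0 : ℝ)..2 * Real.pi, h φ := by
      have := hper.intervalIntegral_add_eq (-Real.pi) 0
      rw [show -Real.pi + 2 * Real.pi = Real.pi by ring, zero_add] at this
      exact this
    have hneg : (∫ φ in (-Real.pi)..Real.pi, h (-φ)) = ∫ φ in (-Real.pi)..Real.pi, h φ := by
      simpa using intervalIntegral.integral_comp_neg (a := -Real.pi) (b := Real.pi) h
    calc
      _ = ∫ φ : ℝ in (-Real.pi)..Real.pi,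
            Complex.exp (-(k : ℂ) * (θ : ℂ) * Complex.I) * h (-φ) :=
        intervalIntegral.integral_congr (fun φ _ => hstep φ)
      _ = Complex.exp (-(k : ℂ) * (θ : ℂ) * Complex.I)
            * ∫ φ : ℝ in (-Real.pi)..Real.pi, h (-φ) :=
        intervalIntegral.integral_const_mul _ _
      _ = 0 := by rw [hneg, hshift, hI2, mul_zero]
  have hz : (∫ θ : ℝ in (-Real.pi)..Real.pi, ∫ φ : ℝ in (-Real.pi)..Real.pi,
        eval ![Complex.exp ((θ : ℂ) * Complex.I),
               Complex.exp ((φ : ℂ) * Complex.I)] p *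
            Complex.exp (-(k : ℂ) * (θ : ℂ) * Complex.I) *
            Complex.exp (-(l : ℂ) * (φ : ℂ) * Complex.I) /
          (((‖eval ![Complex.exp ((θ : ℂ) * Complex.I),
                  Complex.exp ((φ : ℂ) * Complex.I)] p‖ : ℝ) : ℂ)) ^ 2) = 0 := by
    rw [intervalIntegral.integral_congr (g := fun _ : ℝ => (0 : ℂ)) (fun θ _ => hinner θ)]
    simp
  rw [hz, mul_zero]
end

section
/- Let p ∈ ℂ[z,w] be a polynomial of degree at most (n,m) with p(z,w) ≠ 0 whenever |z| ≤ 1 and |w| ≤ 1, and let ←p(z,w) = zⁿwᵐ·conj(p(1/conj(z), 1/conj(w))) be its reverse polynomial. Then for every integer k < n and every integer l ∈ ℤ: (1/4π²)·∫∫_{[−π,π]²} ←p(e^{iθ}, e^{iφ})·e^{−ikθ}·e^{−ilφ} / |p(e^{iθ}, e^{iφ})|² dθ dφ = 0. -/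
open MvPolynomial

private lemma aux_diff (p : MvPolynomial (Fin 2) ℂ) (w : ℂ) :
    Differentiable ℂ fun z : ℂ => eval ![z, w] p := by
  have h : (fun z : ℂ => eval ![z, w] p)
      = fun z : ℂ => ∑ d ∈ p.support, coeff d p * (z ^ d 0 * w ^ d 1) := by
    funext z
    rw [eval_eq']
    refine Finset.sum_congr rfl fun d _ => ?_
    rw [Fin.prod_univ_two]
    simp
  rw [h]
  exact Differentiable.fun_sum fun d _ =>
    ((differentiable_pow _).mul_const _).const_mul _

private lemma aux_cauchy (p : MvPolynomial (Fin 2) ℂ)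
    (hp : ∀ z w : ℂ, ‖z‖ ≤ 1 → ‖w‖ ≤ 1 → eval ![z, w] p ≠ 0)
    (w : ℂ) (hw : ‖w‖ ≤ 1) (N : ℕ) (hN : 1 ≤ N) :
    ∫ θ : ℝ in (-Real.pi)..Real.pi,
      Complex.exp ((N : ℂ) * (θ : ℂ) * Complex.I) /
        eval ![Complex.exp ((θ : ℂ) * Complex.I), w] p = 0 := by
  set f : ℂ → ℂ := fun z => z ^ (N - 1) / eval ![z, w] p with hf
  have hdiff : ∀ z ∈ Metric.closedBall (0 : ℂ) 1, DifferentiableAt ℂ f z := by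
    intro z hz
    have hz1 : ‖z‖ ≤ 1 := by
      simpa using mem_closedBall_zero_iff.mp hz
    exact (differentiableAt_pow _).div ((aux_diff p w).differentiableAt)
      (hp z w hz1 hw)
  have hcirc : (∮ z in C(0, 1), f z) = 0 :=
    Complex.circleIntegral_eq_zero_of_differentiable_on_off_countable zero_le_one
      Set.countable_empty
      (fun z hz => (hdiff z hz).continuousAt.continuousWithinAt)
      (fun z hz => hdiff z (Metric.ball_subset_closedBall hz.1))
  have h2 : ∫ θ : ℝ in (0:ℝ)..(2 * Real.pi),
      Complex.exp ((N : ℂ) * (θ : ℂ) * Complex.I) /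
        eval ![Complex.exp ((θ : ℂ) * Complex.I), w] p = 0 := by
    rw [circleIntegral] at hcirc
    simp only [deriv_circleMap, circleMap, Complex.ofReal_one, zero_add, one_mul,
      smul_eq_mul] at hcirc
    have heq : Set.EqOn
        (fun θ : ℝ => Complex.exp ((θ:ℂ) * Complex.I) * Complex.I * f (Complex.exp ((θ:ℂ) * Complex.I)))
        (fun θ : ℝ => Complex.I * (Complex.exp ((N : ℂ) * (θ : ℂ) * Complex.I) /
          eval ![Complex.exp ((θ : ℂ) * Complex.I), w] p))
        (Set.uIcc 0 (2 * Real.pi)) := by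
      intro θ _
      have hpow : Complex.exp ((θ:ℂ) * Complex.I) *
          (Complex.exp ((θ:ℂ) * Complex.I)) ^ (N - 1)
          = Complex.exp ((N : ℂ) * (θ : ℂ) * Complex.I) := by
        rw [← pow_succ', Nat.sub_add_cancel hN, ← Complex.exp_nat_mul]
        ring_nf
      simp only [hf]
      rw [mul_comm (Complex.exp ((θ:ℂ) * Complex.I)) Complex.I, mul_assoc, ← hpow]
      ring
    rw [intervalIntegral.integral_congr heq, intervalIntegral.integral_const_mul] at hcirc
    exact (mul_eq_zero.mp hcirc).resolve_left Complex.I_ne_zero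
  have hper : Function.Periodic
      (fun θ : ℝ => Complex.exp ((N : ℂ) * (θ : ℂ) * Complex.I) /
        eval ![Complex.exp ((θ : ℂ) * Complex.I), w] p) (2 * Real.pi) := by
    intro θ
    have h1 : Complex.exp ((((θ + 2 * Real.pi) : ℝ) : ℂ) * Complex.I)
        = Complex.exp ((θ : ℂ) * Complex.I) := by
      push_cast
      rw [add_mul, Complex.exp_add, Complex.exp_two_pi_mul_I, mul_one]
    have h2' : Complex.exp ((N : ℂ) * (((θ + 2 * Real.pi) : ℝ) : ℂ) * Complex.I)
        = Complex.exp ((N : ℂ) * (θ : ℂ) * Complex.I) := by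
      push_cast
      rw [mul_add, add_mul, Complex.exp_add]
      have h3 : (N : ℂ) * (2 * (Real.pi : ℂ)) * Complex.I
          = ((N : ℤ) : ℂ) * (2 * (Real.pi : ℂ) * Complex.I) := by push_cast; ring
      rw [h3, Complex.exp_int_mul_two_pi_mul_I, mul_one]
    simp only [h1, h2']
  have hiv : (-Real.pi) + 2 * Real.pi = Real.pi := by ring
  calc ∫ θ : ℝ in (-Real.pi)..Real.pi,
      Complex.exp ((N : ℂ) * (θ : ℂ) * Complex.I) /
        eval ![Complex.exp ((θ : ℂ) * Complex.I), w] p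
      = ∫ θ : ℝ in (-Real.pi)..(-Real.pi + 2 * Real.pi),
        Complex.exp ((N : ℂ) * (θ : ℂ) * Complex.I) /
          eval ![Complex.exp ((θ : ℂ) * Complex.I), w] p := by rw [hiv]
    _ = ∫ θ : ℝ in (0:ℝ)..(0 + 2 * Real.pi),
        Complex.exp ((N : ℂ) * (θ : ℂ) * Complex.I) /
          eval ![Complex.exp ((θ : ℂ) * Complex.I), w] p :=
        hper.intervalIntegral_add_eq (-Real.pi) 0
    _ = 0 := by rw [zero_add]; exact h2

/-- **Fejér–Riesz paper, Lemma 5.1, equation (5.6b).**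
Let `p ∈ ℂ[z,w]` be a polynomial of degree at most `(n,m)` which is stable (nonzero for
`|z| ≤ 1` and `|w| ≤ 1`), and let `revp` be its reverse polynomial, characterized by
`revp(z,w) = zⁿwᵐ·conj(p(1/conj z, 1/conj w))` for `z, w ≠ 0`. Then for every integer
`k < n` and every `l ∈ ℤ`:
`(1/4π²)·∫∫_{[-π,π]²} revp(e^{iθ},e^{iφ})·e^{-ikθ}·e^{-ilφ} / |p(e^{iθ},e^{iφ})|² dθ dφ = 0`. -/
theorem fejer_riesz_eq_5_6b (n m : ℕ) (p revp : MvPolynomial (Fin 2) ℂ)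
    (hdeg : ∀ d ∈ p.support, d 0 ≤ n ∧ d 1 ≤ m)
    (hp : ∀ z w : ℂ, ‖z‖ ≤ 1 → ‖w‖ ≤ 1 → eval ![z, w] p ≠ 0)
    (hrev : ∀ z w : ℂ, z ≠ 0 → w ≠ 0 →
      eval ![z, w] revp =
        z ^ n * w ^ m *
          (starRingEnd ℂ) (eval ![1 / (starRingEnd ℂ) z, 1 / (starRingEnd ℂ) w] p))
    (k l : ℤ) (hk : k < (n : ℤ)) :
    (1 / (4 * (Real.pi : ℂ) ^ 2)) *
      ∫ θ : ℝ in (-Real.pi)..Real.pi, ∫ φ : ℝ in (-Real.pi)..Real.pi,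
        eval ![Complex.exp ((θ : ℂ) * Complex.I),
               Complex.exp ((φ : ℂ) * Complex.I)] revp *
            Complex.exp (-(k : ℂ) * (θ : ℂ) * Complex.I) *
            Complex.exp (-(l : ℂ) * (φ : ℂ) * Complex.I) /
          ((‖(eval ![Complex.exp ((θ : ℂ) * Complex.I),
                  Complex.exp ((φ : ℂ) * Complex.I)] p)‖ : ℂ)) ^ 2 = 0 := by
  have habs : ∀ θ : ℝ, ‖Complex.exp ((θ : ℂ) * Complex.I)‖ = 1 :=
    fun θ => Complex.norm_exp_ofReal_mul_I θ
  have hne : ∀ θ : ℝ, Complex.exp ((θ : ℂ) * Complex.I) ≠ 0 :=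
    fun θ => Complex.exp_ne_zero _
  have hconj : ∀ θ : ℝ, 1 / (starRingEnd ℂ) (Complex.exp ((θ : ℂ) * Complex.I))
      = Complex.exp ((θ : ℂ) * Complex.I) := by
    intro θ
    rw [← Complex.exp_conj, map_mul, Complex.conj_ofReal, Complex.conj_I, mul_neg,
      Complex.exp_neg, one_div, inv_inv]
  set N : ℕ := ((n : ℤ) - k).toNat with hNdef
  have hNk : (N : ℂ) = (n : ℂ) - (k : ℂ) := by
    have h1 : ((N : ℤ) : ℂ) = (((n : ℤ) - k : ℤ) : ℂ) := by
      congr 1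
      rw [hNdef, Int.toNat_of_nonneg (by omega)]
    push_cast at h1 ⊢
    exact h1
  have hN1 : 1 ≤ N := by
    have : (1 : ℤ) ≤ (n : ℤ) - k := by omega
    omega
  set g : ℝ → ℝ → ℂ := fun θ φ =>
    Complex.exp ((N : ℂ) * (θ : ℂ) * Complex.I) *
      Complex.exp (((m : ℂ) - (l : ℂ)) * (φ : ℂ) * Complex.I) /
      eval ![Complex.exp ((θ : ℂ) * Complex.I), Complex.exp ((φ : ℂ) * Complex.I)] p
    with hgdef
  have hpoint : ∀ θ φ : ℝ,
      eval ![Complex.exp ((θ : ℂ) * Complex.I),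
               Complex.exp ((φ : ℂ) * Complex.I)] revp *
            Complex.exp (-(k : ℂ) * (θ : ℂ) * Complex.I) *
            Complex.exp (-(l : ℂ) * (φ : ℂ) * Complex.I) /
          ((‖(eval ![Complex.exp ((θ : ℂ) * Complex.I),
                  Complex.exp ((φ : ℂ) * Complex.I)] p)‖ : ℂ)) ^ 2 = g θ φ := by
    intro θ φ
    set z := Complex.exp ((θ : ℂ) * Complex.I)
    set w := Complex.exp ((φ : ℂ) * Complex.I)
    set a := eval ![z, w] p with hadef
    have ha : a ≠ 0 := hp z w (le_of_eq (habs θ)) (le_of_eq (habs φ))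
    have hca : (starRingEnd ℂ) a ≠ 0 := by
      simpa using star_ne_zero.mpr ha
    have hden : ((‖a‖ : ℂ)) ^ 2 = a * (starRingEnd ℂ) a := by
      rw [Complex.mul_conj]
      norm_cast
      exact Complex.sq_norm a
    rw [hrev z w (hne θ) (hne φ), hconj θ, hconj φ, hden, ← hadef]
    have hz : z ^ n * Complex.exp (-(k : ℂ) * (θ : ℂ) * Complex.I)
        = Complex.exp ((N : ℂ) * (θ : ℂ) * Complex.I) := by
      rw [show z ^ n = Complex.exp ((n : ℂ) * ((θ:ℂ) * Complex.I)) from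
        (Complex.exp_nat_mul _ n).symm, ← Complex.exp_add, hNk]
      ring_nf
    have hw : w ^ m * Complex.exp (-(l : ℂ) * (φ : ℂ) * Complex.I)
        = Complex.exp (((m : ℂ) - (l : ℂ)) * (φ : ℂ) * Complex.I) := by
      rw [show w ^ m = Complex.exp ((m : ℂ) * ((φ:ℂ) * Complex.I)) from
        (Complex.exp_nat_mul _ m).symm, ← Complex.exp_add]
      ring_nf
    simp only [hgdef]
    rw [← hz, ← hw]
    change _ = _ / a
    field_simp
  have hle : (-Real.pi) ≤ Real.pi := by linarith [Real.pi_pos]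
  have hcont : Continuous (Function.uncurry g) := by
    apply Continuous.div
    · apply Continuous.mul
      · exact Complex.continuous_exp.comp (by fun_prop)
      · exact Complex.continuous_exp.comp (by fun_prop)
    · have hm : Continuous fun x : ℝ × ℝ =>
          (![Complex.exp ((x.1 : ℂ) * Complex.I),
             Complex.exp ((x.2 : ℂ) * Complex.I)] : Fin 2 → ℂ) := by
        refine continuous_pi fun i => ?_
        fin_cases i
        · simpa [Function.comp_def] using Complex.continuous_exp.comp
            (by fun_prop : Continuous fun x : ℝ × ℝ => (x.1 : ℂ) * Complex.I)
        · simpa [Function.comp_def] using Complex.continuous_exp.comp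
            (by fun_prop : Continuous fun x : ℝ × ℝ => (x.2 : ℂ) * Complex.I)
      exact (MvPolynomial.continuous_eval (p := p)).comp hm
    · intro x
      exact hp _ _ (le_of_eq (habs _)) (le_of_eq (habs _))
  have hzero : (∫ θ : ℝ in (-Real.pi)..Real.pi, ∫ φ : ℝ in (-Real.pi)..Real.pi,
      g θ φ) = 0 := by
    have hint : MeasureTheory.Integrable (Function.uncurry g)
        ((MeasureTheory.volume.restrict (Set.Ioc (-Real.pi) Real.pi)).prod
         (MeasureTheory.volume.restrict (Set.Ioc (-Real.pi) Real.pi))) := by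
      rw [MeasureTheory.Measure.prod_restrict]
      exact (hcont.continuousOn.integrableOn_compact (isCompact_Icc.prod isCompact_Icc)).mono_set
        (Set.prod_mono Set.Ioc_subset_Icc_self Set.Ioc_subset_Icc_self)
    have h4 : ∀ φ : ℝ, (∫ θ : ℝ in Set.Ioc (-Real.pi) Real.pi, g θ φ) = 0 := by
      intro φ
      rw [← intervalIntegral.integral_of_le hle]
      have heq : Set.EqOn (fun θ : ℝ => g θ φ)
          (fun θ : ℝ => Complex.exp (((m : ℂ) - (l : ℂ)) * (φ : ℂ) * Complex.I) *
            (Complex.exp ((N : ℂ) * (θ : ℂ) * Complex.I) /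
              eval ![Complex.exp ((θ : ℂ) * Complex.I),
                     Complex.exp ((φ : ℂ) * Complex.I)] p))
          (Set.uIcc (-Real.pi) Real.pi) := by
        intro θ _
        simp only [hgdef]
        ring
      rw [intervalIntegral.integral_congr heq, intervalIntegral.integral_const_mul,
        aux_cauchy p hp _ (le_of_eq (habs φ)) N hN1, mul_zero]
    simp only [intervalIntegral.integral_of_le hle]
    rw [MeasureTheory.integral_integral_swap hint]
    simp only [h4, MeasureTheory.integral_zero]
  have hmain : (∫ θ : ℝ in (-Real.pi)..Real.pi, ∫ φ : ℝ in (-Real.pi)..Real.pi,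
        eval ![Complex.exp ((θ : ℂ) * Complex.I),
               Complex.exp ((φ : ℂ) * Complex.I)] revp *
            Complex.exp (-(k : ℂ) * (θ : ℂ) * Complex.I) *
            Complex.exp (-(l : ℂ) * (φ : ℂ) * Complex.I) /
          ((‖(eval ![Complex.exp ((θ : ℂ) * Complex.I),
                  Complex.exp ((φ : ℂ) * Complex.I)] p)‖ : ℂ)) ^ 2) = 0 := by
    rw [← hzero]
    refine intervalIntegral.integral_congr fun θ _ => ?_
    exact intervalIntegral.integral_congr fun φ _ => hpoint θ φ
  rw [hmain, mul_zero]
end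

section
/- Let P, Q ∈ ℂ[z,w] be polynomials of degree at most (n,m) such that: P is not divisible by z and not divisible by w; Q is not divisible by z and not divisible by w; P(z,w) ≠ 0 whenever |z| = 1 and |w| ≤ 1; Q(z,w) ≠ 0 whenever |z| ≤ 1 and |w| = 1; and |P(z,w)| = |Q(z,w)| for all (z,w) with |z| = |w| = 1. Then there exist stable polynomials p, q ∈ ℂ[z,w], of degrees (n₁,m₁) and (n₂,m₂) respectively with n₁ + n₂ ≤ n and m₁ + m₂ ≤ m, such that P(z,w) = p(z,w)·z^{n₂}·q(1/z, w) (the second factor z^{n₂}·q(1/z,w) being the reverse of q in the variable z, a polynomial in z and w). -/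
open MvPolynomial

noncomputable section



/-- The unit circle in ℂ is infinite. -/
lemma circle_infinite : {z : ℂ | ‖z‖ = 1}.Infinite := by
  have hinj : Set.InjOn (fun t : ℝ => Complex.exp (t * Complex.I)) (Set.Ico 0 Real.pi) := by
    intro s hs t ht hst
    simp only [Set.mem_Ico] at hs ht
    have := Complex.exp_eq_exp_iff_exists_int.mp hst
    obtain ⟨k, hk⟩ := this
    have : (s : ℂ) * Complex.I - t * Complex.I = k * (2 * Real.pi * Complex.I) := by
      linear_combination hk
    have h2 : ((s - t : ℝ) : ℂ) * Complex.I = ((k * (2 * Real.pi) : ℝ) : ℂ) * Complex.I := by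
      push_cast
      push_cast at this
      linear_combination this
    have h3 : (s - t : ℝ) = (k * (2 * Real.pi) : ℝ) := by
      have := mul_right_cancel₀ Complex.I_ne_zero h2
      exact_mod_cast this
    have hpi : Real.pi > 0 := Real.pi_pos
    have hb : |s - t| < Real.pi := by
      rw [abs_lt]; constructor <;> nlinarith [hs.1, hs.2, ht.1, ht.2]
    have : |(k : ℝ)| * (2 * Real.pi) < Real.pi := by
      rw [← abs_of_pos (show (0:ℝ) < 2 * Real.pi by positivity), ← abs_mul, ← h3]
      exact hb
    have hk0 : k = 0 := by
      by_contra hk0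
      have : (1 : ℝ) ≤ |(k : ℝ)| := by
        exact_mod_cast Int.one_le_abs (by exact_mod_cast hk0)
      nlinarith
    have : s - t = 0 := by rw [h3, hk0]; simp
    linarith
  have himg : (fun t : ℝ => Complex.exp (t * Complex.I)) '' (Set.Ico 0 Real.pi) ⊆
      {z : ℂ | ‖z‖ = 1} := by
    rintro z ⟨t, _, rfl⟩
    simp [Complex.norm_exp]
  exact (((Set.Ico_infinite (by positivity)).image hinj)).mono himg

/-- A one-variable polynomial vanishing on the unit circle is zero. -/
lemma poly_zero_of_circle (f : Polynomial ℂ)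
    (h : ∀ z : ℂ, ‖z‖ = 1 → f.eval z = 0) : f = 0 := by
  apply Polynomial.eq_zero_of_infinite_isRoot
  apply circle_infinite.mono
  intro z hz
  exact h z hz




/-- Pairs as finsupps on `Fin 2`. -/
def pf (a b : ℕ) : Fin 2 →₀ ℕ := Finsupp.single 0 a + Finsupp.single 1 b

@[simp] lemma pf_apply0 (a b : ℕ) : pf a b 0 = a := by simp [pf]
@[simp] lemma pf_apply1 (a b : ℕ) : pf a b 1 = b := by
  simp [pf, Finsupp.single_apply]

lemma eq_pf (d : Fin 2 →₀ ℕ) : d = pf (d 0) (d 1) := by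
  ext i
  fin_cases i <;> simp

lemma pf_injective {a b a' b' : ℕ} (h : pf a b = pf a' b') : a = a' ∧ b = b' := by
  constructor
  · have := congrArg (fun f => f 0) h; simpa using this
  · have := congrArg (fun f => f 1) h; simpa using this

lemma eval_monomial_pair (z w : ℂ) (d : Fin 2 →₀ ℕ) (c : ℂ) :
    eval ![z, w] (monomial d c) = c * z ^ (d 0) * w ^ (d 1) := by
  rw [eval_monomial]
  rw [Finsupp.prod_fintype _ _ (fun i => pow_zero _)]
  rw [Fin.prod_univ_two]
  simp [mul_assoc]

lemma eval_eq_support_sum (f : MvPolynomial (Fin 2) ℂ) (z w : ℂ) :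
    eval ![z, w] f = ∑ d ∈ f.support, coeff d f * z ^ (d 0) * w ^ (d 1) := by
  conv_lhs => rw [← support_sum_monomial_coeff f]
  rw [map_sum]
  exact Finset.sum_congr rfl fun d _ => eval_monomial_pair z w d (coeff d f)


/-- A polynomial in two variables vanishing on the torus is zero. -/
lemma zero_of_torus (f : MvPolynomial (Fin 2) ℂ)
    (h : ∀ z w : ℂ, ‖z‖ = 1 → ‖w‖ = 1 → eval ![z, w] f = 0) :
    f = 0 := by
  classical
  -- for fixed z on the circle, the polynomial in w vanishes
  set G : ℂ → Polynomial ℂ := fun z =>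
    ∑ d ∈ f.support, Polynomial.C (coeff d f * z ^ (d 0)) * Polynomial.X ^ (d 1) with hG
  have hGeval : ∀ z w : ℂ, (G z).eval w = eval ![z, w] f := by
    intro z w
    rw [hG, Polynomial.eval_finset_sum, eval_eq_support_sum]
    exact Finset.sum_congr rfl fun d _ => by simp [mul_assoc]
  have hGzero : ∀ z : ℂ, ‖z‖ = 1 → G z = 0 := by
    intro z hz
    exact poly_zero_of_circle _ fun w hw => by rw [hGeval]; exact h z w hz hw
  -- coefficients of G z as polynomials in z
  set H : ℕ → Polynomial ℂ := fun k =>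
    ∑ d ∈ f.support.filter (fun d => d 1 = k), Polynomial.C (coeff d f) * Polynomial.X ^ (d 0)
    with hH
  have hHeval : ∀ k (z : ℂ), (H k).eval z = (G z).coeff k := by
    intro k z
    rw [hH, hG, Polynomial.eval_finset_sum, Polynomial.finset_sum_coeff]
    rw [Finset.sum_filter]
    refine Finset.sum_congr rfl fun d _ => ?_
    simp only [Polynomial.coeff_C_mul, Polynomial.coeff_X_pow, Polynomial.eval_mul,
      Polynomial.eval_C, Polynomial.eval_pow, Polynomial.eval_X]
    by_cases hd : d 1 = k
    · simp [hd]
    · have h2 : ¬ (k = d 1) := fun hh => hd hh.symm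
      rw [if_neg h2, mul_zero, if_neg hd]
  have hHzero : ∀ k, H k = 0 := by
    intro k
    apply poly_zero_of_circle
    intro z hz
    rw [hHeval, hGzero z hz]
    simp
  -- conclude coefficientwise
  apply MvPolynomial.ext
  intro e
  rw [coeff_zero]
  by_cases he : e ∈ f.support
  · have h0 : (H (e 1)).coeff (e 0) = coeff e f := by
      rw [hH, Polynomial.finset_sum_coeff]
      rw [Finset.sum_eq_single e]
      · simp
      · intro d hd hde
        simp only [Finset.mem_filter] at hd
        simp only [Polynomial.coeff_C_mul, Polynomial.coeff_X_pow]
        have : ¬ (d 0 = e 0) := by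
          intro h00
          apply hde
          rw [eq_pf d, eq_pf e, h00, hd.2]
        have h2 : ¬ (e 0 = d 0) := fun hh => this hh.symm
        rw [if_neg h2, mul_zero]
      · intro he'
        exfalso
        apply he'
        rw [Finset.mem_filter]
        exact ⟨he, rfl⟩
    rw [← h0, hHzero]
    simp
  · simpa using he


/-- Key analytic lemma: a function entire in `z`, jointly continuous, nonvanishing on
`|z|=1, |w|≤1` and nonvanishing on `|z|≤1` for one boundary `w₀`, is nonvanishing on the
whole closed bidisk. -/
lemma keyB (f : ℂ → ℂ → ℂ)
    (hdz : ∀ w, Differentiable ℂ (fun z => f z w))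
    (hc : Continuous (fun p : ℂ × ℂ => f p.1 p.2))
    (h1 : ∀ z w : ℂ, ‖z‖ = 1 → ‖w‖ ≤ 1 → f z w ≠ 0)
    (h2 : ∃ w0 : ℂ, ‖w0‖ = 1 ∧ ∀ z, ‖z‖ ≤ 1 → f z w0 ≠ 0) :
    ∀ z w : ℂ, ‖z‖ ≤ 1 → ‖w‖ ≤ 1 → f z w ≠ 0 := by
  have habs : ∀ z : ℂ, ‖z‖ = ‖z‖ := fun z => rfl
  set T : Set ℂ := {w | ∃ z, ‖z‖ ≤ 1 ∧ ‖w‖ ≤ 1 ∧ f z w = 0} with hT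
  -- T is closed
  have hTclosed : IsClosed T := by
    have hTeq : T = Prod.snd '' ((Metric.closedBall (0:ℂ) 1 ×ˢ Metric.closedBall (0:ℂ) 1) ∩
        (fun p : ℂ × ℂ => f p.1 p.2) ⁻¹' {0}) := by
      ext w
      constructor
      · rintro ⟨z, hz, hw, hf⟩
        exact ⟨(z, w), ⟨⟨by simpa [mem_closedBall_zero_iff] using hz,
          by simpa [mem_closedBall_zero_iff] using hw⟩, hf⟩, rfl⟩
      · rintro ⟨⟨z, w'⟩, ⟨⟨hz, hw⟩, hf⟩, rfl⟩
        exact ⟨z, by simpa [mem_closedBall_zero_iff] using hz,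
          by simpa [mem_closedBall_zero_iff] using hw, hf⟩
    rw [hTeq]
    exact ((((isCompact_closedBall _ _).prod (isCompact_closedBall _ _)).inter_right
      (isClosed_singleton.preimage hc)).image continuous_snd).isClosed
  -- T is relatively open
  have Topen : ∀ w1 : ℂ, w1 ∈ T → ∃ V : Set ℂ, IsOpen V ∧ w1 ∈ V ∧
      ∀ w ∈ V, ‖w‖ ≤ 1 → w ∈ T := by
    intro w1 hw1
    obtain ⟨z1, hz1, hw1le, hf0⟩ := hw1
    have hz1lt : ‖z1‖ < 1 := by
      rcases lt_or_eq_of_le hz1 with h | h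
      · exact h
      · exact absurd hf0 (h1 z1 w1 h hw1le)
    set g : ℂ → ℂ := fun z => f z w1 with hg
    have hg1 : g 1 ≠ 0 := h1 1 w1 (by simp) hw1le
    rcases ((hdz w1).analyticAt z1).eventually_eq_zero_or_eventually_ne_zero with hcase | hcase
    · exfalso
      have heq : Set.EqOn g 0 Set.univ := by
        apply AnalyticOnNhd.eqOn_zero_of_preconnected_of_eventuallyEq_zero
          (fun x _ => (hdz w1).analyticAt x) isPreconnected_univ (Set.mem_univ z1)
        exact hcase
      exact hg1 (heq (Set.mem_univ 1))
    · -- extract a punctured-ball radius on which g ≠ 0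
      have hcase' : ∀ᶠ z in nhds z1, z ≠ z1 → g z ≠ 0 := by
        simpa [eventually_nhdsWithin_iff] using hcase
      obtain ⟨r0, hr0, hr0p⟩ := Metric.eventually_nhds_iff.mp hcase'
      set ε : ℝ := min (r0 / 2) ((1 - ‖z1‖) / 2) with hε
      have hεpos : 0 < ε := by
        apply lt_min (by linarith) (by linarith)
      have hsphere_ne : ∀ x ∈ Metric.sphere z1 ε, g x ≠ 0 := by
        intro x hx
        rw [Metric.mem_sphere] at hx
        refine hr0p ?_ ?_
        · rw [hx]; exact lt_of_le_of_lt (min_le_left _ _) (by linarith)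
        · intro hxz; rw [hxz] at hx; simp at hx; linarith
      have hball_sub : Metric.closedBall z1 ε ⊆ Metric.closedBall 0 1 := by
        intro x hx
        rw [Metric.mem_closedBall] at hx ⊢
        have : dist x 0 ≤ dist x z1 + dist z1 0 := dist_triangle _ _ _
        have hd : dist z1 0 = ‖z1‖ := by
          simp [Complex.dist_eq]
        rw [hd] at this
        have : dist x 0 ≤ ε + ‖z1‖ := by linarith
        have hεle : ε ≤ (1 - ‖z1‖) / 2 := min_le_right _ _
        linarith
      -- minimum of ‖g‖ on the sphere
      obtain ⟨x0, hx0mem, hx0min⟩ :=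
        (isCompact_sphere z1 ε).exists_isMinOn
          (NormedSpace.sphere_nonempty.mpr hεpos.le)
          ((hdz w1).continuous.norm.continuousOn)
      set δ : ℝ := ‖g x0‖ with hδ
      have hδpos : 0 < δ := norm_pos_iff.mpr (hsphere_ne x0 hx0mem)
      -- tube lemma
      set U : Set (ℂ × ℂ) := {p | δ / 2 < ‖f p.1 p.2‖} with hU
      have hUopen : IsOpen U := isOpen_lt continuous_const hc.norm
      have hsubU : (Metric.sphere z1 ε) ×ˢ ({w1} : Set ℂ) ⊆ U := by
        rintro ⟨x, w⟩ ⟨hx, hw⟩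
        simp only [Set.mem_singleton_iff] at hw
        have hmin := hx0min hx
        show δ / 2 < ‖f x w‖
        rw [hw]
        calc δ / 2 < δ := by linarith
        _ ≤ ‖f x w1‖ := hmin
      obtain ⟨u, v, huop, hvop, hsphu, hw1v, huv⟩ :=
        generalized_tube_lemma (isCompact_sphere z1 ε) isCompact_singleton hUopen hsubU
      refine ⟨v ∩ {w | ‖f z1 w‖ < δ / 2}, hvop.inter ?_, ⟨hw1v rfl, ?_⟩, ?_⟩
      · exact isOpen_lt (hc.comp (continuous_const.prodMk continuous_id)).norm continuous_const
      · simp only [Set.mem_setOf_eq, hf0]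
        simpa using by positivity
      · intro w hwV hwle
        obtain ⟨hwv, hwsmall⟩ := hwV
        by_contra hwT
        have hnz : ∀ x ∈ Metric.closedBall z1 ε, f x w ≠ 0 := by
          intro x hx hx0
          apply hwT
          refine ⟨x, ?_, hwle, hx0⟩
          have := hball_sub hx
          simpa [mem_closedBall_zero_iff] using this
        set h : ℂ → ℂ := fun x => (f x w)⁻¹ with hh
        have hdiff : DiffContOnCl ℂ h (Metric.ball z1 ε) := by
          constructor
          · exact DifferentiableOn.inv ((hdz w).differentiableOn)
              (fun x hx => hnz x (Metric.ball_subset_closedBall hx))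
          · rw [closure_ball z1 hεpos.ne']
            exact ContinuousOn.inv₀ ((hdz w).continuous.continuousOn) fun x hx => hnz x hx
        have hbound : ∀ x ∈ frontier (Metric.ball z1 ε), ‖h x‖ ≤ (δ / 2)⁻¹ := by
          intro x hx
          rw [frontier_ball z1 hεpos.ne'] at hx
          have hxU : (x, w) ∈ U := huv ⟨hsphu hx, hwv⟩
          simp only [hU, Set.mem_setOf_eq] at hxU
          rw [hh]
          simp only [norm_inv]
          exact inv_anti₀ (by positivity) hxU.le
        have hz1cl : z1 ∈ closure (Metric.ball z1 ε) := by
          rw [closure_ball z1 hεpos.ne']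
          exact Metric.mem_closedBall_self hεpos.le
        have := Complex.norm_le_of_forall_mem_frontier_norm_le
          Metric.isBounded_ball hdiff hbound hz1cl
        rw [hh] at this
        simp only [norm_inv] at this
        have hfz1 : f z1 w ≠ 0 := hnz z1 (Metric.mem_closedBall_self hεpos.le)
        have hfz1pos : 0 < ‖f z1 w‖ := norm_pos_iff.mpr hfz1
        have : δ / 2 ≤ ‖f z1 w‖ := by
          rwa [inv_le_inv₀ (by positivity) (by positivity)] at this
        simp only [Set.mem_setOf_eq] at hwsmall
        linarith
  -- connectedness argument
  intro z w hz hw hf0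
  have hwT : w ∈ T := ⟨z, hz, hw, hf0⟩
  obtain ⟨w0, hw0, hw0nz⟩ := h2
  choose V hVop hVmem hVsub using Topen
  set u : Set ℂ := ⋃ w1, ⋃ (h : w1 ∈ T), V w1 h with hu
  have huopen : IsOpen u := isOpen_iUnion fun w1 => isOpen_iUnion fun h => hVop w1 h
  have hpc : IsPreconnected (Metric.closedBall (0:ℂ) 1) :=
    (convex_closedBall (0:ℂ) 1).isPreconnected
  have hcover : Metric.closedBall (0:ℂ) 1 ⊆ u ∪ Tᶜ := by
    intro x _
    by_cases hx : x ∈ T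
    · left
      exact Set.mem_iUnion.mpr ⟨x, Set.mem_iUnion.mpr ⟨hx, hVmem x hx⟩⟩
    · right; exact hx
  have hone : (Metric.closedBall (0:ℂ) 1 ∩ u).Nonempty := by
    refine ⟨w, by simpa [mem_closedBall_zero_iff] using hw, ?_⟩
    exact Set.mem_iUnion.mpr ⟨w, Set.mem_iUnion.mpr ⟨hwT, hVmem w hwT⟩⟩
  have htwo : (Metric.closedBall (0:ℂ) 1 ∩ Tᶜ).Nonempty := by
    refine ⟨w0, by simpa [mem_closedBall_zero_iff] using hw0.le, ?_⟩
    rintro ⟨z', hz', _, hf'⟩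
    exact hw0nz z' hz' hf'
  obtain ⟨x, hxs, hxu, hxv⟩ := hpc u Tᶜ huopen hTclosed.isOpen_compl hcover hone htwo
  obtain ⟨w1, hmem⟩ := Set.mem_iUnion.mp hxu
  obtain ⟨hw1T, hxV⟩ := Set.mem_iUnion.mp hmem
  exact hxv (hVsub w1 hw1T x hxV (by simpa [mem_closedBall_zero_iff] using hxs))

/-- joint continuity of evaluation -/
lemma eval_continuous2 (f : MvPolynomial (Fin 2) ℂ) :
    Continuous (fun p : ℂ × ℂ => eval ![p.1, p.2] f) := by
  have : (fun p : ℂ × ℂ => eval ![p.1, p.2] f) =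
      fun p : ℂ × ℂ => ∑ d ∈ f.support, coeff d f * p.1 ^ (d 0) * p.2 ^ (d 1) := by
    funext p; exact eval_eq_support_sum f p.1 p.2
  rw [this]
  exact continuous_finset_sum _ fun d _ =>
    ((continuous_const.mul ((continuous_fst).pow _)).mul ((continuous_snd).pow _))

lemma eval_differentiable (f : MvPolynomial (Fin 2) ℂ) (w : ℂ) :
    Differentiable ℂ (fun z => eval ![z, w] f) := by
  have : (fun z : ℂ => eval ![z, w] f) =
      fun z : ℂ => ∑ d ∈ f.support, coeff d f * z ^ (d 0) * w ^ (d 1) := by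
    funext z; exact eval_eq_support_sum f z w
  rw [this]
  apply Differentiable.fun_sum
  intro d _
  exact ((differentiable_const _).mul (differentiable_pow _)).mul (differentiable_const _)

/-- if every monomial of `f` contains `X i`, then `X i ∣ f` -/
lemma X_dvd_of_support (f : MvPolynomial (Fin 2) ℂ) (i : Fin 2)
    (h : ∀ d ∈ f.support, d i ≠ 0) : X i ∣ f := by
  conv_rhs => rw [← support_sum_monomial_coeff f]
  apply Finset.dvd_sum
  intro d hd
  rw [X_dvd_monomial]
  exact Or.inr (h d hd)

/-- there is a monomial with no `z` if `z` does not divide -/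
lemma exists_z_exponent_zero (f : MvPolynomial (Fin 2) ℂ) (hf : ¬ (X 0 ∣ f)) :
    ∃ d ∈ f.support, d 0 = 0 := by
  by_contra hc
  push_neg at hc
  exact hf (X_dvd_of_support f 0 hc)

lemma mem_support_le_degreeOf (f : MvPolynomial (Fin 2) ℂ) (d : Fin 2 →₀ ℕ)
    (hd : d ∈ f.support) (i : Fin 2) : d i ≤ degreeOf i f := by
  rw [degreeOf_eq_sup]
  exact Finset.le_sup (f := fun m => m i) hd

lemma exists_degreeOf_attained (f : MvPolynomial (Fin 2) ℂ) (hf : f ≠ 0) (i : Fin 2) :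
    ∃ d ∈ f.support, d i = degreeOf i f := by
  rw [degreeOf_eq_sup]
  obtain ⟨d, hd, hds⟩ := Finset.exists_mem_eq_sup (α := ℕ) f.support
    (by rwa [Finset.nonempty_iff_ne_empty, Ne, support_eq_empty]) (fun d => d i)
  exact ⟨d, hd, hds.symm⟩

/-- multiplicativity of `degreeOf` for nonzero polynomials over ℂ -/
lemma degreeOf_mul_eq' (f g : MvPolynomial (Fin 2) ℂ) (hf : f ≠ 0) (hg : g ≠ 0) (i : Fin 2) :
    degreeOf i (f * g) = degreeOf i f + degreeOf i g := by
  have key : ∀ f g : MvPolynomial (Fin 2) ℂ, f ≠ 0 → g ≠ 0 →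
      degreeOf 0 (f * g) = degreeOf 0 f + degreeOf 0 g := by
    intro f g hf hg
    have h1 := natDegree_finSuccEquiv (R := ℂ) (n := 1) (f * g)
    have h2 := natDegree_finSuccEquiv (R := ℂ) (n := 1) f
    have h3 := natDegree_finSuccEquiv (R := ℂ) (n := 1) g
    rw [map_mul] at h1
    rw [← h1, ← h2, ← h3]
    apply Polynomial.natDegree_mul
    · exact fun hc => hf ((map_eq_zero_iff (finSuccEquiv ℂ 1) (finSuccEquiv ℂ 1).injective).mp hc)
    · exact fun hc => hg ((map_eq_zero_iff (finSuccEquiv ℂ 1) (finSuccEquiv ℂ 1).injective).mp hc)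
  fin_cases i
  · show degreeOf 0 (f * g) = degreeOf 0 f + degreeOf 0 g
    exact key f g hf hg
  · show degreeOf 1 (f * g) = degreeOf 1 f + degreeOf 1 g
    have hsw : ∀ h : MvPolynomial (Fin 2) ℂ,
        degreeOf (1 : Fin 2) h = degreeOf 0 (rename (Equiv.swap 0 1) h) := by
      intro h
      have := degreeOf_rename_of_injective (p := h)
        (f := (Equiv.swap (0:Fin 2) 1)) (Equiv.swap 0 1).injective 1
      rw [← this]
      norm_num
    rw [hsw, hsw, hsw, map_mul]
    apply key
    · exact fun hc => hf ((map_eq_zero_iff _ (rename_injective _ (Equiv.swap 0 1).injective)).mp hc)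
    · exact fun hc => hg ((map_eq_zero_iff _ (rename_injective _ (Equiv.swap 0 1).injective)).mp hc)


lemma pow_nat_sub_helper (z : ℂ) (hz : z ≠ 0) {a N : ℕ} (h : a ≤ N) :
    z ^ (N - a) = z ^ N * (z⁻¹) ^ a := by
  rw [inv_pow, ← div_eq_mul_inv, eq_div_iff (pow_ne_zero _ hz), ← pow_add]
  congr 1
  omega

/-- reversal of the `z`-variable at degree `N` -/
def reflZ (N : ℕ) (f : MvPolynomial (Fin 2) ℂ) : MvPolynomial (Fin 2) ℂ :=
  ∑ d ∈ f.support, monomial (pf (N - d 0) (d 1)) (coeff d f)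

/-- conjugate-reversal of both variables at bidegree `(n, m)` -/
def reflTwo (n m : ℕ) (f : MvPolynomial (Fin 2) ℂ) : MvPolynomial (Fin 2) ℂ :=
  ∑ d ∈ f.support, monomial (pf (n - d 0) (m - d 1)) ((starRingEnd ℂ) (coeff d f))

lemma eval_reflZ (N : ℕ) (f : MvPolynomial (Fin 2) ℂ)
    (hbox : ∀ d ∈ f.support, d 0 ≤ N) (z w : ℂ) (hz : z ≠ 0) :
    eval ![z, w] (reflZ N f) = z ^ N * eval ![z⁻¹, w] f := by
  rw [reflZ, map_sum, eval_eq_support_sum, Finset.mul_sum]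
  refine Finset.sum_congr rfl fun d hd => ?_
  rw [eval_monomial_pair]
  simp only [pf_apply0, pf_apply1]
  rw [pow_nat_sub_helper z hz (hbox d hd)]
  ring

lemma eval_reflZ_zero (N : ℕ) (f : MvPolynomial (Fin 2) ℂ)
    (hbox : ∀ d ∈ f.support, d 0 ≤ N) (w : ℂ) :
    eval ![(0:ℂ), w] (reflZ N f) =
      ∑ d ∈ f.support.filter (fun d => d 0 = N), coeff d f * w ^ (d 1) := by
  rw [reflZ, map_sum, Finset.sum_filter]
  refine Finset.sum_congr rfl fun d hd => ?_
  rw [eval_monomial_pair]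
  simp only [pf_apply0, pf_apply1]
  by_cases hdN : d 0 = N
  · rw [if_pos hdN, hdN]
    simp
  · rw [if_neg hdN]
    have : 0 < N - d 0 := by have := hbox d hd; omega
    rw [zero_pow (by omega)]
    ring

lemma eval_reflTwo (n m : ℕ) (f : MvPolynomial (Fin 2) ℂ)
    (hbox : ∀ d ∈ f.support, d 0 ≤ n ∧ d 1 ≤ m) (z w : ℂ) (hz : z ≠ 0) (hw : w ≠ 0) :
    eval ![z, w] (reflTwo n m f) =
      z ^ n * w ^ m * (starRingEnd ℂ) (eval ![((starRingEnd ℂ) z)⁻¹, ((starRingEnd ℂ) w)⁻¹] f) := by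
  rw [reflTwo, map_sum, eval_eq_support_sum, map_sum, Finset.mul_sum]
  refine Finset.sum_congr rfl fun d hd => ?_
  rw [eval_monomial_pair]
  simp only [pf_apply0, pf_apply1, map_mul, map_pow, map_inv₀, Complex.conj_conj]
  rw [pow_nat_sub_helper z hz (hbox d hd).1, pow_nat_sub_helper w hw (hbox d hd).2]
  ring

lemma reflZ_injOn (N : ℕ) (f : MvPolynomial (Fin 2) ℂ)
    (hbox : ∀ d ∈ f.support, d 0 ≤ N) :
    Set.InjOn (fun d : Fin 2 →₀ ℕ => pf (N - d 0) (d 1)) (f.support : Set (Fin 2 →₀ ℕ)) := by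
  intro d hd d' hd' h
  simp only at h
  have h0 : N - d 0 = N - d' 0 := by
    have := congrArg (fun g => g (0 : Fin 2)) h; simpa using this
  have h1 : d 1 = d' 1 := by
    have := congrArg (fun g => g (1 : Fin 2)) h; simpa using this
  have hb := hbox d hd
  have hb' := hbox d' hd'
  rw [eq_pf d, eq_pf d', h1]
  congr 1
  omega

lemma coeff_reflZ (N : ℕ) (f : MvPolynomial (Fin 2) ℂ)
    (hbox : ∀ d ∈ f.support, d 0 ≤ N) (d : Fin 2 →₀ ℕ) (hd : d ∈ f.support) :
    coeff (pf (N - d 0) (d 1)) (reflZ N f) = coeff d f := by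
  rw [reflZ, coeff_sum]
  rw [Finset.sum_eq_single d]
  · rw [coeff_monomial, if_pos rfl]
  · intro d' hd' hne
    rw [coeff_monomial, if_neg]
    intro heq
    exact hne (reflZ_injOn N f hbox hd' hd heq)
  · intro h; exact absurd hd h

lemma support_reflZ (N : ℕ) (f : MvPolynomial (Fin 2) ℂ) (e : Fin 2 →₀ ℕ)
    (he : e ∈ (reflZ N f).support) : ∃ d ∈ f.support, pf (N - d 0) (d 1) = e := by
  by_contra hc
  push_neg at hc
  have hz : coeff e (reflZ N f) = 0 := by
    rw [reflZ, coeff_sum]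
    apply Finset.sum_eq_zero
    intro d hd
    rw [coeff_monomial, if_neg (hc d hd)]
  rw [mem_support_iff] at he
  exact he hz

lemma degreeOf_reflZ_0 (N : ℕ) (f : MvPolynomial (Fin 2) ℂ)
    (hbox : ∀ d ∈ f.support, d 0 ≤ N) (hex : ∃ d ∈ f.support, d 0 = 0) :
    degreeOf 0 (reflZ N f) = N := by
  apply le_antisymm
  · rw [degreeOf_le_iff]
    intro e he
    obtain ⟨d, hd, rfl⟩ := support_reflZ N f e he
    simp only [pf_apply0]
    omega
  · obtain ⟨d, hd, hd0⟩ := hex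
    have hco := coeff_reflZ N f hbox d hd
    have hmem : pf (N - d 0) (d 1) ∈ (reflZ N f).support := by
      rw [mem_support_iff, hco]
      exact mem_support_iff.mp hd
    have := mem_support_le_degreeOf _ _ hmem 0
    simpa [hd0] using this

lemma degreeOf_reflZ_1 (N : ℕ) (f : MvPolynomial (Fin 2) ℂ)
    (hbox : ∀ d ∈ f.support, d 0 ≤ N) : degreeOf 1 (reflZ N f) = degreeOf 1 f := by
  by_cases hf : f = 0
  · subst hf; simp [reflZ]
  apply le_antisymm
  · rw [degreeOf_le_iff]
    intro e he
    obtain ⟨d, hd, rfl⟩ := support_reflZ N f e he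
    simpa using mem_support_le_degreeOf f d hd 1
  · obtain ⟨d, hd, hd1⟩ := exists_degreeOf_attained f hf 1
    have hco := coeff_reflZ N f hbox d hd
    have hmem : pf (N - d 0) (d 1) ∈ (reflZ N f).support := by
      rw [mem_support_iff, hco]; exact mem_support_iff.mp hd
    have := mem_support_le_degreeOf _ _ hmem 1
    simpa [hd1] using this


/-- **Fejér–Riesz paper, splitting argument in the proof of Theorem 2.5.**
Let `P, Q ∈ ℂ[z,w]` be polynomials of degree at most `(n,m)`, neither divisible by `z` nor
by `w`, such that `P(z,w) ≠ 0` for `|z| = 1`, `|w| ≤ 1`, `Q(z,w) ≠ 0` for `|z| ≤ 1`,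
`|w| = 1`, and `|P| = |Q|` on the torus `|z| = |w| = 1`. Then there are stable polynomials
`p`, `q` of degrees `(n₁,m₁)` and `(n₂,m₂)` with `n₁ + n₂ ≤ n`, `m₁ + m₂ ≤ m`, such that
`P(z,w) = p(z,w)·z^{n₂}·q(1/z,w)`, where `z^{n₂}·q(1/z,w)` is the polynomial `qrev`
obtained by reversing the coefficients of `q` in `z`. -/
theorem fejer_riesz_splitting (n m : ℕ) (P Q : MvPolynomial (Fin 2) ℂ)
    (hPdeg : ∀ d ∈ P.support, d 0 ≤ n ∧ d 1 ≤ m)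
    (hQdeg : ∀ d ∈ Q.support, d 0 ≤ n ∧ d 1 ≤ m)
    (hPz : ¬ (X 0 ∣ P)) (hPw : ¬ (X 1 ∣ P))
    (hQz : ¬ (X 0 ∣ Q)) (hQw : ¬ (X 1 ∣ Q))
    (hPstab : ∀ z w : ℂ, ‖z‖ = 1 → ‖w‖ ≤ 1 → eval ![z, w] P ≠ 0)
    (hQstab : ∀ z w : ℂ, ‖z‖ ≤ 1 → ‖w‖ = 1 → eval ![z, w] Q ≠ 0)
    (habs : ∀ z w : ℂ, ‖z‖ = 1 → ‖w‖ = 1 →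
      ‖eval ![z, w] P‖ = ‖eval ![z, w] Q‖) :
    ∃ (p q qrev : MvPolynomial (Fin 2) ℂ) (n1 m1 n2 m2 : ℕ),
      (∀ z w : ℂ, ‖z‖ ≤ 1 → ‖w‖ ≤ 1 → eval ![z, w] p ≠ 0) ∧
      (∀ z w : ℂ, ‖z‖ ≤ 1 → ‖w‖ ≤ 1 → eval ![z, w] q ≠ 0) ∧
      p.degreeOf 0 = n1 ∧ p.degreeOf 1 = m1 ∧
      q.degreeOf 0 = n2 ∧ q.degreeOf 1 = m2 ∧
      n1 + n2 ≤ n ∧ m1 + m2 ≤ m ∧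
      (∀ z w : ℂ, z ≠ 0 → eval ![z, w] qrev = z ^ n2 * eval ![1 / z, w] q) ∧
      P = p * qrev := by
  classical
  have hP0 : P ≠ 0 := fun h => hPz (h ▸ dvd_zero _)
  set RP : MvPolynomial (Fin 2) ℂ := reflTwo n m P with hRP
  set RQ : MvPolynomial (Fin 2) ℂ := reflTwo n m Q with hRQ
  -- The fundamental identity P·P~ = Q·Q~
  have hident : P * RP = Q * RQ := by
    have hD := zero_of_torus (P * RP - Q * RQ) ?_
    · exact sub_eq_zero.mp hD
    intro z w hz hw
    have hz0 : z ≠ 0 := fun h => by rw [h] at hz; simp at hz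
    have hw0 : w ≠ 0 := fun h => by rw [h] at hw; simp at hw
    have hconjz : ((starRingEnd ℂ) z)⁻¹ = z := by
      rw [← Complex.inv_eq_conj hz, inv_inv]
    have hconjw : ((starRingEnd ℂ) w)⁻¹ = w := by
      rw [← Complex.inv_eq_conj hw, inv_inv]
    rw [map_sub, map_mul, map_mul, hRP, hRQ,
      eval_reflTwo n m P hPdeg z w hz0 hw0,
      eval_reflTwo n m Q hQdeg z w hz0 hw0, hconjz, hconjw]
    have hsq : eval ![z,w] P * (starRingEnd ℂ) (eval ![z,w] P)
        = eval ![z,w] Q * (starRingEnd ℂ) (eval ![z,w] Q) := by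
      rw [Complex.mul_conj, Complex.mul_conj]
      norm_cast
      rw [Complex.normSq_eq_norm_sq, Complex.normSq_eq_norm_sq, habs z w hz hw]
    linear_combination (z ^ n * w ^ m) * hsq
  -- Factor P according to which prime factors divide Q
  obtain ⟨u, hu⟩ := UniqueFactorizationMonoid.factors_prod hP0
  set S1 : Multiset (MvPolynomial (Fin 2) ℂ) :=
    (UniqueFactorizationMonoid.factors P).filter (fun π => π ∣ Q) with hS1
  set S2 : Multiset (MvPolynomial (Fin 2) ℂ) :=
    (UniqueFactorizationMonoid.factors P).filter (fun π => ¬ π ∣ Q) with hS2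
  set p : MvPolynomial (Fin 2) ℂ := S1.prod * (u : MvPolynomial (Fin 2) ℂ) with hp
  set qrev : MvPolynomial (Fin 2) ℂ := S2.prod with hqrev
  have hfact : P = p * qrev := by
    rw [← hu, hp, hqrev]
    have hsplit : (UniqueFactorizationMonoid.factors P) = S1 + S2 :=
      (Multiset.filter_add_not _ _).symm
    rw [hsplit, Multiset.prod_add]
    ring
  have hqrev0 : qrev ≠ 0 := fun h => hP0 (by rw [hfact, h, mul_zero])
  have hp0 : p ≠ 0 := fun h => hP0 (by rw [hfact, h, zero_mul])
  -- zero propagation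
  have hpzero : ∀ z w : ℂ, eval ![z, w] p = 0 → eval ![z, w] Q = 0 := by
    intro z w h
    rw [hp, map_mul] at h
    have huu : eval ![z, w] (u : MvPolynomial (Fin 2) ℂ) ≠ 0 :=
      (u.isUnit.map (eval ![z, w])).ne_zero
    have hS1z : eval ![z, w] S1.prod = 0 := by
      rcases mul_eq_zero.mp h with h' | h'
      · exact h'
      · exact absurd h' huu
    rw [map_multiset_prod] at hS1z
    obtain ⟨π, hπmem, hπz⟩ := Multiset.mem_map.mp (Multiset.prod_eq_zero_iff.mp hS1z)
    have hπQ : π ∣ Q := (Multiset.mem_filter.mp hπmem).2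
    obtain ⟨t, ht⟩ := hπQ
    rw [ht, map_mul, hπz, zero_mul]
  have hqrevzero : ∀ z w : ℂ, eval ![z, w] qrev = 0 → eval ![z, w] RQ = 0 := by
    intro z w h
    rw [hqrev, map_multiset_prod] at h
    obtain ⟨π, hπmem, hπz⟩ := Multiset.mem_map.mp (Multiset.prod_eq_zero_iff.mp h)
    have hπfac : π ∈ UniqueFactorizationMonoid.factors P := (Multiset.mem_filter.mp hπmem).1
    have hπnQ : ¬ π ∣ Q := (Multiset.mem_filter.mp hπmem).2
    have hπprime := UniqueFactorizationMonoid.prime_of_factor π hπfac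
    have hπP : π ∣ P := by
      have h1 : π ∣ (UniqueFactorizationMonoid.factors P).prod := Multiset.dvd_prod hπfac
      rw [← hu]
      exact h1.mul_right _
    have hπQRQ : π ∣ Q * RQ := by
      rw [← hident]
      exact hπP.mul_right _
    have hπRQ : π ∣ RQ := (hπprime.2.2 Q RQ hπQRQ).resolve_left hπnQ
    obtain ⟨t, ht⟩ := hπRQ
    rw [ht, map_mul, hπz, zero_mul]
  -- stability of p
  have hpstab : ∀ z w : ℂ, ‖z‖ ≤ 1 → ‖w‖ ≤ 1 → eval ![z, w] p ≠ 0 := by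
    apply keyB (fun z w => eval ![z, w] p) (eval_differentiable p) (eval_continuous2 p)
    · intro z w hz hw h0
      apply hPstab z w hz hw
      rw [hfact, map_mul, h0, zero_mul]
    · refine ⟨1, by simp, fun z hz h0 => ?_⟩
      exact hQstab z 1 hz (by simp) (hpzero z 1 h0)
  -- the reversed factor
  have hqrevdvd : ¬ (X 0 ∣ qrev) := by
    intro h
    exact hPz (by rw [hfact]; exact h.mul_left p)
  set N : ℕ := degreeOf 0 qrev with hN
  have hbox : ∀ d ∈ qrev.support, d 0 ≤ N := fun d hd => mem_support_le_degreeOf qrev d hd 0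
  have hexz : ∃ d ∈ qrev.support, d 0 = 0 := exists_z_exponent_zero qrev hqrevdvd
  set q : MvPolynomial (Fin 2) ℂ := reflZ N qrev with hq
  have hq0deg : degreeOf 0 q = N := degreeOf_reflZ_0 N qrev hbox hexz
  have hq1deg : degreeOf 1 q = degreeOf 1 qrev := degreeOf_reflZ_1 N qrev hbox
  -- stability of q
  have hqstab : ∀ z w : ℂ, ‖z‖ ≤ 1 → ‖w‖ ≤ 1 → eval ![z, w] q ≠ 0 := by
    apply keyB (fun z w => eval ![z, w] q) (eval_differentiable q) (eval_continuous2 q)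
    · -- |z| = 1, |w| ≤ 1
      intro z w hz hw h0
      have hz0 : z ≠ 0 := fun h => by rw [h] at hz; simp at hz
      rw [hq, eval_reflZ N qrev hbox z w hz0] at h0
      rcases mul_eq_zero.mp h0 with h' | h'
      · exact pow_ne_zero _ hz0 h'
      · have hinv : ‖z⁻¹‖ = 1 := by rw [norm_inv, hz]; norm_num
        apply hPstab z⁻¹ w hinv hw
        rw [hfact, map_mul, h', mul_zero]
    · -- the boundary point w₀
      set L : Polynomial ℂ :=
        ∑ d ∈ qrev.support.filter (fun d => d 0 = N), Polynomial.C (coeff d qrev) *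
          Polynomial.X ^ (d 1) with hL
      have hLeval : ∀ w : ℂ, L.eval w =
          ∑ d ∈ qrev.support.filter (fun d => d 0 = N), coeff d qrev * w ^ (d 1) := by
        intro w
        rw [hL, Polynomial.eval_finset_sum]
        exact Finset.sum_congr rfl fun d _ => by simp
      have hL0 : L ≠ 0 := by
        obtain ⟨ds, hds, hds0⟩ := exists_degreeOf_attained qrev hqrev0 0
        rw [← hN] at hds0
        intro hLz
        have hcoeff : L.coeff (ds 1) = coeff ds qrev := by
          rw [hL, Polynomial.finset_sum_coeff]
          rw [Finset.sum_eq_single ds]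
          · simp
          · intro d' hd' hne
            obtain ⟨hd'm, hd'0⟩ := Finset.mem_filter.mp hd'
            simp only [Polynomial.coeff_C_mul, Polynomial.coeff_X_pow]
            have hne1 : ¬ (d' 1 = ds 1) := by
              intro h11
              exact hne (by rw [eq_pf d', eq_pf ds, h11, hd'0, hds0])
            rw [if_neg (fun hh => hne1 hh.symm), mul_zero]
          · intro hnm
            exact absurd (Finset.mem_filter.mpr ⟨hds, hds0⟩) hnm
        rw [hLz] at hcoeff
        simp only [Polynomial.coeff_zero] at hcoeff
        exact (mem_support_iff.mp hds) hcoeff.symm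
      have hroots : {x : ℂ | L.IsRoot x}.Finite := L.finite_setOf_isRoot hL0
      obtain ⟨w0, hw0⟩ := (circle_infinite.diff hroots).nonempty
      obtain ⟨hw0circ, hw0root⟩ := hw0
      refine ⟨w0, hw0circ, fun z hzle h0 => ?_⟩
      by_cases hz0 : z = 0
      · subst hz0
        rw [hq, eval_reflZ_zero N qrev hbox w0] at h0
        rw [← hLeval w0] at h0
        exact hw0root h0
      · rw [hq, eval_reflZ N qrev hbox z w0 hz0] at h0
        rcases mul_eq_zero.mp h0 with h' | h'
        · exact pow_ne_zero _ hz0 h'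
        · -- eval qrev (z⁻¹, w0) = 0 with |z⁻¹| ≥ 1
          have hRQ0 := hqrevzero z⁻¹ w0 h'
          have hzinv0 : z⁻¹ ≠ 0 := inv_ne_zero hz0
          have hw00 : w0 ≠ 0 := fun h => by rw [h] at hw0circ; simp at hw0circ
          rw [hRQ, eval_reflTwo n m Q hQdeg z⁻¹ w0 hzinv0 hw00] at hRQ0
          have hQ0' : eval ![((starRingEnd ℂ) z⁻¹)⁻¹, ((starRingEnd ℂ) w0)⁻¹] Q = 0 := by
            rcases mul_eq_zero.mp hRQ0 with h'' | h''
            · rcases mul_eq_zero.mp h'' with h3 | h3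
              · exact absurd h3 (pow_ne_zero _ hzinv0)
              · exact absurd h3 (pow_ne_zero _ hw00)
            · simpa using h''
          apply hQstab _ _ ?_ ?_ hQ0'
          · rw [norm_inv, Complex.norm_conj, norm_inv, inv_inv]
            exact hzle
          · rw [norm_inv, Complex.norm_conj, hw0circ]
            norm_num
  -- eval identity for qrev
  have hevalid : ∀ z w : ℂ, z ≠ 0 →
      eval ![z, w] qrev = z ^ degreeOf 0 q * eval ![1 / z, w] q := by
    intro z w hz0
    rw [one_div, hq0deg, hq, eval_reflZ N qrev hbox z⁻¹ w (inv_ne_zero hz0), inv_inv]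
    rw [← mul_assoc, ← mul_pow, mul_inv_cancel₀ hz0, one_pow, one_mul]
  -- degree bounds
  have hdegP0 : degreeOf 0 P ≤ n := degreeOf_le_iff.mpr fun d hd => (hPdeg d hd).1
  have hdegP1 : degreeOf 1 P ≤ m := degreeOf_le_iff.mpr fun d hd => (hPdeg d hd).2
  have hsum0 : degreeOf 0 p + degreeOf 0 q ≤ n := by
    rw [hq0deg, hN, ← degreeOf_mul_eq' p qrev hp0 hqrev0 0, ← hfact]
    exact hdegP0
  have hsum1 : degreeOf 1 p + degreeOf 1 q ≤ m := by
    rw [hq1deg, ← degreeOf_mul_eq' p qrev hp0 hqrev0 1, ← hfact]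
    exact hdegP1
  exact ⟨p, q, qrev, degreeOf 0 p, degreeOf 1 p, degreeOf 0 q, degreeOf 1 q,
    hpstab, hqstab, rfl, rfl, rfl, rfl, hsum0, hsum1, hevalid, hfact⟩

end
end

section
/- Let p, q ∈ ℂ[z,w] be stable polynomials of degrees (n₁,m₁) and (n₂,m₂) respectively. Then the polynomial P(z,w) = p(z,w)·z^{n₂}·q(1/z, w) has degree exactly (n₁+n₂, m₁+m₂), and P is divisible neither by z nor by w (i.e., P(0,w) is not identically zero as a polynomial in w, and P(z,0) is not identically zero as a polynomial in z). -/
open MvPolynomial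

lemma cons_apply_one (i : ℕ) (m : Fin 1 →₀ ℕ) : (Finsupp.cons i m : Fin 2 →₀ ℕ) 1 = m 0 := by
  have : (1 : Fin 2) = Fin.succ 0 := rfl
  rw [this, Finsupp.cons_succ]

lemma apply_one_eq_tail (d : Fin 2 →₀ ℕ) : d 1 = Finsupp.tail d 0 := by
  rw [Finsupp.tail_apply]; rfl

noncomputable def revZ (N : ℕ) (q : MvPolynomial (Fin 2) ℂ) : MvPolynomial (Fin 2) ℂ :=
  (MvPolynomial.finSuccEquiv ℂ 1).symm (Polynomial.reflect N (MvPolynomial.finSuccEquiv ℂ 1 q))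

lemma finSuccEquiv_revZ (N : ℕ) (q : MvPolynomial (Fin 2) ℂ) :
    MvPolynomial.finSuccEquiv ℂ 1 (revZ N q) =
      Polynomial.reflect N (MvPolynomial.finSuccEquiv ℂ 1 q) :=
  AlgEquiv.apply_symm_apply _ _

lemma coeff_revZ (N : ℕ) (q : MvPolynomial (Fin 2) ℂ) (i : ℕ) (m : Fin 1 →₀ ℕ) :
    MvPolynomial.coeff (Finsupp.cons i m) (revZ N q) =
      MvPolynomial.coeff (Finsupp.cons (Polynomial.revAt N i) m) q := by
  rw [← MvPolynomial.finSuccEquiv_coeff_coeff, finSuccEquiv_revZ, Polynomial.coeff_reflect,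
    MvPolynomial.finSuccEquiv_coeff_coeff]

lemma eval_revZ (N : ℕ) (q : MvPolynomial (Fin 2) ℂ) (hq : q.degreeOf 0 ≤ N)
    (z w : ℂ) (hz : z ≠ 0) :
    eval ![z, w] (revZ N q) = z ^ N * eval ![1 / z, w] q := by
  have h1 : (![z, w] : Fin 2 → ℂ) = Fin.cons z ![w] := rfl
  have h2 : (![1 / z, w] : Fin 2 → ℂ) = Fin.cons (z⁻¹) ![w] := by
    rw [one_div]; rfl
  rw [h1, h2, MvPolynomial.eval_eq_eval_mv_eval', MvPolynomial.eval_eq_eval_mv_eval',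
    finSuccEquiv_revZ, ← Polynomial.reflect_map]
  set f : Polynomial ℂ := Polynomial.map (MvPolynomial.eval ![w])
    (MvPolynomial.finSuccEquiv ℂ 1 q) with hf
  have hdeg : f.natDegree ≤ N := by
    refine le_trans (Polynomial.natDegree_map_le) ?_
    rw [MvPolynomial.natDegree_finSuccEquiv]; exact hq
  have hz' : (z⁻¹ : ℂ) ≠ 0 := inv_ne_zero hz
  letI : Invertible (z⁻¹ : ℂ) := invertibleOfNonzero hz'
  have key := Polynomial.eval₂_reflect_mul_pow (RingHom.id ℂ) (z⁻¹) N f hdeg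
  have hinv : (⅟ (z⁻¹ : ℂ)) = z := by
    rw [invOf_eq_inv, inv_inv]
  rw [hinv] at key
  have key' : (Polynomial.reflect N f).eval z * (z⁻¹) ^ N = f.eval z⁻¹ := key
  have : (Polynomial.reflect N f).eval z = z ^ N * f.eval z⁻¹ := by
    rw [← key', ← mul_assoc, mul_comm (z ^ N) _, mul_assoc, ← mul_pow, mul_inv_cancel₀ hz,
      one_pow, mul_one]
  rw [this]

lemma degreeOf_one_revZ (N : ℕ) (q : MvPolynomial (Fin 2) ℂ) (hq : q.degreeOf 0 ≤ N) :
    (revZ N q).degreeOf 1 = q.degreeOf 1 := by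
  apply le_antisymm
  · rw [MvPolynomial.degreeOf_le_iff]
    intro d hd
    rw [MvPolynomial.mem_support_iff, ← Finsupp.cons_tail d, coeff_revZ] at hd
    have hmem : Finsupp.cons (Polynomial.revAt N (d 0)) (Finsupp.tail d) ∈ q.support :=
      MvPolynomial.mem_support_iff.2 hd
    have := Finset.le_sup (f := fun m : Fin 2 →₀ ℕ => m 1) hmem
    rw [← MvPolynomial.degreeOf_eq_sup] at this
    simp only [cons_apply_one] at this
    rw [← apply_one_eq_tail] at this
    exact this
  · rw [MvPolynomial.degreeOf_le_iff]
    intro d hd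
    have hd0 : d 0 ≤ N := le_trans (MvPolynomial.degreeOf_le_iff.1 le_rfl d hd) hq
    have hcoef : MvPolynomial.coeff (Finsupp.cons (Polynomial.revAt N (d 0)) (Finsupp.tail d))
        (revZ N q) ≠ 0 := by
      rw [coeff_revZ, Polynomial.revAt_invol, Finsupp.cons_tail]
      exact MvPolynomial.mem_support_iff.1 hd
    have hmem := MvPolynomial.mem_support_iff.2 hcoef
    have := Finset.le_sup (f := fun m : Fin 2 →₀ ℕ => m 1) hmem
    rw [← MvPolynomial.degreeOf_eq_sup] at this
    simp only [cons_apply_one] at this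
    rw [← apply_one_eq_tail] at this
    exact this

lemma degreeOf_zero_revZ (N : ℕ) (q : MvPolynomial (Fin 2) ℂ) (hq : q.degreeOf 0 ≤ N)
    (h0 : MvPolynomial.coeff 0 q ≠ 0) :
    (revZ N q).degreeOf 0 = N := by
  apply le_antisymm
  · rw [MvPolynomial.degreeOf_le_iff]
    intro d hd
    by_contra hlt
    push_neg at hlt
    rw [MvPolynomial.mem_support_iff, ← Finsupp.cons_tail d, coeff_revZ,
      Polynomial.revAt_eq_self_of_lt hlt] at hd
    apply hd
    by_contra hne
    have hmem := MvPolynomial.mem_support_iff.2 hne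
    have := le_trans (MvPolynomial.degreeOf_le_iff.1 le_rfl _ hmem) hq
    rw [Finsupp.cons_zero] at this
    omega
  · have hcoef : MvPolynomial.coeff (Finsupp.cons N (0 : Fin 1 →₀ ℕ)) (revZ N q) ≠ 0 := by
      rw [coeff_revZ, Polynomial.revAt_le le_rfl, Nat.sub_self, Finsupp.cons_zero_zero]
      exact h0
    have hmem := MvPolynomial.mem_support_iff.2 hcoef
    have := Finset.le_sup (f := fun m : Fin 2 →₀ ℕ => m 0) hmem
    rw [← MvPolynomial.degreeOf_eq_sup] at this
    simpa [Finsupp.cons_zero] using this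

lemma degreeOf_zero_mul (f g : MvPolynomial (Fin 2) ℂ) (hf : f ≠ 0) (hg : g ≠ 0) :
    (f * g).degreeOf 0 = f.degreeOf 0 + g.degreeOf 0 := by
  have hf' : MvPolynomial.finSuccEquiv ℂ 1 f ≠ 0 := fun h =>
    hf ((MvPolynomial.finSuccEquiv ℂ 1).injective (by rw [h, map_zero]))
  have hg' : MvPolynomial.finSuccEquiv ℂ 1 g ≠ 0 := fun h =>
    hg ((MvPolynomial.finSuccEquiv ℂ 1).injective (by rw [h, map_zero]))
  rw [← MvPolynomial.natDegree_finSuccEquiv, ← MvPolynomial.natDegree_finSuccEquiv,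
    ← MvPolynomial.natDegree_finSuccEquiv, map_mul, Polynomial.natDegree_mul hf' hg']

lemma degreeOf_one_mul (f g : MvPolynomial (Fin 2) ℂ) (hf : f ≠ 0) (hg : g ≠ 0) :
    (f * g).degreeOf 1 = f.degreeOf 1 + g.degreeOf 1 := by
  have hswap : Function.Injective (Equiv.swap (0 : Fin 2) 1) := Equiv.injective _
  have h1 : ∀ h : MvPolynomial (Fin 2) ℂ,
      h.degreeOf 1 = (MvPolynomial.rename (Equiv.swap (0 : Fin 2) 1) h).degreeOf 0 := by
    intro h
    have := MvPolynomial.degreeOf_rename_of_injective (p := h) hswap 1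
    rw [Equiv.swap_apply_right] at this
    exact this.symm
  rw [h1, h1, h1, map_mul]
  apply degreeOf_zero_mul
  · exact fun h => hf (MvPolynomial.rename_injective _ hswap (by rw [h, map_zero]))
  · exact fun h => hg (MvPolynomial.rename_injective _ hswap (by rw [h, map_zero]))

/-- **Fejér–Riesz paper, observation (i) in the proof of Theorem 2.10.**
Let `p, q ∈ ℂ[z,w]` be stable polynomials of degrees `(n₁,m₁)` and `(n₂,m₂)` respectively.
Then the polynomial `P(z,w) = p(z,w)·z^{n₂}·q(1/z,w)` (where `z^{n₂}·q(1/z,w)` is the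
reversal of the coefficients of `q` in `z`) has degree exactly `(n₁+n₂, m₁+m₂)` and is
divisible neither by `z` nor by `w`. -/
theorem fejer_riesz_thm_2_10_obs_i (n1 m1 n2 m2 : ℕ) (p q : MvPolynomial (Fin 2) ℂ)
    (hpdeg : p.degreeOf 0 = n1 ∧ p.degreeOf 1 = m1)
    (hqdeg : q.degreeOf 0 = n2 ∧ q.degreeOf 1 = m2)
    (hpstab : ∀ z w : ℂ, ‖z‖ ≤ 1 → ‖w‖ ≤ 1 → eval ![z, w] p ≠ 0)
    (hqstab : ∀ z w : ℂ, ‖z‖ ≤ 1 → ‖w‖ ≤ 1 → eval ![z, w] q ≠ 0)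
    (P : MvPolynomial (Fin 2) ℂ)
    (hP : ∀ z w : ℂ, z ≠ 0 →
      eval ![z, w] P = eval ![z, w] p * (z ^ n2 * eval ![1 / z, w] q)) :
    P.degreeOf 0 = n1 + n2 ∧ P.degreeOf 1 = m1 + m2 ∧ ¬ (X 0 ∣ P) ∧ ¬ (X 1 ∣ P) := by
  obtain ⟨hp1, hp2⟩ := hpdeg
  obtain ⟨hq1, hq2⟩ := hqdeg
  have habs0 : ‖(0 : ℂ)‖ ≤ 1 := by simp
  have hvec0 : (![0, 0] : Fin 2 → ℂ) = 0 := by funext i; fin_cases i <;> rfl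
  have h00q : MvPolynomial.coeff 0 q ≠ 0 := by
    have := hqstab 0 0 habs0 habs0
    rwa [hvec0, MvPolynomial.eval_zero] at this
  have h00p : MvPolynomial.coeff 0 p ≠ 0 := by
    have := hpstab 0 0 habs0 habs0
    rwa [hvec0, MvPolynomial.eval_zero] at this
  have hq0 : q ≠ 0 := fun h => h00q (by simp [h])
  have hp0 : p ≠ 0 := fun h => h00p (by simp [h])
  set Q := revZ n2 q with hQdef
  have hQcoef : MvPolynomial.coeff (Finsupp.cons n2 (0 : Fin 1 →₀ ℕ)) Q ≠ 0 := by
    rw [hQdef, coeff_revZ, Polynomial.revAt_le le_rfl, Nat.sub_self, Finsupp.cons_zero_zero]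
    exact h00q
  have hQ0 : Q ≠ 0 := fun h => hQcoef (by simp [h])
  -- P = p * Q
  have hPQ : P = p * Q := by
    have hX0 : (X 0 : MvPolynomial (Fin 2) ℂ) ≠ 0 := MvPolynomial.X_ne_zero 0
    refine mul_left_cancel₀ hX0 ?_
    apply MvPolynomial.funext
    intro x
    have hx : x = ![x 0, x 1] := by funext i; fin_cases i <;> rfl
    rw [hx]
    by_cases hz : x 0 = 0
    · simp [hz]
    · rw [map_mul, map_mul, map_mul, hP (x 0) (x 1) hz,
        eval_revZ n2 q hq1.le (x 0) (x 1) hz]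
  have hdeg0 : P.degreeOf 0 = n1 + n2 := by
    rw [hPQ, degreeOf_zero_mul p Q hp0 hQ0, hp1, hQdef,
      degreeOf_zero_revZ n2 q hq1.le h00q]
  have hdeg1 : P.degreeOf 1 = m1 + m2 := by
    rw [hPQ, degreeOf_one_mul p Q hp0 hQ0, hp2, hQdef,
      degreeOf_one_revZ n2 q hq1.le, hq2]
  refine ⟨hdeg0, hdeg1, ?_, ?_⟩
  · -- ¬ X 0 ∣ P
    intro hdvd
    rw [hPQ] at hdvd
    have hdvd' := map_dvd (MvPolynomial.finSuccEquiv ℂ 1) hdvd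
    rw [map_mul, MvPolynomial.finSuccEquiv_X_zero] at hdvd'
    rcases (Polynomial.prime_X).2.2 _ _ hdvd' with h | h
    · rw [Polynomial.X_dvd_iff] at h
      have : MvPolynomial.coeff 0 ((MvPolynomial.finSuccEquiv ℂ 1 p).coeff 0) =
          MvPolynomial.coeff 0 p := by
        rw [MvPolynomial.finSuccEquiv_coeff_coeff, Finsupp.cons_zero_zero]
      rw [h] at this
      simp only [MvPolynomial.coeff_zero] at this
      exact h00p this.symm
    · rw [hQdef, finSuccEquiv_revZ, Polynomial.X_dvd_iff, Polynomial.coeff_reflect,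
        Polynomial.revAt_le (Nat.zero_le _), Nat.sub_zero] at h
      have hGne : MvPolynomial.finSuccEquiv ℂ 1 q ≠ 0 := fun hh =>
        hq0 ((MvPolynomial.finSuccEquiv ℂ 1).injective (by rw [hh, map_zero]))
      have := Polynomial.leadingCoeff_ne_zero.2 hGne
      rw [Polynomial.leadingCoeff, MvPolynomial.natDegree_finSuccEquiv, hq1, h] at this
      exact this rfl
  · -- ¬ X 1 ∣ P
    rintro ⟨R, hR⟩
    have h1 := hP 1 0 one_ne_zero
    rw [hR] at h1
    have hL : MvPolynomial.eval ![(1 : ℂ), 0] (MvPolynomial.X 1 * R) = 0 := by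
      rw [map_mul, MvPolynomial.eval_X]
      simp
    rw [hL] at h1
    have hp' := hpstab 1 0 (by simp) habs0
    have hq' := hqstab 1 0 (by simp) habs0
    rw [show (1 : ℂ) / 1 = 1 by norm_num] at h1
    simp only [one_pow, one_mul] at h1
    exact mul_ne_zero hp' hq' h1.symm
end

section
/- Let P ∈ ℂ[z,w] be a polynomial of degree (n₀,m₀) which is divisible neither by z nor by w, and let n, m be nonnegative integers. If the Laurent polynomial P(z,w)·P̄(1/z,1/w) lies in the span of {z^k w^l : |k| ≤ n, |l| ≤ m} (where P̄ denotes P with conjugated coefficients), then n₀ ≤ n and m₀ ≤ m. -/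
open MvPolynomial

/-- Reflection evaluation in a field: `(reflect N f)(z) * z⁻¹^N = f(z⁻¹)`. -/
lemma fr_eval_reflect (N : ℕ) (f : Polynomial ℂ) (hf : f.natDegree ≤ N) {z : ℂ}
    (hz : z ≠ 0) :
    Polynomial.eval z (Polynomial.reflect N f) * (z⁻¹) ^ N = Polynomial.eval z⁻¹ f := by
  letI := invertibleOfNonzero (inv_ne_zero hz)
  have h := Polynomial.eval₂_reflect_mul_pow (RingHom.id ℂ) z⁻¹ N f hf
  rw [invOf_eq_inv, inv_inv] at h
  exact h

lemma fr_eval_nil_injective : Function.Injective (eval (![] : Fin 0 → ℂ)) := by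
  have h1 : Function.Injective (aeval (![] : Fin 0 → ℂ) : MvPolynomial (Fin 0) ℂ →ₐ[ℂ] ℂ) :=
    aeval_injective_iff_of_isEmpty.mpr (RingHom.injective _)
  intro x y hxy
  apply h1
  rw [aeval_def, aeval_def, Algebra.algebraMap_self, eval₂_id, eval₂_id]
  exact hxy

/-- If `A(w) * B(1/w) = 0` for all nonzero `w`, with `A B` nonzero one-variable
polynomials, we get a contradiction. -/
lemma fr_one_var_aux (A B : MvPolynomial (Fin 1) ℂ) (hA : A ≠ 0) (hB : B ≠ 0)
    (key : ∀ w : ℂ, w ≠ 0 → eval ![w] A * eval ![w⁻¹] B = 0) : False := by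
  set A1 := (finSuccEquiv ℂ 0 A).map (eval (![] : Fin 0 → ℂ)) with hA1def
  set B1 := (finSuccEquiv ℂ 0 B).map (eval (![] : Fin 0 → ℂ)) with hB1def
  have hA1 : A1 ≠ 0 := by
    intro h
    have h2 := (Polynomial.map_eq_zero_iff fr_eval_nil_injective).mp h
    exact hA ((finSuccEquiv ℂ 0).injective (by rw [h2, map_zero]))
  have hB1 : B1 ≠ 0 := by
    intro h
    have h2 := (Polynomial.map_eq_zero_iff fr_eval_nil_injective).mp h
    exact hB ((finSuccEquiv ℂ 0).injective (by rw [h2, map_zero]))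
  set N := B1.natDegree with hN
  have hroot : ∀ w : ℂ, w ≠ 0 →
      Polynomial.eval w (A1 * Polynomial.reflect N B1) = 0 := by
    intro w hw
    have h2 : Polynomial.eval w (Polynomial.reflect N B1) * (w⁻¹) ^ N =
        Polynomial.eval w⁻¹ B1 := fr_eval_reflect N B1 le_rfl hw
    have e1 : eval ![w] A = Polynomial.eval w A1 := eval_eq_eval_mv_eval' ![] w A
    have e2 : eval ![w⁻¹] B = Polynomial.eval w⁻¹ B1 := eval_eq_eval_mv_eval' ![] w⁻¹ B
    have hk := key w hw
    rw [Polynomial.eval_mul]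
    have hwn : (w⁻¹ : ℂ) ^ N ≠ 0 := pow_ne_zero _ (inv_ne_zero hw)
    have hmain : Polynomial.eval w A1 * Polynomial.eval w (Polynomial.reflect N B1) *
        (w⁻¹) ^ N = 0 := by
      rw [mul_assoc, h2, ← e1, ← e2]; exact hk
    exact (mul_eq_zero.mp hmain).resolve_right hwn
  have hinf : ({w : ℂ | w ≠ 0}).Infinite :=
    Set.Finite.infinite_compl (Set.finite_singleton 0)
  have hzero : A1 * Polynomial.reflect N B1 = 0 := by
    apply Polynomial.eq_zero_of_infinite_isRoot
    exact hinf.mono fun w hw => hroot w hw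
  rcases mul_eq_zero.mp hzero with h | h
  · exact hA1 h
  · have hc := congrArg (fun f => Polynomial.coeff f 0) h
    simp only [Polynomial.coeff_reflect, Polynomial.coeff_zero] at hc
    rw [Polynomial.revAt_le (Nat.zero_le N), Nat.sub_zero] at hc
    exact hB1 (Polynomial.leadingCoeff_eq_zero.mp hc)

/-- Core argument: the bound on the first variable. -/
lemma fr_aux (n m n0 : ℕ) (P : MvPolynomial (Fin 2) ℂ)
    (hdeg : P.degreeOf 0 = n0) (hz : ¬ (X 0 ∣ P)) (a : ℤ → ℤ → ℂ)
    (ha : ∀ z w : ℂ, z ≠ 0 → w ≠ 0 →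
      eval ![z, w] P *
          eval ![1 / z, 1 / w] (MvPolynomial.map (starRingEnd ℂ) P) =
        ∑ k ∈ Finset.Icc (-(n : ℤ)) (n : ℤ), ∑ l ∈ Finset.Icc (-(m : ℤ)) (m : ℤ),
          a k l * z ^ k * w ^ l) :
    n0 ≤ n := by
  by_contra hcon
  push_neg at hcon  -- n < n0
  set P' := MvPolynomial.map (starRingEnd ℂ) P with hP'def
  have hP0 : P ≠ 0 := fun h => hz (h ▸ dvd_zero _)
  have hP'0 : P' ≠ 0 := fun h => hP0 (MvPolynomial.map_injective _ (RingHom.injective _)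
    (by rw [← hP'def, h, map_zero]))
  set p := finSuccEquiv ℂ 1 P with hpdef
  set q := finSuccEquiv ℂ 1 P' with hqdef
  have hpdeg : p.natDegree = n0 := by rw [hpdef, natDegree_finSuccEquiv, hdeg]
  have hsupp : P'.support = P.support :=
    support_map_of_injective P (RingHom.injective (starRingEnd ℂ))
  have hqdeg : q.natDegree = n0 := by
    rw [hqdef, natDegree_finSuccEquiv, degreeOf_eq_sup, hsupp, ← degreeOf_eq_sup, hdeg]
  have hq0 : q ≠ 0 := fun h => hP'0 ((finSuccEquiv ℂ 1).injective (by rw [← hqdef, h, map_zero]))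
  have hA : p.coeff 0 ≠ 0 := by
    intro h0
    apply hz
    have hXdvd : Polynomial.X ∣ p := Polynomial.X_dvd_iff.mpr h0
    have hsX : (finSuccEquiv ℂ 1).symm Polynomial.X = X 0 := by
      rw [← finSuccEquiv_X_zero (R := ℂ) (n := 1)]
      exact (finSuccEquiv ℂ 1).symm_apply_apply _
    have := map_dvd (finSuccEquiv ℂ 1).symm hXdvd
    rwa [hsX, hpdef, (finSuccEquiv ℂ 1).symm_apply_apply] at this
  have hB : q.coeff n0 ≠ 0 := by
    rw [← hqdeg]
    exact fun h => hq0 (Polynomial.leadingCoeff_eq_zero.mp h)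
  refine fr_one_var_aux (p.coeff 0) (q.coeff n0) hA hB ?_
  intro w hw
  set pw : Polynomial ℂ := p.map (eval ![w]) with hpwdef
  set qw : Polynomial ℂ := q.map (eval ![w⁻¹]) with hqwdef
  have hqwdeg : qw.natDegree ≤ n0 := hqdeg ▸ Polynomial.natDegree_map_le
  set R : Polynomial ℂ :=
    ∑ k ∈ Finset.Icc (-(n : ℤ)) (n : ℤ), ∑ l ∈ Finset.Icc (-(m : ℤ)) (m : ℤ),
      Polynomial.C (a k l * w ^ l) * Polynomial.X ^ (k + n0).toNat with hRdef
  have hroot : ∀ z : ℂ, z ≠ 0 →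
      Polynomial.eval z (pw * Polynomial.reflect n0 qw - R) = 0 := by
    intro z hz'
    have h1 : Polynomial.eval z pw = eval ![z, w] P := (eval_eq_eval_mv_eval' ![w] z P).symm
    have h2 : Polynomial.eval z (Polynomial.reflect n0 qw) * (z⁻¹) ^ n0 =
        Polynomial.eval z⁻¹ qw := fr_eval_reflect n0 qw hqwdeg hz'
    have h3 : Polynomial.eval z⁻¹ qw = eval ![z⁻¹, w⁻¹] P' :=
      (eval_eq_eval_mv_eval' ![w⁻¹] z⁻¹ P').symm
    have h4 := ha z w hz' hw
    rw [one_div, one_div] at h4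
    have h2' : Polynomial.eval z (Polynomial.reflect n0 qw) =
        eval ![z⁻¹, w⁻¹] P' * z ^ n0 := by
      have hzn : (z⁻¹ : ℂ) ^ n0 * z ^ n0 = 1 := by
        rw [← mul_pow, inv_mul_cancel₀ hz', one_pow]
      calc Polynomial.eval z (Polynomial.reflect n0 qw)
          = Polynomial.eval z (Polynomial.reflect n0 qw) * ((z⁻¹) ^ n0 * z ^ n0) := by
            rw [hzn, mul_one]
        _ = (Polynomial.eval z (Polynomial.reflect n0 qw) * (z⁻¹) ^ n0) * z ^ n0 := by ring
        _ = eval ![z⁻¹, w⁻¹] P' * z ^ n0 := by rw [h2, h3]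
    have h5 : Polynomial.eval z R =
        (∑ k ∈ Finset.Icc (-(n : ℤ)) (n : ℤ), ∑ l ∈ Finset.Icc (-(m : ℤ)) (m : ℤ),
          a k l * z ^ k * w ^ l) * z ^ n0 := by
      rw [hRdef, Polynomial.eval_finset_sum, Finset.sum_mul]
      refine Finset.sum_congr rfl fun k hk => ?_
      rw [Polynomial.eval_finset_sum, Finset.sum_mul]
      refine Finset.sum_congr rfl fun l hl => ?_
      rw [Polynomial.eval_mul, Polynomial.eval_C, Polynomial.eval_pow, Polynomial.eval_X]
      have hk0 : (0 : ℤ) ≤ k + n0 := by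
        have := (Finset.mem_Icc.mp hk).1
        omega
      have hze : (z : ℂ) ^ ((k + n0).toNat) = z ^ k * z ^ (n0 : ℕ) := by
        rw [← zpow_natCast z ((k + n0).toNat), Int.toNat_of_nonneg hk0,
          zpow_add₀ hz', zpow_natCast]
      rw [hze]
      ring
    rw [Polynomial.eval_sub, Polynomial.eval_mul, h1, h2', h5]
    linear_combination ((z : ℂ) ^ n0) * h4
  have hinf : ({z : ℂ | z ≠ 0}).Infinite :=
    Set.Finite.infinite_compl (Set.finite_singleton 0)
  have hzero : pw * Polynomial.reflect n0 qw - R = 0 := by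
    apply Polynomial.eq_zero_of_infinite_isRoot
    exact hinf.mono fun z hz' => hroot z hz'
  have h0 := congrArg (Polynomial.eval 0) hzero
  rw [Polynomial.eval_sub, Polynomial.eval_mul, Polynomial.eval_zero, sub_eq_zero] at h0
  have hR0 : Polynomial.eval 0 R = 0 := by
    rw [hRdef, Polynomial.eval_finset_sum]
    refine Finset.sum_eq_zero fun k hk => ?_
    rw [Polynomial.eval_finset_sum]
    refine Finset.sum_eq_zero fun l hl => ?_
    rw [Polynomial.eval_mul, Polynomial.eval_pow, Polynomial.eval_X]
    have hk0 : (k + n0).toNat ≠ 0 := by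
      have := (Finset.mem_Icc.mp hk).1
      omega
    rw [zero_pow hk0, mul_zero]
  have e1 : Polynomial.eval 0 pw = eval ![w] (p.coeff 0) := by
    rw [← Polynomial.coeff_zero_eq_eval_zero, hpwdef, Polynomial.coeff_map]
  have e2 : Polynomial.eval 0 (Polynomial.reflect n0 qw) = eval ![w⁻¹] (q.coeff n0) := by
    rw [← Polynomial.coeff_zero_eq_eval_zero, Polynomial.coeff_reflect,
      Polynomial.revAt_le (Nat.zero_le n0), Nat.sub_zero, hqwdef, Polynomial.coeff_map]
  rw [e1, e2, hR0] at h0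
  exact h0

/-- **Fejér–Riesz paper, observation (ii) in the proof of Theorem 2.10.**
Let `P ∈ ℂ[z,w]` have degree exactly `(n₀,m₀)` and be divisible neither by `z` nor by `w`.
If the Laurent polynomial `P(z,w)·P̄(1/z,1/w)` lies in the span of
`{z^k w^l : |k| ≤ n, |l| ≤ m}` — i.e. there are coefficients `a k l` with
`P(z,w)·P̄(1/z,1/w) = ∑_{|k| ≤ n} ∑_{|l| ≤ m} a k l · z^k·w^l` for all `z, w ≠ 0` —
then `n₀ ≤ n` and `m₀ ≤ m`. -/
theorem fejer_riesz_thm_2_10_obs_ii (n m n0 m0 : ℕ) (P : MvPolynomial (Fin 2) ℂ)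
    (hdeg : P.degreeOf 0 = n0 ∧ P.degreeOf 1 = m0)
    (hz : ¬ (X 0 ∣ P)) (hw : ¬ (X 1 ∣ P))
    (a : ℤ → ℤ → ℂ)
    (ha : ∀ z w : ℂ, z ≠ 0 → w ≠ 0 →
      eval ![z, w] P *
          eval ![1 / z, 1 / w] (MvPolynomial.map (starRingEnd ℂ) P) =
        ∑ k ∈ Finset.Icc (-(n : ℤ)) (n : ℤ), ∑ l ∈ Finset.Icc (-(m : ℤ)) (m : ℤ),
          a k l * z ^ k * w ^ l) :
    n0 ≤ n ∧ m0 ≤ m := by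
  constructor
  · exact fr_aux n m n0 P hdeg.1 hz a ha
  · -- swap the variables
    set σ : Fin 2 ≃ Fin 2 := Equiv.swap 0 1 with hσ
    set Q := rename σ P with hQ
    have hswap : ∀ z w : ℂ, (![z, w] ∘ σ) = ![w, z] := by
      intro z w
      funext i
      fin_cases i <;> simp [hσ, Equiv.swap_apply_left, Equiv.swap_apply_right]
    have hdegQ : Q.degreeOf 0 = m0 := by
      have := degreeOf_rename_of_injective (p := P) (f := σ) σ.injective 1
      rw [hQ]
      rw [show σ 1 = 0 from Equiv.swap_apply_right 0 1] at this
      rw [this, hdeg.2]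
    have hzQ : ¬ (X 0 ∣ Q) := by
      intro hdvd
      apply hw
      have h2 := map_dvd (renameEquiv ℂ σ).symm hdvd
      have e0 : (renameEquiv ℂ σ).symm (X 0) = X 1 := by
        simp [renameEquiv, hσ, Equiv.swap_apply_left]
      have e1 : (renameEquiv ℂ σ).symm Q = P := by
        show (renameEquiv ℂ σ).symm (rename (⇑σ) P) = P
        exact (renameEquiv ℂ σ).symm_apply_apply P
      rwa [e0, e1] at h2
    refine fr_aux m n m0 Q hdegQ hzQ (fun k l => a l k) ?_
    intro z w hz' hw'
    have hmap : MvPolynomial.map (starRingEnd ℂ) Q = rename σ (MvPolynomial.map (starRingEnd ℂ) P) := by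
      rw [hQ, map_rename]
    have heval1 : eval ![z, w] Q = eval ![w, z] P := by
      rw [hQ, eval_rename, hswap]
    have heval2 : eval ![1 / z, 1 / w] (MvPolynomial.map (starRingEnd ℂ) Q) =
        eval ![1 / w, 1 / z] (MvPolynomial.map (starRingEnd ℂ) P) := by
      rw [hmap, eval_rename, hswap]
    rw [heval1, heval2, ha w z hw' hz', Finset.sum_comm]
    refine Finset.sum_congr rfl fun k hk => Finset.sum_congr rfl fun l hl => ?_
    ring
end

section
/- Let h ∈ ℂ[z,w] be a polynomial of degree (k,l). If h(z,w) ≠ 0 whenever |z| ≤ 1 and |w| ≤ 1, and also z^k·h(1/z, w) ≠ 0 whenever |z| ≤ 1 and |w| ≤ 1 (where z^k·h(1/z,w) is the polynomial obtained by reversing the coefficients of h in z), then k = 0, i.e., h does not depend on z. -/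
open MvPolynomial

/-- **Fejér–Riesz paper, observation in the proof of Corollary 2.9.**
Let `h ∈ ℂ[z,w]` be a polynomial of degree `(k,l)`. If both `h` and its reversal in `z`,
`z^k·h(1/z,w)` (here the polynomial `hrev`), are stable (nonzero for `|z| ≤ 1` and
`|w| ≤ 1`), then `k = 0`, i.e. `h` does not depend on `z`. -/
theorem fejer_riesz_cor_2_9_obs (k l : ℕ) (h hrev : MvPolynomial (Fin 2) ℂ)
    (hdeg : h.degreeOf 0 = k ∧ h.degreeOf 1 = l)
    (hchar : ∀ z w : ℂ, z ≠ 0 → eval ![z, w] hrev = z ^ k * eval ![1 / z, w] h)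
    (hstab : ∀ z w : ℂ, ‖z‖ ≤ 1 → ‖w‖ ≤ 1 → eval ![z, w] h ≠ 0)
    (hstabrev : ∀ z w : ℂ, ‖z‖ ≤ 1 → ‖w‖ ≤ 1 →
      eval ![z, w] hrev ≠ 0) :
    k = 0 := by
  by_contra hk0
  have hkpos : 0 < k := Nat.pos_of_ne_zero hk0
  have habs0 : ‖(0 : ℂ)‖ ≤ 1 := by simp
  set h' : Polynomial (MvPolynomial (Fin 1) ℂ) := finSuccEquiv ℂ 1 h with hh'
  have key : ∀ z w : ℂ, eval ![z, w] h = Polynomial.eval z (h'.map (eval ![w])) :=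
    fun z w => eval_eq_eval_mv_eval' ![w] z h
  -- each slice is constant in z
  have hconst : ∀ w : ℂ, ‖w‖ ≤ 1 → (h'.map (eval ![w])).natDegree = 0 := by
    intro w hw
    by_contra hd
    have hdegpos : 0 < (h'.map (eval ![w])).degree :=
      Polynomial.natDegree_pos_iff_degree_pos.mp (Nat.pos_of_ne_zero hd)
    obtain ⟨z, hz⟩ := Complex.exists_root hdegpos
    have hzval : eval ![z, w] h = 0 := by rw [key]; exact hz
    rcases le_or_gt ‖z‖ 1 with hle | hgt
    · exact hstab z w hle hw hzval
    · have hz0 : z ≠ 0 := by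
        intro e; rw [e] at hgt; simp at hgt; exact absurd hgt (by norm_num)
      have hu : ‖z⁻¹‖ ≤ 1 := by
        rw [norm_inv]
        exact inv_le_one_of_one_le₀ hgt.le
      have hrv := hstabrev z⁻¹ w hu hw
      rw [hchar z⁻¹ w (inv_ne_zero hz0), one_div, inv_inv, hzval, mul_zero] at hrv
      exact hrv rfl
  have hne : h ≠ 0 := fun e => hstab 0 0 habs0 habs0 (by simp [e])
  have hne' : h' ≠ 0 := by
    rw [hh']
    exact (map_ne_zero_iff _ (AlgEquiv.injective _)).mpr hne
  have hdegk : h'.natDegree = k := by rw [hh', natDegree_finSuccEquiv, hdeg.1]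
  set g : MvPolynomial (Fin 1) ℂ := h'.coeff k with hg
  have hgne : g ≠ 0 := by
    have hlc : h'.leadingCoeff ≠ 0 := Polynomial.leadingCoeff_ne_zero.mpr hne'
    rw [Polynomial.leadingCoeff, hdegk] at hlc
    exact hlc
  have hvan : ∀ w : ℂ, ‖w‖ ≤ 1 → eval ![w] g = 0 := by
    intro w hw
    have h1 : (h'.map (eval ![w])).coeff k = 0 :=
      Polynomial.coeff_eq_zero_of_natDegree_lt (by rw [hconst w hw]; exact hkpos)
    rwa [Polynomial.coeff_map] at h1
  set P : Polynomial ℂ := (finSuccEquiv ℂ 0 g).map (eval ![]) with hP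
  have keyP : ∀ a : ℂ, eval ![a] g = Polynomial.eval a P :=
    fun a => eval_eq_eval_mv_eval' ![] a g
  have hinj : Function.Injective (eval (![] : Fin 0 → ℂ) : MvPolynomial (Fin 0) ℂ →+* ℂ) := by
    intro p q hpq
    apply MvPolynomial.funext
    intro x
    have hx : x = ![] := funext fun i => Fin.elim0 i
    rwa [hx]
  have hPne : P ≠ 0 := by
    intro e
    apply hgne
    have h2 : finSuccEquiv ℂ 0 g = 0 :=
      Polynomial.map_injective _ hinj (by rw [← hP, e, Polynomial.map_zero])
    exact (map_eq_zero_iff _ (AlgEquiv.injective _)).mp h2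
  have hroots : {x : ℂ | Polynomial.IsRoot P x}.Infinite := by
    refine Set.infinite_of_injective_forall_mem
      (f := fun n : ℕ => (((n + 1 : ℕ) : ℂ))⁻¹) ?_ ?_
    · intro a b hab
      have : ((a + 1 : ℕ) : ℂ) = ((b + 1 : ℕ) : ℂ) := inv_injective hab
      have := Nat.cast_injective (R := ℂ) this
      omega
    · intro n
      have habs : ‖(((n + 1 : ℕ) : ℂ))⁻¹‖ ≤ 1 := by
        rw [norm_inv, Complex.norm_natCast]
        apply inv_le_one_of_one_le₀
        exact_mod_cast Nat.one_le_iff_ne_zero.mpr (Nat.succ_ne_zero n)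
      have := hvan _ habs
      rw [keyP] at this
      exact this
  exact hPne (Polynomial.eq_zero_of_infinite_isRoot P hroots)
end

section
/- A polynomial p ∈ ℂ[z,w] satisfies p(z,w) ≠ 0 for all |z| ≤ 1, |w| ≤ 1 if and only if both of the following hold: p(z,w) ≠ 0 for all |z| = 1, |w| ≤ 1, and p(z,w) ≠ 0 for all |z| ≤ 1, |w| = 1. -/
open MvPolynomial Metric Set Filter

/-- **Fejér–Riesz paper, stability criterion (Section 3.3).**
A polynomial `p ∈ ℂ[z,w]` is stable (nonzero on the closed bidisk `|z| ≤ 1`, `|w| ≤ 1`)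
if and only if it is nonzero both for `|z| = 1`, `|w| ≤ 1` and for `|z| ≤ 1`, `|w| = 1`. -/
theorem fejer_riesz_stability_criterion (p : MvPolynomial (Fin 2) ℂ) :
    (∀ z w : ℂ, ‖z‖ ≤ 1 → ‖w‖ ≤ 1 → eval ![z, w] p ≠ 0) ↔
      ((∀ z w : ℂ, ‖z‖ = 1 → ‖w‖ ≤ 1 → eval ![z, w] p ≠ 0) ∧
       (∀ z w : ℂ, ‖z‖ ≤ 1 → ‖w‖ = 1 → eval ![z, w] p ≠ 0)) := by
  constructor
  · intro h
    exact ⟨fun z w hz hw => h z w hz.le hw, fun z w hz hw => h z w hz hw.le⟩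
  rintro ⟨h1, h2⟩
  have habs : ∀ x : ℂ, ‖x‖ = ‖x‖ := fun x => rfl
  -- rewrite hypotheses in terms of norms
  have h1' : ∀ z w : ℂ, ‖z‖ = 1 → ‖w‖ ≤ 1 → eval ![z, w] p ≠ 0 := by
    intro z w hz hw; exact h1 z w (by rw [habs, hz]) (by rw [habs]; exact hw)
  have h2' : ∀ z w : ℂ, ‖z‖ ≤ 1 → ‖w‖ = 1 → eval ![z, w] p ≠ 0 := by
    intro z w hz hw; exact h2 z w (by rw [habs]; exact hz) (by rw [habs, hw])
  -- key expansion of the evaluation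
  have key : ∀ z w : ℂ, eval ![z, w] p =
      ∑ d ∈ p.support, coeff d p * (z ^ d 0 * w ^ d 1) := by
    intro z w
    rw [eval_eq']
    refine Finset.sum_congr rfl fun d _ => ?_
    congr 1
    rw [Fin.prod_univ_two]
    simp
  -- differentiability in the first variable
  have hdiff : ∀ w : ℂ, Differentiable ℂ (fun z => eval ![z, w] p) := by
    intro w
    have : (fun z => eval ![z, w] p)
        = fun z => ∑ d ∈ p.support, coeff d p * (z ^ d 0 * w ^ d 1) :=
      funext fun z => by rw [key z w]
    rw [this]
    exact Differentiable.fun_sum fun d _ =>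
      (((differentiable_pow (d 0)).mul_const _).const_mul _)
  -- joint continuity
  have hFcont : Continuous (fun q : ℂ × ℂ => eval ![q.1, q.2] p) := by
    have : (fun q : ℂ × ℂ => eval ![q.1, q.2] p)
        = fun q : ℂ × ℂ => ∑ d ∈ p.support, coeff d p * (q.1 ^ d 0 * q.2 ^ d 1) :=
      funext fun q => key q.1 q.2
    rw [this]
    exact continuous_finset_sum _ fun d _ =>
      continuous_const.mul ((continuous_fst.pow _).mul (continuous_snd.pow _))
  by_contra hc
  push_neg at hc
  obtain ⟨z0, w0, hz0, hw0, hp0⟩ := hc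
  rw [habs] at hz0 hw0
  -- the "bad" set of parameters w
  set S : Set ℂ :=
    Prod.snd '' ((closedBall (0 : ℂ) 1 ×ˢ closedBall (0 : ℂ) 1) ∩
      (fun q : ℂ × ℂ => eval ![q.1, q.2] p) ⁻¹' {0}) with hSdef
  have hSmem : ∀ w : ℂ, w ∈ S ↔ (‖w‖ ≤ 1 ∧ ∃ z : ℂ, ‖z‖ ≤ 1 ∧ eval ![z, w] p = 0) := by
    intro w
    constructor
    · rintro ⟨⟨z, w'⟩, ⟨⟨hz, hw⟩, hF⟩, rfl⟩
      exact ⟨mem_closedBall_zero_iff.mp hw, z, mem_closedBall_zero_iff.mp hz, hF⟩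
    · rintro ⟨hw, z, hz, hF⟩
      exact ⟨(z, w), ⟨⟨mem_closedBall_zero_iff.mpr hz, mem_closedBall_zero_iff.mpr hw⟩, hF⟩, rfl⟩
  have hScompact : IsCompact S :=
    (((isCompact_closedBall _ _).prod (isCompact_closedBall _ _)).inter_right
      (isClosed_singleton.preimage hFcont)).image continuous_snd
  -- openness of S within the closed unit disk
  have hopen : ∀ w1 ∈ S, ∃ δ > 0, ∀ w : ℂ, ‖w - w1‖ < δ → ‖w‖ ≤ 1 → w ∈ S := by
    intro w1 hw1S
    obtain ⟨hw1, z1, hz1, hp1⟩ := (hSmem w1).mp hw1S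
    have hz1lt : ‖z1‖ < 1 :=
      lt_of_le_of_ne hz1 fun h => h1' z1 w1 h hw1 hp1
    set q : ℂ → ℂ := fun z => eval ![z, w1] p with hqdef
    have hqa : AnalyticOnNhd ℂ q univ :=
      Complex.analyticOnNhd_univ_iff_differentiable.mpr (hdiff w1)
    have hne : ¬ (q =ᶠ[nhds z1] 0) := by
      intro h
      exact h1' 1 w1 (by simp) hw1
        (hqa.eqOn_zero_of_preconnected_of_eventuallyEq_zero isPreconnected_univ
          (mem_univ z1) h (mem_univ 1))
    have hiso : ∀ᶠ z in nhdsWithin z1 {z1}ᶜ, q z ≠ 0 :=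
      ((hqa z1 (mem_univ _)).eventually_eq_zero_or_eventually_ne_zero).resolve_left hne
    rw [eventually_nhdsWithin_iff] at hiso
    rw [Metric.eventually_nhds_iff] at hiso
    obtain ⟨ε, hε, hiso⟩ := hiso
    set r : ℝ := min (ε / 2) ((1 - ‖z1‖) / 2) with hrdef
    have hr : 0 < r := lt_min (by linarith) (by linarith)
    have hrball : ∀ z : ℂ, ‖z - z1‖ ≤ r → ‖z‖ < 1 := by
      intro z hz
      have h3 : ‖z‖ ≤ ‖z - z1‖ + ‖z1‖ := by
        calc ‖z‖ = ‖z - z1 + z1‖ := by ring_nf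
        _ ≤ ‖z - z1‖ + ‖z1‖ := norm_add_le _ _
      have h4 : r ≤ (1 - ‖z1‖) / 2 := min_le_right _ _
      linarith
    have hsphere_ne : ∀ z ∈ sphere z1 r, q z ≠ 0 := by
      intro z hz
      have hd : dist z z1 = r := mem_sphere.mp hz
      refine hiso ?_ ?_
      · rw [hd]; exact lt_of_le_of_lt (min_le_left _ _) (by linarith)
      · simp only [mem_compl_iff, mem_singleton_iff]
        intro h
        rw [h, dist_self] at hd
        exact hr.ne hd
    have hsc : IsCompact (sphere z1 r) := isCompact_sphere _ _
    have hsn : (sphere z1 r).Nonempty := NormedSpace.sphere_nonempty.mpr hr.le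
    obtain ⟨zm, hzm, hzmin⟩ :=
      hsc.exists_isMinOn hsn ((hdiff w1).continuous.norm.continuousOn)
    set m : ℝ := ‖q zm‖ with hmdef
    have hm : 0 < m := norm_pos_iff.mpr (hsphere_ne zm hzm)
    have hmle : ∀ z ∈ sphere z1 r, m ≤ ‖q z‖ := fun z hz => hzmin hz
    -- modulus of continuity in w, uniform over the closed unit z-disk
    set φ : ℂ → ℝ := fun w => ∑ d ∈ p.support,
      ‖coeff d p‖ * ‖w ^ d 1 - w1 ^ d 1‖ with hφdef
    have hφcont : Continuous φ :=
      continuous_finset_sum _ fun d _ =>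
        continuous_const.mul ((continuous_pow _).sub continuous_const).norm
    have hφ0 : φ w1 = 0 := by simp [hφdef]
    have hev : ∀ᶠ w in nhds w1, φ w < m / 2 := by
      have := hφcont.tendsto w1
      rw [hφ0] at this
      exact this.eventually_lt_const (half_pos hm)
    rw [Metric.eventually_nhds_iff] at hev
    obtain ⟨δ, hδ, hev⟩ := hev
    have hbound : ∀ z w : ℂ, ‖z‖ ≤ 1 →
        ‖eval ![z, w] p - eval ![z, w1] p‖ ≤ φ w := by
      intro z w hz
      rw [key z w, key z w1, ← Finset.sum_sub_distrib]
      refine (norm_sum_le _ _).trans (Finset.sum_le_sum fun d _ => ?_)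
      have heq : coeff d p * (z ^ d 0 * w ^ d 1) - coeff d p * (z ^ d 0 * w1 ^ d 1)
          = coeff d p * (w ^ d 1 - w1 ^ d 1) * z ^ d 0 := by ring
      rw [heq, norm_mul, norm_mul]
      have hz1le : ‖z ^ d 0‖ ≤ 1 := by
        rw [norm_pow]; exact pow_le_one₀ (norm_nonneg _) hz
      calc ‖coeff d p‖ * ‖w ^ d 1 - w1 ^ d 1‖ * ‖z ^ d 0‖
          ≤ ‖coeff d p‖ * ‖w ^ d 1 - w1 ^ d 1‖ * 1 := by
            gcongr
        _ = ‖coeff d p‖ * ‖w ^ d 1 - w1 ^ d 1‖ := by ring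
    refine ⟨δ, hδ, fun w hwd hwle => ?_⟩
    by_contra hnot
    have hallnz : ∀ z : ℂ, ‖z‖ ≤ 1 → eval ![z, w] p ≠ 0 := by
      intro z hz hzero
      exact hnot ((hSmem w).mpr ⟨hwle, z, hz, hzero⟩)
    have hφw : φ w < m / 2 := hev (by rwa [dist_eq_norm])
    have hnz : ∀ z ∈ closedBall z1 r, eval ![z, w] p ≠ 0 := by
      intro z hz
      exact hallnz z (hrball z (by rwa [← dist_eq_norm, ← mem_closedBall])).le
    set g : ℂ → ℂ := fun z => (eval ![z, w] p)⁻¹ with hgdef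
    have hgdiff : DifferentiableOn ℂ g (closedBall z1 r) :=
      DifferentiableOn.inv ((hdiff w).differentiableOn) hnz
    have hdcc : DiffContOnCl ℂ g (ball z1 r) :=
      DifferentiableOn.diffContOnCl (by rwa [closure_ball z1 hr.ne'])
    have hfr : ∀ z ∈ frontier (ball z1 r), ‖g z‖ ≤ (m / 2)⁻¹ := by
      intro z hz
      rw [frontier_ball z1 hr.ne'] at hz
      have hzle : ‖z‖ ≤ 1 := (hrball z (le_of_eq (mem_sphere_iff_norm.mp hz))).le
      have h5 : ‖eval ![z, w] p - q z‖ ≤ φ w := hbound z w hzle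
      have h6 : m ≤ ‖q z‖ := hmle z hz
      have h7 : m / 2 ≤ ‖eval ![z, w] p‖ := by
        have h8 : ‖q z‖ - ‖eval ![z, w] p‖ ≤ ‖eval ![z, w] p - q z‖ := by
          rw [norm_sub_rev]
          exact norm_sub_norm_le _ _
        linarith
      rw [hgdef]
      simp only [norm_inv]
      exact inv_anti₀ (half_pos hm) h7
    have hz1mem : z1 ∈ closure (ball z1 r) := by
      rw [closure_ball z1 hr.ne']
      exact mem_closedBall_self hr.le
    have hle := Complex.norm_le_of_forall_mem_frontier_norm_le
      isBounded_ball hdcc hfr hz1mem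
    have hz1c : eval ![z1, w] p ≠ 0 := hallnz z1 hz1
    have hlt : ‖eval ![z1, w] p‖ < m / 2 := by
      have := hbound z1 w hz1
      rw [hp1, sub_zero] at this
      linarith
    have hgt : (m / 2)⁻¹ < ‖g z1‖ := by
      rw [hgdef]
      simp only [norm_inv]
      exact inv_strictAnti₀ (norm_pos_iff.mpr hz1c) hlt
    linarith
  -- build an open set witnessing openness of S in the closed disk
  choose δf hδfpos hδf using hopen
  set U : Set ℂ := ⋃ (w : ℂ) (h : w ∈ S), ball w (δf w h) with hUdef
  have hUopen : IsOpen U := isOpen_iUnion fun w => isOpen_iUnion fun h => isOpen_ball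
  have hSU : S ⊆ U := fun w hw =>
    mem_iUnion.mpr ⟨w, mem_iUnion.mpr ⟨hw, mem_ball_self (hδfpos w hw)⟩⟩
  have hUS : ∀ x ∈ U, ‖x‖ ≤ 1 → x ∈ S := by
    intro x hx hxle
    obtain ⟨w, hw⟩ := mem_iUnion.mp hx
    obtain ⟨hwS, hxb⟩ := mem_iUnion.mp hw
    exact hδf w hwS x (by rwa [← dist_eq_norm, ← mem_ball]) hxle
  -- connectedness of the closed disk yields a contradiction
  have hconn : IsPreconnected (closedBall (0 : ℂ) 1) :=
    (convex_closedBall (0 : ℂ) 1).isPreconnected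
  have h1S : (1 : ℂ) ∉ S := by
    intro h
    obtain ⟨_, z, hz, hzz⟩ := (hSmem 1).mp h
    exact h2' z 1 hz (by simp) hzz
  have hw0S : w0 ∈ S := (hSmem w0).mpr ⟨hw0, z0, hz0, hp0⟩
  obtain ⟨x, hxD, hxc, hxU⟩ := hconn Sᶜ U hScompact.isClosed.isOpen_compl hUopen
    (fun x hx => by
      by_cases hxS : x ∈ S
      · exact Or.inr (hSU hxS)
      · exact Or.inl hxS)
    ⟨1, by simpa using (mem_closedBall_zero_iff.mpr (by norm_num)), h1S⟩
    ⟨w0, mem_closedBall_zero_iff.mpr hw0, hSU hw0S⟩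
  exact hxc (hUS x hxU (mem_closedBall_zero_iff.mp hxD))
end
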